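/- arXiv:0911.0773 — 5 statements merged into one kernel-verified Lean document; each statement's English description precedes it below -/
import Mathlib

section
/- Let (μ_n) and μ be finite Borel measures on ℝ such that μ_n → μ weakly. Then sup_{0<ε≤1} |I_ε(μ_n) − I_ε(μ)| → 0 as n → ∞ if and only if μ_n* → μ* weakly. -/
open MeasureTheory Filter Topology

/-- Weak convergence of a sequence of finite Borel measures on `ℝ`:
`∫ f dμₙ → ∫ f dμ` for every bounded continuous `f : ℝ → ℝ`. -/
def WeakTendsto (μs : ℕ → Measure ℝ) (μ : Measure ℝ) : Prop :=
  ∀ f : ℝ → ℝ, Continuous f → (∃ C, ∀ x, |f x| ≤ C) →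
    Tendsto (fun n => ∫ x, f x ∂(μs n)) atTop (𝓝 (∫ x, f x ∂μ))

/-- The purely atomic measure `μ* = Σ_x μ({x})² δ_x`. -/
noncomputable def starMeasure (μ : Measure ℝ) : Measure ℝ :=
  Measure.sum (fun x : ℝ => (μ {x}) ^ 2 • Measure.dirac x)

/-- `I_ε(μ) = ∫∫ Φ(|x−y|/ε) μ(dx) μ(dy)` with `Φ(r) = max (1 − r) 0`. -/
noncomputable def Ieps (ε : ℝ) (μ : Measure ℝ) : ℝ :=
  ∫ p : ℝ × ℝ, max (1 - |p.1 - p.2| / ε) 0 ∂(μ.prod μ)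

noncomputable def EK.K (ε : ℝ) (p : ℝ × ℝ) : ℝ := max (1 - |p.1 - p.2| / ε) 0

namespace EK

lemma K_nonneg (ε : ℝ) (p : ℝ × ℝ) : 0 ≤ K ε p := le_max_right _ _

lemma K_le_one {ε : ℝ} (hε : 0 ≤ ε) (p : ℝ × ℝ) : K ε p ≤ 1 := by
  have : |p.1 - p.2| / ε ≥ 0 := div_nonneg (abs_nonneg _) hε
  unfold K; refine max_le (by linarith) (by norm_num)

lemma K_cont (ε : ℝ) : Continuous (K ε) := by
  unfold K
  exact (continuous_const.sub (((continuous_fst.sub continuous_snd).abs).div_const ε)).max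
    continuous_const

lemma K_self (ε : ℝ) (x : ℝ) : K ε (x, x) = 1 := by
  simp [K]

lemma K_mono {ε ε' : ℝ} (hε : 0 < ε) (h : ε ≤ ε') (p : ℝ × ℝ) : K ε p ≤ K ε' p := by
  have : |p.1 - p.2| / ε' ≤ |p.1 - p.2| / ε :=
    div_le_div_of_nonneg_left (abs_nonneg _) hε h
  exact max_le (le_max_of_le_left (by linarith)) (le_max_right _ _)

lemma K_sub_bound {ε ε' : ℝ} (hε : 0 < ε) (h : ε ≤ ε') (p : ℝ × ℝ) :
    K ε' p - K ε p ≤ (ε' - ε) / ε := by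
  have hε' : 0 < ε' := lt_of_lt_of_le hε h
  set r := |p.1 - p.2| with hr
  have hr0 : 0 ≤ r := abs_nonneg _
  have hnn : 0 ≤ (ε' - ε) / ε := div_nonneg (by linarith) hε.le
  rcases le_or_gt ε' r with hcase | hcase
  · have h1 : K ε' p = 0 := by
      unfold K
      rw [max_eq_right]
      rw [sub_nonpos, le_div_iff₀ hε']
      nlinarith
    have h2 : 0 ≤ K ε p := K_nonneg _ _
    rw [h1]; linarith
  · have h1 : K ε' p = 1 - r / ε' := by
      unfold K
      exact max_eq_left (by rw [sub_nonneg]; exact (div_le_one hε').mpr hcase.le)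
    have h2 : 1 - r / ε ≤ K ε p := le_max_left _ _
    have h3 : r / ε - r / ε' ≤ (ε' - ε) / ε := by
      rw [div_sub_div _ _ hε.ne' hε'.ne', div_le_div_iff₀ (by positivity) hε]
      nlinarith [mul_le_mul_of_nonneg_right
        (mul_le_mul_of_nonneg_left hcase.le hε.le) (sub_nonneg.mpr h)]
    linarith

lemma K_lip {ε : ℝ} (hε : 0 < ε) (x y y' : ℝ) :
    |K ε (x, y) - K ε (x, y')| ≤ |y - y'| / ε := by
  have h1 : |max (1 - |x - y| / ε) 0 - max (1 - |x - y'| / ε) 0| ≤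
      |(1 - |x - y| / ε) - (1 - |x - y'| / ε)| := abs_max_sub_max_le_abs _ _ _
  have h2 : (1 - |x - y| / ε) - (1 - |x - y'| / ε) = (|x - y'| - |x - y|) / ε := by
    field_simp; ring
  rw [h2, abs_div, abs_of_pos hε] at h1
  have h3 : |(|x - y'| - |x - y|)| ≤ |y - y'| := by
    have := abs_abs_sub_abs_le_abs_sub (x - y') (x - y)
    have he : (x - y') - (x - y) = y - y' := by ring
    rw [he] at this
    exact this
  calc |K ε (x, y) - K ε (x, y')| ≤ |(|x - y'| - |x - y|)| / ε := h1
    _ ≤ |y - y'| / ε := by gcongr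

/-! ### Measure-theoretic helpers -/

lemma integrable_of_bddAE {α : Type*} [MeasurableSpace α] (ν : Measure α) [IsFiniteMeasure ν]
    {f : α → ℝ} (hm : AEStronglyMeasurable f ν) {C : ℝ} (h : ∀ x, |f x| ≤ C) :
    Integrable f ν :=
  ⟨hm, HasFiniteIntegral.of_bounded (C := C) (ae_of_all _ fun x => by
    simpa [Real.norm_eq_abs] using h x)⟩

noncomputable def atom (ν : Measure ℝ) (y : ℝ) : ℝ := (ν {y}).toReal

noncomputable def atomSet (ν : Measure ℝ) : Set ℝ := {y | ν {y} ≠ 0}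

lemma countable_atomSet (ν : Measure ℝ) [IsFiniteMeasure ν] : (atomSet ν).Countable := by
  have := Measure.countable_meas_pos_of_disjoint_iUnion (μ := ν)
    (As := fun y : ℝ => {y}) (fun y => measurableSet_singleton y)
    (fun y z hyz => by simpa using hyz)
  refine this.mono ?_
  intro y hy
  simpa [atomSet, pos_iff_ne_zero] using hy

lemma measurable_of_countable_support {f : ℝ → ℝ} {S : Set ℝ} (hS : S.Countable)
    (h : ∀ y ∉ S, f y = 0) : Measurable f := by
  classical
  intro A hA
  have : f ⁻¹' A = (f ⁻¹' A ∩ S) ∪ (if (0 : ℝ) ∈ A then Sᶜ else ∅) := by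
    ext y
    by_cases hy : y ∈ S
    · by_cases hyA : f y ∈ A <;> simp [hy, hyA]
    · have := h y hy
      by_cases h0 : (0 : ℝ) ∈ A <;> simp [hy, h0, this]
  rw [this]
  refine MeasurableSet.union ((hS.mono Set.inter_subset_right).measurableSet) ?_
  split
  · exact (hS.measurableSet).compl
  · exact MeasurableSet.empty

lemma measurable_atom (ν : Measure ℝ) [IsFiniteMeasure ν] : Measurable (atom ν) :=
  measurable_of_countable_support (countable_atomSet ν)
    (fun y hy => by simp [atom, atomSet] at hy ⊢; simp [hy])

lemma atom_le_mass (ν : Measure ℝ) [IsFiniteMeasure ν] (y : ℝ) :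
    |atom ν y| ≤ (ν Set.univ).toReal := by
  unfold atom
  rw [abs_of_nonneg ENNReal.toReal_nonneg]
  exact ENNReal.toReal_mono (measure_ne_top _ _) (measure_mono (Set.subset_univ _))

/-- the diagonal indicator -/
noncomputable def dInd (p : ℝ × ℝ) : ℝ := if p.1 = p.2 then 1 else 0

lemma measurable_dInd : Measurable dInd := by
  have : dInd = (Set.diagonal ℝ).indicator (fun _ => (1 : ℝ)) := by
    ext p; by_cases h : p.1 = p.2 <;> simp [dInd, h, Set.mem_diagonal_iff]
  rw [this]
  exact measurable_const.indicator (isClosed_diagonal.measurableSet)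

lemma dInd_nonneg (p : ℝ × ℝ) : 0 ≤ dInd p := by unfold dInd; split <;> norm_num

lemma dInd_le_one (p : ℝ × ℝ) : dInd p ≤ 1 := by unfold dInd; split <;> norm_num

lemma dInd_le_K (ε : ℝ) (p : ℝ × ℝ) : dInd p ≤ K ε p := by
  unfold dInd
  split
  · rename_i h
    have : p = (p.1, p.1) := by ext <;> simp [h]
    rw [this, K_self]
  · exact K_nonneg _ _


/-! ### Integral identities -/

/-- `D(ν) = Σ_x ν({x})²` expressed as an integral. -/
noncomputable def Dm (ν : Measure ℝ) : ℝ := ∫ y, atom ν y ∂ν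

section Identities

variable (ν : Measure ℝ) [IsFiniteMeasure ν]

lemma integrable_mul_dInd {f : ℝ → ℝ} (hf : Measurable f) {C : ℝ} (hC : ∀ x, |f x| ≤ C) :
    Integrable (fun p => f p.1 * dInd p) (ν.prod ν) := by
  have hC0 : 0 ≤ C := le_trans (abs_nonneg _) (hC 0)
  refine integrable_of_bddAE _ ((hf.comp measurable_fst).mul measurable_dInd).aestronglyMeasurable
    (C := C) (fun p => ?_)
  rw [abs_mul]
  calc |f p.1| * |dInd p| ≤ C * 1 := by
        refine mul_le_mul (hC _) ?_ (abs_nonneg _) hC0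
        rw [abs_of_nonneg (dInd_nonneg p)]; exact dInd_le_one p
    _ = C := mul_one C

lemma integral_mul_dInd {f : ℝ → ℝ} (hf : Measurable f) {C : ℝ} (hC : ∀ x, |f x| ≤ C) :
    ∫ p, f p.1 * dInd p ∂(ν.prod ν) = ∫ y, f y * atom ν y ∂ν := by
  rw [integral_prod _ (integrable_mul_dInd ν hf hC)]
  congr 1
  ext x
  have hind : (fun y => f x * dInd (x, y)) = Set.indicator {x} (fun _ => f x) := by
    ext y
    by_cases h : x = y
    · simp [dInd, h]
    · have h2 : y ∉ ({x} : Set ℝ) := by simpa using fun h' => h h'.symm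
      simp [dInd, h, Set.indicator_of_notMem h2]
  rw [hind, integral_indicator (measurableSet_singleton x), setIntegral_const]
  unfold atom
  rw [smul_eq_mul, measureReal_def]; ring

lemma tsum_meas_singleton_le : ∑' x : ℝ, ν {x} ≤ ν Set.univ := by
  rw [ENNReal.tsum_eq_iSup_sum]
  refine iSup_le fun s => ?_
  have : ∑ x ∈ s, ν {x} = ν (⋃ x ∈ s, {x}) := by
    rw [measure_biUnion_finset]
    · intro x _ y _ hxy
      simpa using hxy
    · intro x _; exact measurableSet_singleton x
  rw [this]
  exact measure_mono (Set.subset_univ _)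

lemma starMeasure_univ : starMeasure ν Set.univ = ∑' x : ℝ, (ν {x}) ^ 2 := by
  rw [starMeasure, Measure.sum_apply _ MeasurableSet.univ]
  congr 1
  ext x
  simp

instance starMeasure_finite : IsFiniteMeasure (starMeasure ν) := by
  constructor
  rw [starMeasure_univ]
  have h1 : ∑' x : ℝ, (ν {x}) ^ 2 ≤ ∑' x : ℝ, ν Set.univ * ν {x} := by
    refine ENNReal.tsum_le_tsum fun x => ?_
    rw [pow_two]
    exact mul_le_mul_of_nonneg_right (measure_mono (Set.subset_univ _)) (by positivity)
  rw [ENNReal.tsum_mul_left] at h1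
  calc ∑' x : ℝ, (ν {x}) ^ 2 ≤ ν Set.univ * ∑' x : ℝ, ν {x} := h1
    _ ≤ ν Set.univ * ν Set.univ := mul_le_mul_of_nonneg_left (tsum_meas_singleton_le ν) (by positivity)
    _ < ⊤ := ENNReal.mul_lt_top (measure_lt_top _ _) (measure_lt_top _ _)

lemma integral_starMeasure {f : ℝ → ℝ} (hf : Measurable f) {C : ℝ} (hC : ∀ x, |f x| ≤ C) :
    ∫ y, f y ∂(starMeasure ν) = ∫ y, f y * atom ν y ∂ν := by
  have hint : Integrable f (starMeasure ν) :=
    integrable_of_bddAE _ hf.aestronglyMeasurable hC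
  have hCm : 0 ≤ (ν Set.univ).toReal := ENNReal.toReal_nonneg
  -- LHS as a tsum
  have hL : ∫ y, f y ∂(starMeasure ν) = ∑' x : ℝ, ((ν {x}) ^ 2).toReal • f x := by
    rw [starMeasure] at hint ⊢
    rw [integral_sum_measure hint]
    congr 1
    ext x
    rw [integral_smul_measure, integral_dirac]
  -- RHS as a tsum over the atoms
  set S := atomSet ν with hS
  have hScount : S.Countable := countable_atomSet ν
  have hg : Measurable (fun y => f y * atom ν y) := hf.mul (measurable_atom ν)
  have hgint : Integrable (fun y => f y * atom ν y) ν := by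
    refine integrable_of_bddAE _ hg.aestronglyMeasurable (C := C * (ν Set.univ).toReal)
      (fun y => ?_)
    rw [abs_mul]
    exact mul_le_mul (hC y) (atom_le_mass ν y) (abs_nonneg _)
      (le_trans (abs_nonneg _) (hC 0))
  have hind : (fun y => f y * atom ν y) = S.indicator (fun y => f y * atom ν y) := by
    ext y
    by_cases h : y ∈ S
    · rw [Set.indicator_of_mem h]
    · rw [Set.indicator_of_notMem h]
      have : ν {y} = 0 := by simpa [hS, atomSet] using h
      simp [atom, this]
  have hR : ∫ y, f y * atom ν y ∂ν = ∑' a : S, (ν {(a : ℝ)}).toReal • (f a * atom ν a) := by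
    conv_lhs => rw [hind]
    rw [integral_indicator hScount.measurableSet]
    exact setIntegral_countable _ hScount hgint.integrableOn
  rw [hL, hR]
  -- identify the two tsums
  have hsupp : Function.support (fun x : ℝ => ((ν {x}) ^ 2).toReal • f x) ⊆ S := by
    intro x hx
    simp only [Function.mem_support] at hx
    intro hx0
    have : ν {x} = 0 := by simpa [hS, atomSet] using hx0
    simp [this] at hx
  rw [← tsum_subtype_eq_of_support_subset hsupp]
  congr 1
  ext a
  have hne : ν {(a : ℝ)} ≠ ⊤ := measure_ne_top _ _
  rw [smul_eq_mul, smul_eq_mul]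
  unfold atom
  rw [pow_two, ENNReal.toReal_mul]
  ring

end Identities

/-! ### Properties of `Ieps` -/

section IepsProps

variable (ν : Measure ℝ) [IsFiniteMeasure ν]

lemma Ieps_eq (ε : ℝ) : Ieps ε ν = ∫ p, K ε p ∂(ν.prod ν) := rfl

lemma integrable_K {ε : ℝ} (hε : 0 ≤ ε) : Integrable (K ε) (ν.prod ν) :=
  integrable_of_bddAE _ (K_cont ε).aestronglyMeasurable (C := 1)
    (fun p => by rw [abs_of_nonneg (K_nonneg ε p)]; exact K_le_one hε p)

lemma integrable_mul_K {ε : ℝ} (hε : 0 ≤ ε) {f : ℝ → ℝ} (hf : Measurable f) {C : ℝ}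
    (hC : ∀ x, |f x| ≤ C) : Integrable (fun p => f p.1 * K ε p) (ν.prod ν) := by
  refine integrable_of_bddAE _
    (((hf.comp measurable_fst).mul (K_cont ε).measurable).aestronglyMeasurable) (C := C)
    (fun p => ?_)
  rw [abs_mul]
  calc |f p.1| * |K ε p| ≤ C * 1 := mul_le_mul (hC _)
        (by rw [abs_of_nonneg (K_nonneg ε p)]; exact K_le_one hε p) (abs_nonneg _)
        (le_trans (abs_nonneg _) (hC 0))
    _ = C := mul_one C

lemma integrable_dInd : Integrable dInd (ν.prod ν) := by
  have := integrable_mul_dInd ν measurable_const (C := 1) (fun x => by norm_num : ∀ x : ℝ, |(1:ℝ)| ≤ 1)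
  simpa using this

lemma integral_dInd : ∫ p, dInd p ∂(ν.prod ν) = Dm ν := by
  have := integral_mul_dInd ν measurable_const (C := 1) (fun x => by norm_num : ∀ x : ℝ, |(1:ℝ)| ≤ 1)
  simpa [Dm] using this

lemma Dm_le_Ieps {ε : ℝ} (hε : 0 ≤ ε) : Dm ν ≤ Ieps ε ν := by
  rw [← integral_dInd ν, Ieps_eq]
  exact integral_mono (integrable_dInd ν) (integrable_K ν hε) (dInd_le_K ε)

lemma Dm_nonneg : 0 ≤ Dm ν :=
  integral_nonneg (fun y => ENNReal.toReal_nonneg)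

lemma prod_mass : ((ν.prod ν) Set.univ).toReal = (ν Set.univ).toReal ^ 2 := by
  rw [← Set.univ_prod_univ, Measure.prod_prod, ENNReal.toReal_mul, pow_two]

lemma Ieps_nonneg (ε : ℝ) : 0 ≤ Ieps ε ν :=
  integral_nonneg (fun p => K_nonneg ε p)

lemma Ieps_le_mass {ε : ℝ} (hε : 0 ≤ ε) : Ieps ε ν ≤ (ν Set.univ).toReal ^ 2 := by
  rw [Ieps_eq, ← prod_mass ν]
  calc ∫ p, K ε p ∂(ν.prod ν) ≤ ∫ _p, (1 : ℝ) ∂(ν.prod ν) :=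
        integral_mono (integrable_K ν hε) (integrable_const 1) (K_le_one hε)
    _ = ((ν.prod ν) Set.univ).toReal := by rw [integral_const, smul_eq_mul, mul_one, measureReal_def]

lemma Ieps_mono {ε ε' : ℝ} (hε : 0 < ε) (h : ε ≤ ε') : Ieps ε ν ≤ Ieps ε' ν := by
  rw [Ieps_eq, Ieps_eq]
  exact integral_mono (integrable_K ν hε.le) (integrable_K ν (le_trans hε.le h))
    (K_mono hε h)

lemma Ieps_cont {ε ε' : ℝ} (hε : 0 < ε) (h : ε ≤ ε') :
    Ieps ε' ν - Ieps ε ν ≤ (ν Set.univ).toReal ^ 2 * ((ε' - ε) / ε) := by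
  have key : Ieps ε' ν ≤ Ieps ε ν + ((ν.prod ν) Set.univ).toReal * ((ε' - ε) / ε) := by
    rw [Ieps_eq, Ieps_eq]
    have hint : Integrable (fun p => K ε p + (ε' - ε) / ε) (ν.prod ν) :=
      (integrable_K ν hε.le).add (integrable_const _)
    calc ∫ p, K ε' p ∂(ν.prod ν) ≤ ∫ p, (K ε p + (ε' - ε) / ε) ∂(ν.prod ν) := by
          refine integral_mono (integrable_K ν (le_trans hε.le h)) hint (fun p => ?_)
          have := K_sub_bound hε h p
          linarith
      _ = ∫ p, K ε p ∂(ν.prod ν) + ((ν.prod ν) Set.univ).toReal * ((ε' - ε) / ε) := by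
          rw [integral_add (integrable_K ν hε.le) (integrable_const _), integral_const,
            smul_eq_mul, measureReal_def]
  rw [prod_mass ν] at key
  linarith

lemma J_diff_bound {ε : ℝ} (hε : 0 ≤ ε) {f : ℝ → ℝ} (hf : Measurable f) {C : ℝ}
    (h0 : ∀ x, 0 ≤ f x) (hC : ∀ x, f x ≤ C) :
    |∫ p, f p.1 * K ε p ∂(ν.prod ν) - ∫ y, f y * atom ν y ∂ν| ≤ C * (Ieps ε ν - Dm ν) := by
  have habs : ∀ x, |f x| ≤ C := fun x => by rw [abs_of_nonneg (h0 x)]; exact hC x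
  have hC0 : 0 ≤ C := le_trans (h0 0) (hC 0)
  rw [← integral_mul_dInd ν hf habs]
  have hint1 := integrable_mul_K ν hε hf habs
  have hint2 := integrable_mul_dInd ν hf habs
  rw [← integral_sub hint1 hint2]
  have hKd : ∀ p, 0 ≤ K ε p - dInd p := fun p => sub_nonneg.mpr (dInd_le_K ε p)
  have hlow : 0 ≤ ∫ p, (f p.1 * K ε p - f p.1 * dInd p) ∂(ν.prod ν) := by
    refine integral_nonneg (fun p => ?_)
    show (0:ℝ) ≤ f p.1 * K ε p - f p.1 * dInd p
    nlinarith [hKd p, h0 p.1]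
  have hup : ∫ p, (f p.1 * K ε p - f p.1 * dInd p) ∂(ν.prod ν) ≤ C * (Ieps ε ν - Dm ν) := by
    have hint3 : Integrable (fun p => C * (K ε p - dInd p)) (ν.prod ν) :=
      ((integrable_K ν hε).sub (integrable_dInd ν)).const_mul C
    calc ∫ p, (f p.1 * K ε p - f p.1 * dInd p) ∂(ν.prod ν)
        ≤ ∫ p, C * (K ε p - dInd p) ∂(ν.prod ν) := by
          refine integral_mono (hint1.sub hint2) hint3 (fun p => ?_)
          show f p.1 * K ε p - f p.1 * dInd p ≤ C * (K ε p - dInd p)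
          nlinarith [hKd p, h0 p.1, hC p.1]
      _ = C * (Ieps ε ν - Dm ν) := by
          simp only [← smul_eq_mul]
          rw [integral_smul, integral_sub (integrable_K ν hε) (integrable_dInd ν),
            integral_dInd, Ieps_eq]
  rw [abs_of_nonneg hlow]
  exact hup

lemma Ieps_tendsto_Dm :
    Tendsto (fun k : ℕ => Ieps (1 / (k + 1)) ν) atTop (𝓝 (Dm ν)) := by
  rw [show Dm ν = ∫ p, dInd p ∂(ν.prod ν) from (integral_dInd ν).symm]
  simp only [Ieps_eq]
  refine tendsto_integral_of_dominated_convergence (fun _ => (1 : ℝ))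
    (fun k => (K_cont _).aestronglyMeasurable) (integrable_const 1)
    (fun k => ae_of_all _ (fun p => ?_)) (ae_of_all _ (fun p => ?_))
  · have hk : (0:ℝ) < 1 / (k + 1) := by positivity
    rw [Real.norm_eq_abs, abs_of_nonneg (K_nonneg _ p)]
    exact K_le_one hk.le p
  · by_cases h : p.1 = p.2
    · have hp : p = (p.1, p.1) := by
        ext
        · rfl
        · exact h.symm
      have : ∀ k : ℕ, K (1 / (k + 1)) p = 1 := fun k => by rw [hp, K_self]
      simp only [this, dInd, if_pos h]
      exact tendsto_const_nhds
    · have hr : 0 < |p.1 - p.2| := abs_pos.mpr (sub_ne_zero.mpr h)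
      have hev : ∀ k : ℕ, k ≥ ⌈1 / |p.1 - p.2|⌉₊ → K (1 / (k + 1)) p = 0 := by
        intro k hk
        have h1 : 1 / |p.1 - p.2| ≤ (k : ℝ) := le_trans (Nat.le_ceil _) (by exact_mod_cast hk)
        have h2 : 1 / ((k : ℝ) + 1) ≤ |p.1 - p.2| := by
          rw [div_le_iff₀ (by positivity)]
          rw [div_le_iff₀ hr] at h1
          nlinarith
        unfold K
        rw [max_eq_right]
        rw [sub_nonpos, le_div_iff₀ (by positivity : (0:ℝ) < 1 / ((k:ℝ) + 1))]
        rw [one_mul]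
        exact h2
      have : dInd p = 0 := by simp [dInd, h]
      rw [this]
      exact tendsto_atTop_of_eventually_const hev

lemma exists_eps_close (δ : ℝ) (hδ : 0 < δ) :
    ∃ ε : ℝ, 0 < ε ∧ ε ≤ 1 ∧ Ieps ε ν - Dm ν ≤ δ := by
  have := (Ieps_tendsto_Dm ν).eventually (eventually_le_nhds (lt_add_of_pos_right (Dm ν) hδ))
  obtain ⟨k, hk⟩ := this.exists
  refine ⟨1 / (k + 1), by positivity, ?_, by linarith⟩
  rw [div_le_one (by positivity)]
  linarith [Nat.cast_nonneg (α := ℝ) k]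

end IepsProps

/-! ### Mass bounds and tightness -/

lemma integral_one (ν : Measure ℝ) [IsFiniteMeasure ν] :
    ∫ _x : ℝ, (1 : ℝ) ∂ν = (ν Set.univ).toReal := by
  rw [integral_const, smul_eq_mul, mul_one, measureReal_def]

lemma exists_mass_bound (μs : ℕ → Measure ℝ) (μ : Measure ℝ)
    (hfin : ∀ n, IsFiniteMeasure (μs n)) (hfinμ : IsFiniteMeasure μ)
    (hweak : WeakTendsto μs μ) :
    ∃ M : ℝ, 1 ≤ M ∧ (∀ n, ((μs n) Set.univ).toReal ≤ M) ∧ (μ Set.univ).toReal ≤ M := by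
  have h1 := hweak (fun _ => 1) continuous_const ⟨1, fun x => by norm_num⟩
  have h2 : Tendsto (fun n => ((μs n) Set.univ).toReal) atTop (𝓝 ((μ Set.univ).toReal)) := by
    haveI := hfinμ
    have he : (fun n => ((μs n) Set.univ).toReal) = fun n => ∫ x : ℝ, (1:ℝ) ∂(μs n) := by
      ext n
      haveI := hfin n
      rw [integral_one]
    rw [he, integral_one] at *
    exact h1
  obtain ⟨B, hB⟩ := h2.bddAbove_range
  refine ⟨max (max B (μ Set.univ).toReal) 1, le_max_right _ _, fun n => ?_, ?_⟩
  · exact le_trans (hB ⟨n, rfl⟩) (le_trans (le_max_left _ _) (le_max_left _ _))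
  · exact le_trans (le_max_right B _) (le_max_left _ _)

lemma tailSet_measurable (R : ℝ) : MeasurableSet {x : ℝ | R ≤ |x|} := by
  have : {x : ℝ | R ≤ |x|} = (fun x : ℝ => |x|) ⁻¹' (Set.Ici R) := rfl
  rw [this]
  exact (continuous_abs.measurable) measurableSet_Ici

lemma tail_mono (ν : Measure ℝ) [IsFiniteMeasure ν] {R R' : ℝ} (h : R ≤ R') :
    (ν {x : ℝ | R' ≤ |x|}).toReal ≤ (ν {x : ℝ | R ≤ |x|}).toReal := by
  refine ENNReal.toReal_mono (measure_ne_top _ _) (measure_mono ?_)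
  intro x hx
  exact le_trans h hx

lemma exists_tail_small (ν : Measure ℝ) [IsFiniteMeasure ν] {δ : ℝ} (hδ : 0 < δ) :
    ∃ R : ℝ, 1 ≤ R ∧ (ν {x : ℝ | R ≤ |x|}).toReal ≤ δ := by
  have hmono : Antitone (fun k : ℕ => {x : ℝ | (k : ℝ) ≤ |x|}) := by
    intro k l hkl x hx
    simp only [Set.mem_setOf_eq] at hx ⊢
    exact le_trans (by exact_mod_cast hkl) hx
  have hempty : ⋂ k : ℕ, {x : ℝ | (k : ℝ) ≤ |x|} = ∅ := by
    ext x
    simp only [Set.mem_iInter, Set.mem_setOf_eq, Set.mem_empty_iff_false, iff_false, not_forall,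
      not_le]
    obtain ⟨k, hk⟩ := exists_nat_gt |x|
    exact ⟨k, hk⟩
  have htt := tendsto_measure_iInter_atTop (μ := ν)
    (s := fun k : ℕ => {x : ℝ | (k : ℝ) ≤ |x|})
    (fun k => (tailSet_measurable (k : ℝ)).nullMeasurableSet) hmono ⟨0, measure_ne_top _ _⟩
  rw [hempty] at htt
  simp only [measure_empty] at htt
  have htr : Tendsto (fun k : ℕ => (ν {x : ℝ | (k:ℝ) ≤ |x|}).toReal) atTop (𝓝 0) := by
    have := (ENNReal.tendsto_toReal (by simp : (0:ENNReal) ≠ ⊤)).comp htt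
    exact this
  have := htr.eventually (eventually_le_nhds hδ)
  obtain ⟨k, hk⟩ := this.exists
  refine ⟨max (k : ℝ) 1, le_max_right _ _, ?_⟩
  haveI : IsFiniteMeasure ν := inferInstance
  exact le_trans (tail_mono ν (le_max_left (k:ℝ) 1)) hk

lemma tight (μs : ℕ → Measure ℝ) (μ : Measure ℝ)
    (hfin : ∀ n, IsFiniteMeasure (μs n)) (hfinμ : IsFiniteMeasure μ)
    (hweak : WeakTendsto μs μ) {δ : ℝ} (hδ : 0 < δ) :
    ∃ R : ℝ, 1 ≤ R ∧ (∀ n, ((μs n) {x : ℝ | R ≤ |x|}).toReal ≤ δ) ∧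
      (μ {x : ℝ | R ≤ |x|}).toReal ≤ δ := by
  classical
  haveI := hfinμ
  obtain ⟨R₀, hR₀1, hR₀⟩ := exists_tail_small μ (half_pos hδ)
  -- continuous cutoff
  set g : ℝ → ℝ := fun x => min 1 (max (|x| - R₀) 0) with hg
  have hgcont : Continuous g := continuous_const.min ((continuous_abs.sub continuous_const).max
    continuous_const)
  have hg0 : ∀ x, 0 ≤ g x := fun x => le_min (by norm_num) (le_max_right _ _)
  have hg1 : ∀ x, g x ≤ 1 := fun x => min_le_left _ _
  have hgbd : ∃ C, ∀ x, |g x| ≤ C := ⟨1, fun x => by rw [abs_of_nonneg (hg0 x)]; exact hg1 x⟩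
  -- `g ≤ indicator of the R₀-tail`, and `indicator of the (R₀+1)-tail ≤ g`
  have hup : ∀ (ν : Measure ℝ), IsFiniteMeasure ν →
      ∫ x, g x ∂ν ≤ (ν {x : ℝ | R₀ ≤ |x|}).toReal := by
    intro ν hν
    haveI := hν
    have hle : ∀ x, g x ≤ Set.indicator {x : ℝ | R₀ ≤ |x|} (fun _ => (1:ℝ)) x := by
      intro x
      by_cases h : R₀ ≤ |x|
      · rw [Set.indicator_of_mem (show x ∈ {x : ℝ | R₀ ≤ |x|} from h)]; exact hg1 x
      · rw [Set.indicator_of_notMem (show x ∉ {x : ℝ | R₀ ≤ |x|} from h)]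
        push_neg at h
        have : max (|x| - R₀) 0 = 0 := max_eq_right (by linarith)
        simp [hg, this]
    calc ∫ x, g x ∂ν ≤ ∫ x, Set.indicator {x : ℝ | R₀ ≤ |x|} (fun _ => (1:ℝ)) x ∂ν := by
          refine integral_mono (integrable_of_bddAE _ hgcont.aestronglyMeasurable
            (C := 1) (fun x => by rw [abs_of_nonneg (hg0 x)]; exact hg1 x)) ?_ hle
          exact (integrable_const (1:ℝ)).indicator (tailSet_measurable R₀)
      _ = (ν {x : ℝ | R₀ ≤ |x|}).toReal := by
          rw [integral_indicator_const (1:ℝ) (tailSet_measurable R₀), smul_eq_mul, mul_one, measureReal_def]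
  have hdown : ∀ (ν : Measure ℝ), IsFiniteMeasure ν →
      (ν {x : ℝ | R₀ + 1 ≤ |x|}).toReal ≤ ∫ x, g x ∂ν := by
    intro ν hν
    haveI := hν
    have hle : ∀ x, Set.indicator {x : ℝ | R₀ + 1 ≤ |x|} (fun _ => (1:ℝ)) x ≤ g x := by
      intro x
      by_cases h : R₀ + 1 ≤ |x|
      · rw [Set.indicator_of_mem (show x ∈ {x : ℝ | R₀ + 1 ≤ |x|} from h)]
        refine le_min le_rfl (le_max_of_le_left (by linarith))
      · rw [Set.indicator_of_notMem (show x ∉ {x : ℝ | R₀ + 1 ≤ |x|} from h)]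
        exact hg0 x
    calc (ν {x : ℝ | R₀ + 1 ≤ |x|}).toReal
        = ∫ x, Set.indicator {x : ℝ | R₀ + 1 ≤ |x|} (fun _ => (1:ℝ)) x ∂ν := by
          rw [integral_indicator_const (1:ℝ) (tailSet_measurable (R₀+1)), smul_eq_mul, mul_one,
            measureReal_def]
      _ ≤ ∫ x, g x ∂ν := by
          refine integral_mono ((integrable_const (1:ℝ)).indicator (tailSet_measurable (R₀+1)))
            (integrable_of_bddAE _ hgcont.aestronglyMeasurable
            (C := 1) (fun x => by rw [abs_of_nonneg (hg0 x)]; exact hg1 x)) hle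
  -- eventually the tails of μs n at R₀ + 1 are small
  have hgint : ∫ x, g x ∂μ ≤ δ / 2 := le_trans (hup μ hfinμ) hR₀
  have hev : ∀ᶠ n in atTop, ∫ x, g x ∂(μs n) ≤ δ := by
    have := (hweak g hgcont hgbd).eventually (eventually_le_nhds
      (show ∫ x, g x ∂μ < ∫ x, g x ∂μ + δ/2 by linarith))
    filter_upwards [this] with n hn
    linarith
  obtain ⟨N, hN⟩ := hev.exists_forall_of_atTop
  -- tails for the finitely many remaining measures
  have hsm : ∀ n, ∃ Rn : ℝ, 1 ≤ Rn ∧ ((μs n) {x : ℝ | Rn ≤ |x|}).toReal ≤ δ := by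
    intro n
    haveI := hfin n
    exact exists_tail_small (μs n) hδ
  choose Rf hRf1 hRf2 using hsm
  have hbdd : BddAbove (Rf '' (Set.Iio N)) := ((Set.finite_Iio N).image Rf).bddAbove
  obtain ⟨B, hB⟩ := hbdd
  refine ⟨max (R₀ + 1) (max B 1), ?_, fun n => ?_, ?_⟩
  · calc (1:ℝ) ≤ R₀ + 1 := by linarith
      _ ≤ _ := le_max_left _ _
  · haveI := hfin n
    by_cases hn : N ≤ n
    · refine le_trans (tail_mono (μs n) (le_max_left _ _)) ?_
      calc ((μs n) {x : ℝ | R₀ + 1 ≤ |x|}).toReal ≤ ∫ x, g x ∂(μs n) := hdown (μs n) (hfin n)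
        _ ≤ δ := hN n hn
    · push_neg at hn
      have h1 : Rf n ≤ B := hB ⟨n, hn, rfl⟩
      refine le_trans (tail_mono (μs n) ?_) (hRf2 n)
      calc Rf n ≤ B := h1
        _ ≤ max B 1 := le_max_left _ _
        _ ≤ _ := le_max_right _ _
  · refine le_trans (tail_mono μ ?_) (le_trans hR₀ (by linarith))
    calc R₀ ≤ R₀ + 1 := by linarith
      _ ≤ _ := le_max_left _ _

/-! ### Convergence of the double integrals -/

lemma integrable_mul_K2 (ν ρ : Measure ℝ) [IsFiniteMeasure ν] [IsFiniteMeasure ρ] {ε : ℝ}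
    (hε : 0 ≤ ε) {f : ℝ → ℝ} (hf : Measurable f) {C : ℝ} (hC : ∀ x, |f x| ≤ C) :
    Integrable (fun p => f p.1 * K ε p) (ν.prod ρ) := by
  refine integrable_of_bddAE _
    (((hf.comp measurable_fst).mul (K_cont ε).measurable).aestronglyMeasurable) (C := C)
    (fun p => ?_)
  rw [abs_mul]
  calc |f p.1| * |K ε p| ≤ C * 1 := mul_le_mul (hC _)
        (by rw [abs_of_nonneg (K_nonneg ε p)]; exact K_le_one hε p) (abs_nonneg _)
        (le_trans (abs_nonneg _) (hC 0))
    _ = C := mul_one C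

lemma fubini_K (ν ρ : Measure ℝ) [IsFiniteMeasure ν] [IsFiniteMeasure ρ] {ε : ℝ}
    (hε : 0 ≤ ε) {f : ℝ → ℝ} (hf : Measurable f) {C : ℝ} (hC : ∀ x, |f x| ≤ C) :
    ∫ p, f p.1 * K ε p ∂(ν.prod ρ) = ∫ x, f x * ∫ y, K ε (x, y) ∂ρ ∂ν := by
  rw [integral_prod _ (integrable_mul_K2 ν ρ hε hf hC)]
  congr 1
  ext x
  exact integral_const_mul (f x) _

/-- The `x`-section integral `x ↦ ∫ K ε (x,y) dρ(y)`. -/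
noncomputable def secInt (ε : ℝ) (ρ : Measure ℝ) (x : ℝ) : ℝ := ∫ y, K ε (x, y) ∂ρ

lemma secInt_nonneg (ε : ℝ) (ρ : Measure ℝ) (x : ℝ) : 0 ≤ secInt ε ρ x :=
  integral_nonneg (fun y => K_nonneg _ _)

lemma secInt_le_mass {ε : ℝ} (hε : 0 ≤ ε) (ρ : Measure ℝ) [IsFiniteMeasure ρ] (x : ℝ) :
    secInt ε ρ x ≤ (ρ Set.univ).toReal := by
  unfold secInt
  calc ∫ y, K ε (x, y) ∂ρ ≤ ∫ _y, (1:ℝ) ∂ρ :=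
        integral_mono (integrable_of_bddAE _ ((K_cont ε).comp (Continuous.prodMk_right x)
          |>.aestronglyMeasurable) (C := 1)
          (fun y => by rw [abs_of_nonneg (K_nonneg _ _)]; exact K_le_one hε _))
          (integrable_const 1) (fun y => K_le_one hε _)
    _ = (ρ Set.univ).toReal := integral_one ρ

lemma secInt_abs_le {ε : ℝ} (hε : 0 ≤ ε) (ρ : Measure ℝ) [IsFiniteMeasure ρ] (x : ℝ) :
    |secInt ε ρ x| ≤ (ρ Set.univ).toReal := by
  rw [abs_of_nonneg (secInt_nonneg ε ρ x)]
  exact secInt_le_mass hε ρ x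

lemma integrable_K_section {ε : ℝ} (hε : 0 ≤ ε) (ρ : Measure ℝ) [IsFiniteMeasure ρ] (x : ℝ) :
    Integrable (fun y => K ε (x, y)) ρ :=
  integrable_of_bddAE _ (((K_cont ε).comp (Continuous.prodMk_right x)).aestronglyMeasurable)
    (C := 1) (fun y => by rw [abs_of_nonneg (K_nonneg _ _)]; exact K_le_one hε _)

lemma secInt_lip {ε : ℝ} (hε : 0 < ε) (ρ : Measure ℝ) [IsFiniteMeasure ρ] (x x' : ℝ) :
    |secInt ε ρ x - secInt ε ρ x'| ≤ (ρ Set.univ).toReal / ε * |x - x'| := by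
  unfold secInt
  rw [← integral_sub (integrable_K_section hε.le ρ x) (integrable_K_section hε.le ρ x')]
  have h1 : |∫ y, (K ε (x, y) - K ε (x', y)) ∂ρ| ≤ ∫ y, |K ε (x, y) - K ε (x', y)| ∂ρ := by
    simpa [Real.norm_eq_abs] using
      norm_integral_le_integral_norm (μ := ρ) (fun y => K ε (x, y) - K ε (x', y))
  refine le_trans h1 ?_
  have hpt : ∀ y, |K ε (x, y) - K ε (x', y)| ≤ |x - x'| / ε := by
    intro y
    have hsymm : ∀ a b : ℝ, K ε (a, b) = K ε (b, a) := by
      intro a b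
      simp [K, abs_sub_comm]
    rw [hsymm x y, hsymm x' y]
    exact K_lip hε y x x'
  calc ∫ y, |K ε (x, y) - K ε (x', y)| ∂ρ ≤ ∫ _y, |x - x'| / ε ∂ρ := by
        refine integral_mono ?_ (integrable_const _) hpt
        exact (integrable_K_section hε.le ρ x).sub (integrable_K_section hε.le ρ x') |>.abs
    _ = (ρ Set.univ).toReal * (|x - x'| / ε) := by rw [integral_const, smul_eq_mul, measureReal_def]
    _ = (ρ Set.univ).toReal / ε * |x - x'| := by ring

lemma secInt_continuous {ε : ℝ} (hε : 0 < ε) (ρ : Measure ℝ) [IsFiniteMeasure ρ] :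
    Continuous (secInt ε ρ) := by
  set c : ℝ := (ρ Set.univ).toReal / ε with hc
  have hc0 : 0 ≤ c := div_nonneg ENNReal.toReal_nonneg hε.le
  refine (LipschitzWith.of_dist_le_mul (K := ⟨c, hc0⟩) (f := secInt ε ρ) ?_).continuous
  intro x x'
  rw [Real.dist_eq, Real.dist_eq]
  exact secInt_lip hε ρ x x'

lemma secInt_integral_diff_tendsto (μs : ℕ → Measure ℝ) (μ : Measure ℝ)
    (hfin : ∀ n, IsFiniteMeasure (μs n)) (hfinμ : IsFiniteMeasure μ)
    (hweak : WeakTendsto μs μ) {ε : ℝ} (hε : 0 < ε) :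
    Tendsto (fun n => ∫ x, |secInt ε (μs n) x - secInt ε μ x| ∂(μs n)) atTop (𝓝 0) := by
  classical
  haveI := hfinμ
  obtain ⟨M, hM1, hMn, hMμ⟩ := exists_mass_bound μs μ hfin hfinμ hweak
  have hM0 : 0 < M := lt_of_lt_of_le one_pos hM1
  rw [Metric.tendsto_atTop]
  intro δ hδ
  set L : ℝ := M / ε with hL
  have hL0 : 0 < L := div_pos hM0 hε
  have hδ' : 0 < δ / (8 * M) := by positivity
  obtain ⟨R, hR1, hRn, hRμ⟩ := tight μs μ hfin hfinμ hweak hδ'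
  have hR0 : 0 < R := lt_of_lt_of_le one_pos hR1
  -- grid
  set c₂ : ℝ := δ / (8 * M) with hc₂
  set m : ℕ := ⌈4 * R * L / c₂⌉₊ + 1 with hm
  have hm0 : 0 < (m : ℝ) := by positivity
  have hmge : 4 * R * L / c₂ ≤ (m : ℝ) := by
    calc 4 * R * L / c₂ ≤ (⌈4 * R * L / c₂⌉₊ : ℝ) := Nat.le_ceil _
      _ ≤ (m : ℝ) := by rw [hm]; push_cast; linarith
  set h : ℝ := 2 * R / m with hh
  have hh0 : 0 < h := by positivity
  have hgridsz : 2 * L * h ≤ c₂ := by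
    have h1 : 4 * R * L ≤ c₂ * m := by
      rw [div_le_iff₀ hδ'] at hmge
      linarith
    rw [hh]
    rw [show 2 * L * (2 * R / m) = 4 * R * L / m by field_simp; ring]
    rw [div_le_iff₀ hm0]
    calc 4 * R * L ≤ c₂ * m := h1
      _ = c₂ * m := rfl
  set pts : ℕ → ℝ := fun j => -R + j * h with hpts
  -- eventually the grid values are close
  have hgrid : ∀ᶠ n in atTop, ∀ j ∈ Finset.range (m + 1),
      |secInt ε (μs n) (pts j) - secInt ε μ (pts j)| ≤ c₂ := by
    rw [eventually_all_finset]
    intro j _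
    have hconv : Tendsto (fun n => secInt ε (μs n) (pts j)) atTop (𝓝 (secInt ε μ (pts j))) := by
      refine hweak (fun y => K ε (pts j, y)) ((K_cont ε).comp (Continuous.prodMk_right _))
        ⟨1, fun y => by rw [abs_of_nonneg (K_nonneg _ _)]; exact K_le_one hε.le _⟩
    have habs : Tendsto (fun n => |secInt ε (μs n) (pts j) - secInt ε μ (pts j)|) atTop (𝓝 0) := by
      have := (hconv.sub (tendsto_const_nhds (x := secInt ε μ (pts j)))).abs
      simpa using this
    exact habs.eventually (eventually_le_nhds hδ')
  -- conclude
  rw [← eventually_atTop]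
  filter_upwards [hgrid] with n hn
  haveI := hfin n
  have hWc : Continuous (secInt ε μ) := secInt_continuous hε μ
  have hGc : Continuous (secInt ε (μs n)) := secInt_continuous hε (μs n)
  -- pointwise estimate
  have hpt : ∀ x, |secInt ε (μs n) x - secInt ε μ x| ≤
      2 * M * Set.indicator {x : ℝ | R ≤ |x|} (fun _ => (1:ℝ)) x + (c₂ + 2 * L * h) := by
    intro x
    have hcc : 0 ≤ c₂ + 2 * L * h := by positivity
    by_cases hx : R ≤ |x|
    · rw [Set.indicator_of_mem (show x ∈ {x : ℝ | R ≤ |x|} from hx)]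
      have h1 : |secInt ε (μs n) x - secInt ε μ x| ≤ 2 * M := by
        calc |secInt ε (μs n) x - secInt ε μ x|
            ≤ |secInt ε (μs n) x| + |secInt ε μ x| := abs_sub _ _
          _ ≤ M + M := add_le_add (le_trans (secInt_abs_le hε.le (μs n) x) (hMn n))
              (le_trans (secInt_abs_le hε.le μ x) hMμ)
          _ = 2 * M := by ring
      linarith
    · rw [Set.indicator_of_notMem (show x ∉ {x : ℝ | R ≤ |x|} from hx)]
      push_neg at hx
      have hxR : -R < x ∧ x < R := abs_lt.mp hx
      set t : ℝ := (x + R) / h with ht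
      have ht0 : 0 ≤ t := by
        have : 0 ≤ x + R := by linarith [hxR.1]
        positivity
      have htm : t < m := by
        rw [ht, div_lt_iff₀ hh0]
        have : (m : ℝ) * h = 2 * R := by rw [hh]; field_simp
        rw [this]
        linarith [hxR.2]
      set j : ℕ := ⌊t⌋₊ with hj
      have hjm : j < m := by
        have : t < ((m : ℕ) : ℝ) := htm
        exact (Nat.floor_lt ht0).mpr this
      have hjmem : j ∈ Finset.range (m + 1) := Finset.mem_range.mpr (by omega)
      have hjle : (j : ℝ) ≤ t := Nat.floor_le ht0
      have hjlt : t < (j : ℝ) + 1 := Nat.lt_floor_add_one t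
      have hxlow : pts j ≤ x := by
        rw [hpts]
        simp only
        have : (j : ℝ) * h ≤ t * h := mul_le_mul_of_nonneg_right hjle hh0.le
        rw [ht] at this
        rw [div_mul_cancel₀ _ hh0.ne'] at this
        linarith
      have hxhigh : x < pts j + h := by
        rw [hpts]
        simp only
        have : t * h < ((j : ℝ) + 1) * h := mul_lt_mul_of_pos_right hjlt hh0
        rw [ht, div_mul_cancel₀ _ hh0.ne'] at this
        nlinarith
      have hdist : |x - pts j| ≤ h := by
        rw [abs_of_nonneg (by linarith)]
        linarith
      have hlip1 : |secInt ε (μs n) x - secInt ε (μs n) (pts j)| ≤ L * h := by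
        refine le_trans (secInt_lip hε (μs n) x (pts j)) ?_
        have : ((μs n) Set.univ).toReal / ε ≤ L := by
          rw [hL]
          gcongr
          exact hMn n
        exact mul_le_mul this hdist (abs_nonneg _) hL0.le
      have hlip2 : |secInt ε μ (pts j) - secInt ε μ x| ≤ L * h := by
        rw [abs_sub_comm]
        refine le_trans (secInt_lip hε μ x (pts j)) ?_
        have : (μ Set.univ).toReal / ε ≤ L := by
          rw [hL]; gcongr
        exact mul_le_mul this hdist (abs_nonneg _) hL0.le
      have hmid := hn j hjmem
      have htri1 : |secInt ε (μs n) x - secInt ε μ x| ≤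
          |secInt ε (μs n) x - secInt ε (μs n) (pts j)| +
          |secInt ε (μs n) (pts j) - secInt ε μ x| :=
        abs_sub_le _ _ _
      have htri2 : |secInt ε (μs n) (pts j) - secInt ε μ x| ≤
          |secInt ε (μs n) (pts j) - secInt ε μ (pts j)| + |secInt ε μ (pts j) - secInt ε μ x| :=
        abs_sub_le _ _ _
      have hfin' : |secInt ε (μs n) x - secInt ε μ x| ≤ L * h + (c₂ + L * h) := by
        linarith
      linarith
  -- integrate the pointwise estimate
  have hintL : Integrable (fun x => |secInt ε (μs n) x - secInt ε μ x|) (μs n) := by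
    refine integrable_of_bddAE _ ((hGc.sub hWc).abs.aestronglyMeasurable) (C := 2 * M)
      (fun x => ?_)
    rw [abs_abs]
    calc |secInt ε (μs n) x - secInt ε μ x| ≤ |secInt ε (μs n) x| + |secInt ε μ x| := abs_sub _ _
      _ ≤ M + M := add_le_add (le_trans (secInt_abs_le hε.le (μs n) x) (hMn n))
          (le_trans (secInt_abs_le hε.le μ x) hMμ)
      _ = 2 * M := by ring
  have hintR : Integrable (fun x => 2 * M * Set.indicator {x : ℝ | R ≤ |x|} (fun _ => (1:ℝ)) x
      + (c₂ + 2 * L * h)) (μs n) := by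
    refine Integrable.add ?_ (integrable_const _)
    exact ((integrable_const (1:ℝ)).indicator (tailSet_measurable R)).const_mul _
  have hle : ∫ x, |secInt ε (μs n) x - secInt ε μ x| ∂(μs n) ≤
      2 * M * ((μs n) {x : ℝ | R ≤ |x|}).toReal + (c₂ + 2 * L * h) * ((μs n) Set.univ).toReal := by
    calc ∫ x, |secInt ε (μs n) x - secInt ε μ x| ∂(μs n)
        ≤ ∫ x, (2 * M * Set.indicator {x : ℝ | R ≤ |x|} (fun _ => (1:ℝ)) x
            + (c₂ + 2 * L * h)) ∂(μs n) := integral_mono hintL hintR hpt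
      _ = 2 * M * ((μs n) {x : ℝ | R ≤ |x|}).toReal
            + (c₂ + 2 * L * h) * ((μs n) Set.univ).toReal := by
          rw [integral_add (((integrable_const (1:ℝ)).indicator
            (tailSet_measurable R)).const_mul _) (integrable_const _)]
          rw [integral_const_mul, integral_indicator_const (1:ℝ) (tailSet_measurable R),
            integral_const]
          rw [smul_eq_mul, smul_eq_mul, mul_one, measureReal_def, measureReal_def]
          ring
  have hfinal : ∫ x, |secInt ε (μs n) x - secInt ε μ x| ∂(μs n) ≤ δ / 2 := by
    have h1 : 2 * M * ((μs n) {x : ℝ | R ≤ |x|}).toReal ≤ 2 * M * (δ / (8 * M)) := by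
      refine mul_le_mul_of_nonneg_left (hRn n) (by positivity)
    have h2 : (c₂ + 2 * L * h) * ((μs n) Set.univ).toReal ≤ (c₂ + c₂) * M := by
      refine mul_le_mul (by linarith [hgridsz]) (hMn n) ENNReal.toReal_nonneg (by positivity)
    have h3 : 2 * M * (δ / (8 * M)) = δ / 4 := by field_simp; ring
    have h4 : (c₂ + c₂) * M = δ / 4 := by rw [hc₂]; field_simp; ring
    linarith
  rw [Real.dist_eq, sub_zero, abs_of_nonneg (integral_nonneg (fun x => abs_nonneg _))]
  linarith

lemma lemP (μs : ℕ → Measure ℝ) (μ : Measure ℝ)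
    (hfin : ∀ n, IsFiniteMeasure (μs n)) (hfinμ : IsFiniteMeasure μ)
    (hweak : WeakTendsto μs μ) {ε : ℝ} (hε : 0 < ε) {f : ℝ → ℝ} (hf : Continuous f)
    {C : ℝ} (hC : ∀ x, |f x| ≤ C) :
    Tendsto (fun n => ∫ p, f p.1 * K ε p ∂((μs n).prod (μs n))) atTop
      (𝓝 (∫ p, f p.1 * K ε p ∂(μ.prod μ))) := by
  haveI := hfinμ
  obtain ⟨M, hM1, hMn, hMμ⟩ := exists_mass_bound μs μ hfin hfinμ hweak
  have hM0 : 0 < M := lt_of_lt_of_le one_pos hM1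
  have hC0 : 0 ≤ C := le_trans (abs_nonneg _) (hC 0)
  have heq : ∀ n, ∫ p, f p.1 * K ε p ∂((μs n).prod (μs n)) =
      ∫ x, f x * secInt ε (μs n) x ∂(μs n) := by
    intro n
    haveI := hfin n
    exact fubini_K (μs n) (μs n) hε.le hf.measurable hC
  have heqμ : ∫ p, f p.1 * K ε p ∂(μ.prod μ) = ∫ x, f x * secInt ε μ x ∂μ :=
    fubini_K μ μ hε.le hf.measurable hC
  simp only [heq, heqμ]
  -- the function `x ↦ f x * W x`
  set Wf : ℝ → ℝ := fun x => f x * secInt ε μ x with hWf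
  have hWfc : Continuous Wf := hf.mul (secInt_continuous hε μ)
  have hWfb : ∀ x, |Wf x| ≤ C * M := by
    intro x
    rw [hWf]
    simp only
    rw [abs_mul]
    exact mul_le_mul (hC x) (le_trans (secInt_abs_le hε.le μ x) hMμ) (abs_nonneg _) hC0
  have hterm2 : Tendsto (fun n => ∫ x, Wf x ∂(μs n)) atTop (𝓝 (∫ x, Wf x ∂μ)) :=
    hweak Wf hWfc ⟨C * M, hWfb⟩
  have hE := secInt_integral_diff_tendsto μs μ hfin hfinμ hweak hε
  -- difference bound
  have hdiff : ∀ n, |∫ x, f x * secInt ε (μs n) x ∂(μs n) - ∫ x, Wf x ∂(μs n)| ≤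
      C * ∫ x, |secInt ε (μs n) x - secInt ε μ x| ∂(μs n) := by
    intro n
    haveI := hfin n
    have hint1 : Integrable (fun x => f x * secInt ε (μs n) x) (μs n) := by
      refine integrable_of_bddAE _ (hf.mul (secInt_continuous hε (μs n))).aestronglyMeasurable
        (C := C * M) (fun x => ?_)
      rw [abs_mul]
      exact mul_le_mul (hC x) (le_trans (secInt_abs_le hε.le (μs n) x) (hMn n)) (abs_nonneg _) hC0
    have hint2 : Integrable Wf (μs n) :=
      integrable_of_bddAE _ hWfc.aestronglyMeasurable hWfb
    rw [← integral_sub hint1 hint2]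
    have h1 : |∫ x, (f x * secInt ε (μs n) x - Wf x) ∂(μs n)| ≤
        ∫ x, |f x * secInt ε (μs n) x - Wf x| ∂(μs n) := by
      simpa [Real.norm_eq_abs] using norm_integral_le_integral_norm (μ := μs n)
        (fun x => f x * secInt ε (μs n) x - Wf x)
    refine le_trans h1 ?_
    have hintd : Integrable (fun x => |secInt ε (μs n) x - secInt ε μ x|) (μs n) := by
      refine integrable_of_bddAE _ (((secInt_continuous hε (μs n)).sub
        (secInt_continuous hε μ)).abs.aestronglyMeasurable) (C := 2 * M) (fun x => ?_)
      rw [abs_abs]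
      calc |secInt ε (μs n) x - secInt ε μ x| ≤ |secInt ε (μs n) x| + |secInt ε μ x| :=
            abs_sub _ _
        _ ≤ M + M := add_le_add (le_trans (secInt_abs_le hε.le (μs n) x) (hMn n))
            (le_trans (secInt_abs_le hε.le μ x) hMμ)
        _ = 2 * M := by ring
    calc ∫ x, |f x * secInt ε (μs n) x - Wf x| ∂(μs n)
        ≤ ∫ x, C * |secInt ε (μs n) x - secInt ε μ x| ∂(μs n) := by
          refine integral_mono (hint1.sub hint2).abs (hintd.const_mul C) (fun x => ?_)
          rw [hWf]
          simp only
          rw [show f x * secInt ε (μs n) x - f x * secInt ε μ x =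
            f x * (secInt ε (μs n) x - secInt ε μ x) by ring, abs_mul]
          exact mul_le_mul_of_nonneg_right (hC x) (abs_nonneg _)
      _ = C * ∫ x, |secInt ε (μs n) x - secInt ε μ x| ∂(μs n) := integral_const_mul C _
  -- combine
  have hzero : Tendsto (fun n => ∫ x, f x * secInt ε (μs n) x ∂(μs n) - ∫ x, Wf x ∂(μs n))
      atTop (𝓝 0) := by
    have hb : Tendsto (fun n => C * ∫ x, |secInt ε (μs n) x - secInt ε μ x| ∂(μs n)) atTop
        (𝓝 0) := by
      have := hE.const_mul C
      simpa using this
    refine squeeze_zero_norm (fun n => ?_) hb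
    rw [Real.norm_eq_abs]
    exact hdiff n
  have := hzero.add hterm2
  simp only [zero_add] at this
  convert this using 2
  ring

lemma Ieps_pointwise (μs : ℕ → Measure ℝ) (μ : Measure ℝ)
    (hfin : ∀ n, IsFiniteMeasure (μs n)) (hfinμ : IsFiniteMeasure μ)
    (hweak : WeakTendsto μs μ) {ε : ℝ} (hε : 0 < ε) :
    Tendsto (fun n => Ieps ε (μs n)) atTop (𝓝 (Ieps ε μ)) := by
  haveI := hfinμ
  have := lemP μs μ hfin hfinμ hweak hε (f := fun _ => (1:ℝ)) continuous_const
    (C := 1) (fun x => by norm_num)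
  simp only [one_mul] at this
  exact this

/-! ### The two directions -/

lemma abs_Ieps_diff_le (ν ρ : Measure ℝ) [IsFiniteMeasure ν] [IsFiniteMeasure ρ] {M : ℝ}
    (hν : (ν Set.univ).toReal ≤ M) (hρ : (ρ Set.univ).toReal ≤ M) {ε : ℝ} (hε : 0 ≤ ε) :
    |Ieps ε ν - Ieps ε ρ| ≤ 2 * M ^ 2 := by
  have hM0 : 0 ≤ M := le_trans ENNReal.toReal_nonneg hν
  have h1 : Ieps ε ν ≤ M ^ 2 :=
    le_trans (Ieps_le_mass ν hε) (pow_le_pow_left₀ ENNReal.toReal_nonneg hν 2)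
  have h2 : Ieps ε ρ ≤ M ^ 2 :=
    le_trans (Ieps_le_mass ρ hε) (pow_le_pow_left₀ ENNReal.toReal_nonneg hρ 2)
  rw [abs_le]
  constructor
  · have := Ieps_nonneg ν ε
    nlinarith
  · have := Ieps_nonneg ρ ε
    nlinarith

lemma sup_bddAbove (μs : ℕ → Measure ℝ) (μ : Measure ℝ)
    (hfin : ∀ n, IsFiniteMeasure (μs n)) (hfinμ : IsFiniteMeasure μ) {M : ℝ}
    (hMn : ∀ n, ((μs n) Set.univ).toReal ≤ M) (hMμ : (μ Set.univ).toReal ≤ M) (n : ℕ) :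
    BddAbove (Set.range fun ε : Set.Ioc (0:ℝ) 1 => |Ieps (ε:ℝ) (μs n) - Ieps (ε:ℝ) μ|) := by
  haveI := hfinμ
  haveI := hfin n
  refine ⟨2 * M ^ 2, ?_⟩
  rintro y ⟨ε, rfl⟩
  exact abs_Ieps_diff_le (μs n) μ (hMn n) hMμ ε.2.1.le

lemma forward_direction (μs : ℕ → Measure ℝ) (μ : Measure ℝ)
    (hfin : ∀ n, IsFiniteMeasure (μs n)) (hfinμ : IsFiniteMeasure μ)
    (hweak : WeakTendsto μs μ)
    (hsup : Tendsto (fun n => ⨆ ε : Set.Ioc (0 : ℝ) 1, |Ieps ε (μs n) - Ieps ε μ|)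
        atTop (𝓝 0)) :
    WeakTendsto (fun n => starMeasure (μs n)) (starMeasure μ) := by
  haveI := hfinμ
  obtain ⟨M, hM1, hMn, hMμ⟩ := exists_mass_bound μs μ hfin hfinμ hweak
  set Sn : ℕ → ℝ := fun n => ⨆ ε : Set.Ioc (0 : ℝ) 1, |Ieps ε (μs n) - Ieps ε μ| with hSn
  have hSle : ∀ n (ε : ℝ), 0 < ε → ε ≤ 1 → |Ieps ε (μs n) - Ieps ε μ| ≤ Sn n := by
    intro n ε h1 h2
    exact le_ciSup (sup_bddAbove μs μ hfin hfinμ hMn hMμ n) (⟨ε, h1, h2⟩ : Set.Ioc (0:ℝ) 1)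
  -- the key convergence for nonnegative bounded continuous functions
  have keyQ : ∀ (f : ℝ → ℝ), Continuous f → ∀ (C : ℝ), (∀ x, 0 ≤ f x) → (∀ x, f x ≤ C) →
      Tendsto (fun n => ∫ y, f y * atom (μs n) y ∂(μs n)) atTop
        (𝓝 (∫ y, f y * atom μ y ∂μ)) := by
    intro f hf C h0 hC
    have hC0 : 0 ≤ C := le_trans (h0 0) (hC 0)
    have habs : ∀ x, |f x| ≤ C := fun x => by rw [abs_of_nonneg (h0 x)]; exact hC x
    rw [Metric.tendsto_atTop]
    intro δ hδ
    have hδ₀ : 0 < δ / (8 * (C + 1)) := by positivity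
    set δ₀ : ℝ := δ / (8 * (C + 1)) with hδ₀def
    obtain ⟨ε, hε0, hε1, hclose⟩ := exists_eps_close μ δ₀ hδ₀
    have hJ := lemP μs μ hfin hfinμ hweak hε0 hf habs
    have hev1 : ∀ᶠ n in atTop, Sn n ≤ δ₀ := hsup.eventually (eventually_le_nhds hδ₀)
    have hev2 : ∀ᶠ n in atTop, |∫ p, f p.1 * K ε p ∂((μs n).prod (μs n)) -
        ∫ p, f p.1 * K ε p ∂(μ.prod μ)| ≤ δ / 4 := by
      have h4 : (0:ℝ) < δ / 4 := by positivity
      have := (hJ.sub (tendsto_const_nhds (x := ∫ p, f p.1 * K ε p ∂(μ.prod μ)))).abs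
      simp only [sub_self, abs_zero] at this
      exact this.eventually (eventually_le_nhds h4)
    rw [← eventually_atTop]
    filter_upwards [hev1, hev2] with n h1 h2
    haveI := hfin n
    -- lower bound on `Dm (μs n)`
    have hDlow : Dm μ - Sn n ≤ Dm (μs n) := by
      by_contra hcon
      push_neg at hcon
      set δ'' : ℝ := (Dm μ - Sn n - Dm (μs n)) / 2 with hδ''
      have hδ''0 : 0 < δ'' := by rw [hδ'']; linarith
      obtain ⟨ε', hε'0, hε'1, hclose'⟩ := exists_eps_close (μs n) δ'' hδ''0
      have k1 : Dm μ ≤ Ieps ε' μ := Dm_le_Ieps μ hε'0.le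
      have k2 : Ieps ε' μ ≤ Ieps ε' (μs n) + Sn n := by
        have := hSle n ε' hε'0 hε'1
        rw [abs_le] at this
        linarith [this.1]
      have k3 : Ieps ε' (μs n) ≤ Dm (μs n) + δ'' := by linarith
      have k4 : δ'' = (Dm μ - Sn n - Dm (μs n)) / 2 := hδ''
      linarith
    have hgap : Ieps ε (μs n) - Dm (μs n) ≤ δ₀ + 2 * Sn n := by
      have k1 : Ieps ε (μs n) ≤ Ieps ε μ + Sn n := by
        have := hSle n ε hε0 hε1
        rw [abs_le] at this
        linarith [this.2]
      linarith
    have hJb1 := J_diff_bound (μs n) hε0.le hf.measurable h0 hC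
    have hJb2 := J_diff_bound μ hε0.le hf.measurable h0 hC
    have hJb2' : |∫ p, f p.1 * K ε p ∂(μ.prod μ) - ∫ y, f y * atom μ y ∂μ| ≤ C * δ₀ := by
      refine le_trans hJb2 ?_
      refine mul_le_mul_of_nonneg_left (by linarith) hC0
    have hJb1' : |∫ p, f p.1 * K ε p ∂((μs n).prod (μs n)) - ∫ y, f y * atom (μs n) y ∂(μs n)| ≤
        C * (δ₀ + 2 * Sn n) :=
      le_trans hJb1 (mul_le_mul_of_nonneg_left hgap hC0)
    rw [Real.dist_eq]
    have htri : |∫ y, f y * atom (μs n) y ∂(μs n) - ∫ y, f y * atom μ y ∂μ| ≤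
        C * (δ₀ + 2 * Sn n) + (δ / 4 + C * δ₀) := by
      have t1 := abs_sub_le (∫ y, f y * atom (μs n) y ∂(μs n))
        (∫ p, f p.1 * K ε p ∂((μs n).prod (μs n))) (∫ y, f y * atom μ y ∂μ)
      have t2 := abs_sub_le (∫ p, f p.1 * K ε p ∂((μs n).prod (μs n)))
        (∫ p, f p.1 * K ε p ∂(μ.prod μ)) (∫ y, f y * atom μ y ∂μ)
      rw [abs_sub_comm] at hJb1'
      linarith
    have hfinal : C * (δ₀ + 2 * Sn n) + (δ / 4 + C * δ₀) < δ := by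
      have hSn0 : Sn n ≤ δ₀ := h1
      have hCd : C * δ₀ ≤ δ / 8 := by
        rw [hδ₀def]
        rw [mul_div_assoc']
        rw [div_le_div_iff₀ (by positivity) (by norm_num)]
        nlinarith
      nlinarith
    linarith
  -- now conclude for an arbitrary bounded continuous function
  intro f hf hbd
  obtain ⟨C₀, hC₀⟩ := hbd
  have hC₀0 : 0 ≤ C₀ := le_trans (abs_nonneg _) (hC₀ 0)
  set g : ℝ → ℝ := fun x => f x + C₀ with hgdef
  have hg0 : ∀ x, 0 ≤ g x := fun x => by
    have := abs_le.mp (hC₀ x)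
    rw [hgdef]; simp only; linarith [this.1]
  have hgC : ∀ x, g x ≤ 2 * C₀ := fun x => by
    have := abs_le.mp (hC₀ x)
    rw [hgdef]; simp only; linarith [this.2]
  have hgcont : Continuous g := hf.add continuous_const
  have hQg := keyQ g hgcont (2 * C₀) hg0 hgC
  have hQ1 := keyQ (fun _ => 1) continuous_const 1 (fun _ => by norm_num) (fun _ => le_rfl)
  have hsplit : ∀ (ν : Measure ℝ), IsFiniteMeasure ν →
      ∫ y, f y * atom ν y ∂ν = ∫ y, g y * atom ν y ∂ν - C₀ * ∫ y, (1:ℝ) * atom ν y ∂ν := by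
    intro ν hν
    haveI := hν
    have hint1 : Integrable (fun y => f y * atom ν y) ν := by
      refine integrable_of_bddAE _ (hf.measurable.mul (measurable_atom ν)).aestronglyMeasurable
        (C := C₀ * (ν Set.univ).toReal) (fun y => ?_)
      rw [abs_mul]
      exact mul_le_mul (hC₀ y) (atom_le_mass ν y) (abs_nonneg _) hC₀0
    have hint2 : Integrable (fun y => atom ν y) ν := by
      refine integrable_of_bddAE _ (measurable_atom ν).aestronglyMeasurable
        (C := (ν Set.univ).toReal) (atom_le_mass ν)
    have : ∫ y, g y * atom ν y ∂ν = ∫ y, f y * atom ν y ∂ν + C₀ * ∫ y, atom ν y ∂ν := by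
      rw [hgdef]
      simp only [add_mul]
      rw [integral_add hint1 (hint2.const_mul C₀), integral_const_mul]
    rw [this]
    simp only [one_mul]
    ring
  have hconv : Tendsto (fun n => ∫ y, f y * atom (μs n) y ∂(μs n)) atTop
      (𝓝 (∫ y, f y * atom μ y ∂μ)) := by
    have := hQg.sub (hQ1.const_mul C₀)
    have he1 : (fun n => ∫ y, g y * atom (μs n) y ∂(μs n) -
        C₀ * ∫ y, (1:ℝ) * atom (μs n) y ∂(μs n)) =
        fun n => ∫ y, f y * atom (μs n) y ∂(μs n) := by
      ext n
      rw [hsplit (μs n) (hfin n)]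
    have he2 : ∫ y, g y * atom μ y ∂μ - C₀ * ∫ y, (1:ℝ) * atom μ y ∂μ =
        ∫ y, f y * atom μ y ∂μ := (hsplit μ hfinμ).symm
    rw [← he1, ← he2]
    exact this
  have hrw1 : ∀ n, ∫ y, f y ∂(starMeasure (μs n)) = ∫ y, f y * atom (μs n) y ∂(μs n) := by
    intro n
    haveI := hfin n
    exact integral_starMeasure (μs n) hf.measurable hC₀
  have hrw2 : ∫ y, f y ∂(starMeasure μ) = ∫ y, f y * atom μ y ∂μ :=
    integral_starMeasure μ hf.measurable hC₀
  simp only [hrw1, hrw2]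
  exact hconv

lemma backward_direction (μs : ℕ → Measure ℝ) (μ : Measure ℝ)
    (hfin : ∀ n, IsFiniteMeasure (μs n)) (hfinμ : IsFiniteMeasure μ)
    (hweak : WeakTendsto μs μ)
    (hstar : WeakTendsto (fun n => starMeasure (μs n)) (starMeasure μ)) :
    Tendsto (fun n => ⨆ ε : Set.Ioc (0 : ℝ) 1, |Ieps ε (μs n) - Ieps ε μ|) atTop (𝓝 0) := by
  classical
  haveI := hfinμ
  obtain ⟨M, hM1, hMn, hMμ⟩ := exists_mass_bound μs μ hfin hfinμ hweak
  have hM0 : 0 < M := lt_of_lt_of_le one_pos hM1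
  -- convergence of the atomic masses
  have hDm : Tendsto (fun n => Dm (μs n)) atTop (𝓝 (Dm μ)) := by
    have := hstar (fun _ => 1) continuous_const ⟨1, fun _ => by norm_num⟩
    have hrw : ∀ (ν : Measure ℝ), IsFiniteMeasure ν →
        ∫ y, (1:ℝ) ∂(starMeasure ν) = Dm ν := by
      intro ν hν
      haveI := hν
      have := integral_starMeasure ν (f := fun _ => (1:ℝ)) measurable_const
        (C := 1) (fun _ => by norm_num)
      rw [this, Dm]
      simp only [one_mul]
    have he1 : (fun n => ∫ y, (1:ℝ) ∂(starMeasure (μs n))) = fun n => Dm (μs n) := by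
      ext n
      exact hrw (μs n) (hfin n)
    rw [he1, hrw μ hfinμ] at this
    exact this
  rw [Metric.tendsto_atTop]
  intro δ hδ
  have hδ₁ : 0 < δ / 8 := by positivity
  set δ₁ : ℝ := δ / 8 with hδ₁def
  obtain ⟨a, ha0, ha1, haclose⟩ := exists_eps_close μ δ₁ hδ₁
  -- grid on [a, 1]
  set m : ℕ := ⌈M ^ 2 * (1 - a) / (δ₁ * a)⌉₊ + 1 with hm
  have hm0 : 0 < (m : ℝ) := by positivity
  set h : ℝ := (1 - a) / m with hh
  have hh0 : 0 ≤ h := div_nonneg (by linarith) hm0.le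
  set pts : ℕ → ℝ := fun i => a + i * h with hpts
  have hptsa : ∀ i : ℕ, a ≤ pts i := by
    intro i
    rw [hpts]
    simp only
    have : 0 ≤ (i:ℝ) * h := mul_nonneg (Nat.cast_nonneg i) hh0
    linarith
  have hpts1 : ∀ i : ℕ, i ≤ m → pts i ≤ 1 := by
    intro i hi
    rw [hpts]
    simp only
    have h1 : (i : ℝ) * h ≤ (m : ℝ) * h := by
      refine mul_le_mul_of_nonneg_right ?_ hh0
      exact_mod_cast hi
    have h2 : (m : ℝ) * h = 1 - a := by
      rw [hh]
      field_simp
    linarith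
  have hstep : ∀ i : ℕ, Ieps (pts (i+1)) μ - Ieps (pts i) μ ≤ δ₁ := by
    intro i
    have hpi0 : 0 < pts i := lt_of_lt_of_le ha0 (hptsa i)
    have hle : pts i ≤ pts (i+1) := by
      rw [hpts]
      simp only
      push_cast
      nlinarith [hh0]
    have hcont := Ieps_cont μ hpi0 hle
    have hdiffpts : pts (i+1) - pts i = h := by
      rw [hpts]
      push_cast
      ring
    have hbound : (μ Set.univ).toReal ^ 2 * ((pts (i+1) - pts i) / pts i) ≤
        M ^ 2 * (h / a) := by
      rw [hdiffpts]
      refine mul_le_mul (pow_le_pow_left₀ ENNReal.toReal_nonneg hMμ 2) ?_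
        (div_nonneg hh0 hpi0.le) (by positivity)
      exact div_le_div_of_nonneg_left hh0 ha0 (hptsa i)
    have hha : M ^ 2 * (h / a) ≤ δ₁ := by
      have hmge : M ^ 2 * (1 - a) / (δ₁ * a) ≤ (m : ℝ) := by
        calc M ^ 2 * (1 - a) / (δ₁ * a) ≤ (⌈M ^ 2 * (1 - a) / (δ₁ * a)⌉₊ : ℝ) := Nat.le_ceil _
          _ ≤ (m : ℝ) := by rw [hm]; push_cast; linarith
      rw [div_le_iff₀ (by positivity : (0:ℝ) < δ₁ * a)] at hmge
      rw [hh, div_div, mul_div_assoc']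
      rw [div_le_iff₀ (by positivity : (0:ℝ) < (m:ℝ) * a)]
      nlinarith
    linarith
  -- eventual closeness at the grid points, at `a`, and of the masses
  have hev1 : ∀ᶠ n in atTop, ∀ i ∈ Finset.range (m + 1),
      |Ieps (pts i) (μs n) - Ieps (pts i) μ| ≤ δ₁ := by
    rw [eventually_all_finset]
    intro i _
    have hpi0 : 0 < pts i := lt_of_lt_of_le ha0 (hptsa i)
    have := (((Ieps_pointwise μs μ hfin hfinμ hweak hpi0).sub
      (tendsto_const_nhds (x := Ieps (pts i) μ))).abs)
    simp only [sub_self, abs_zero] at this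
    exact this.eventually (eventually_le_nhds hδ₁)
  have hev2 : ∀ᶠ n in atTop, |Ieps a (μs n) - Ieps a μ| ≤ δ₁ := by
    have := (((Ieps_pointwise μs μ hfin hfinμ hweak ha0).sub
      (tendsto_const_nhds (x := Ieps a μ))).abs)
    simp only [sub_self, abs_zero] at this
    exact this.eventually (eventually_le_nhds hδ₁)
  have hev3 : ∀ᶠ n in atTop, |Dm (μs n) - Dm μ| ≤ δ₁ := by
    have := ((hDm.sub (tendsto_const_nhds (x := Dm μ))).abs)
    simp only [sub_self, abs_zero] at this
    exact this.eventually (eventually_le_nhds hδ₁)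
  rw [← eventually_atTop]
  filter_upwards [hev1, hev2, hev3] with n h1 h2 h3
  haveI := hfin n
  -- the uniform bound over ε ∈ (0,1]
  have hkey : ∀ ε : ℝ, 0 < ε → ε ≤ 1 → |Ieps ε (μs n) - Ieps ε μ| ≤ 3 * δ₁ := by
    intro ε hε0 hε1
    rcases le_or_gt ε a with hcase | hcase
    · -- small ε
      have k1 : Ieps ε (μs n) ≤ Ieps a (μs n) := Ieps_mono (μs n) hε0 hcase
      have k2 : Dm (μs n) ≤ Ieps ε (μs n) := Dm_le_Ieps (μs n) hε0.le
      have k3 : Dm μ ≤ Ieps ε μ := Dm_le_Ieps μ hε0.le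
      have k4 : Ieps ε μ ≤ Ieps a μ := Ieps_mono μ hε0 hcase
      have k5 := abs_le.mp h2
      have k6 := abs_le.mp h3
      rw [abs_le]
      constructor
      · -- Ieps ε μ - Ieps ε (μs n) ≤ ...
        have : Ieps ε μ ≤ Dm μ + δ₁ := by linarith
        have hD : Dm μ - δ₁ ≤ Dm (μs n) := by linarith
        linarith
      · have : Ieps a (μs n) ≤ Ieps a μ + δ₁ := by linarith
        linarith
    · -- a < ε: use the grid
      have ha1' : a < 1 := lt_of_lt_of_le hcase hε1
      have hhpos : 0 < h := by
        rw [hh]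
        exact div_pos (by linarith) hm0
      set t : ℝ := (ε - a) / h with ht
      have ht0 : 0 ≤ t := div_nonneg (by linarith) hhpos.le
      set i : ℕ := min ⌊t⌋₊ (m - 1) with hi
      have him : i ≤ m - 1 := min_le_right _ _
      have him' : i < m := by
        have hm1 : 1 ≤ m := by rw [hm]; omega
        omega
      have hi1m : i + 1 ≤ m := by omega
      have hlow : pts i ≤ ε := by
        have h1' : (i : ℝ) ≤ t := by
          have : (i : ℝ) ≤ (⌊t⌋₊ : ℝ) := by
            exact_mod_cast min_le_left ⌊t⌋₊ (m - 1)
          exact le_trans this (Nat.floor_le ht0)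
        rw [hpts]
        simp only
        have : (i : ℝ) * h ≤ t * h := mul_le_mul_of_nonneg_right h1' hhpos.le
        rw [ht, div_mul_cancel₀ _ hhpos.ne'] at this
        linarith
      have hhigh : ε ≤ pts (i + 1) := by
        by_cases hc : ⌊t⌋₊ ≤ m - 1
        · have hieq : i = ⌊t⌋₊ := min_eq_left hc
          have h1' : t < (i : ℝ) + 1 := by
            rw [hieq]
            exact_mod_cast Nat.lt_floor_add_one t
          rw [hpts]
          simp only
          push_cast
          have : t * h < ((i : ℝ) + 1) * h := mul_lt_mul_of_pos_right h1' hhpos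
          rw [ht, div_mul_cancel₀ _ hhpos.ne'] at this
          nlinarith
        · push_neg at hc
          have hieq : i = m - 1 := min_eq_right (by omega)
          have : i + 1 = m := by omega
          rw [this]
          calc ε ≤ 1 := hε1
            _ = pts m := by
                rw [hpts]
                simp only
                rw [hh]
                field_simp
                ring
          -- done
      have hmem1 : i ∈ Finset.range (m + 1) := Finset.mem_range.mpr (by omega)
      have hmem2 : i + 1 ∈ Finset.range (m + 1) := Finset.mem_range.mpr (by omega)
      have hgrid1 := abs_le.mp (h1 i hmem1)
      have hgrid2 := abs_le.mp (h1 (i+1) hmem2)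
      have hpi0 : 0 < pts i := lt_of_lt_of_le ha0 (hptsa i)
      have hmono1 : Ieps ε (μs n) ≤ Ieps (pts (i+1)) (μs n) := Ieps_mono (μs n) hε0 hhigh
      have hmono2 : Ieps (pts i) (μs n) ≤ Ieps ε (μs n) := Ieps_mono (μs n) hpi0 hlow
      have hmono3 : Ieps ε μ ≤ Ieps (pts (i+1)) μ := Ieps_mono μ hε0 hhigh
      have hmono4 : Ieps (pts i) μ ≤ Ieps ε μ := Ieps_mono μ hpi0 hlow
      have hst := hstep i
      rw [abs_le]
      constructor
      · linarith
      · linarith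
  -- conclude: the supremum is at most `3 δ₁ < δ`
  haveI : Nonempty (Set.Ioc (0:ℝ) 1) := ⟨⟨1, by constructor <;> norm_num⟩⟩
  have hsup_le : (⨆ ε : Set.Ioc (0 : ℝ) 1, |Ieps ε (μs n) - Ieps ε μ|) ≤ 3 * δ₁ := by
    refine ciSup_le (fun ε => ?_)
    exact hkey ε ε.2.1 ε.2.2
  have hsup_ge : (0:ℝ) ≤ ⨆ ε : Set.Ioc (0 : ℝ) 1, |Ieps ε (μs n) - Ieps ε μ| := by
    refine le_trans (abs_nonneg (Ieps 1 (μs n) - Ieps 1 μ)) ?_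
    exact le_ciSup (sup_bddAbove μs μ hfin hfinμ hMn hMμ n)
      (⟨1, by constructor <;> norm_num⟩ : Set.Ioc (0:ℝ) 1)
  rw [Real.dist_eq, sub_zero, abs_of_nonneg hsup_ge]
  have : 3 * δ₁ < δ := by rw [hδ₁def]; linarith
  linarith

end EK

/-- Ethier–Kurtz: if `μₙ → μ` weakly, then
`sup_{0<ε≤1} |I_ε(μₙ) − I_ε(μ)| → 0` iff `μₙ* → μ*` weakly. -/
theorem sup_Ieps_tendsto_iff_starMeasure_weakTendsto
    (μs : ℕ → Measure ℝ) (μ : Measure ℝ)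
    (hfin : ∀ n, IsFiniteMeasure (μs n)) (hfinμ : IsFiniteMeasure μ)
    (hweak : WeakTendsto μs μ) :
    Tendsto (fun n => ⨆ ε : Set.Ioc (0 : ℝ) 1, |Ieps ε (μs n) - Ieps ε μ|)
        atTop (𝓝 0) ↔
      WeakTendsto (fun n => starMeasure (μs n)) (starMeasure μ) :=
  ⟨EK.forward_direction μs μ hfin hfinμ hweak, EK.backward_direction μs μ hfin hfinμ hweak⟩
end

section
/- Let Z : [0,∞) → M(ℝ) be a map into the finite Borel measures on ℝ that is continuous for the weak topology (i.e. t ↦ ∫ f dZ(t) is continuous for every bounded continuous f : ℝ → ℝ). If the real-valued function t ↦ Z(t)*(ℝ) is continuous on [0,∞), then Z is continuous for the weak atomic topology; that is, for every t₀ ≥ 0 and every sequence t_n → t₀ one has Z(t_n) → Z(t₀) weakly and sup_{0<ε≤1} |I_ε(Z(t_n)) − I_ε(Z(t₀))| → 0. -/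
open MeasureTheory Filter Topology
open scoped NNReal

open scoped ENNReal

/-- ENNReal version of `Ieps`. -/
noncomputable def Jk (ε : ℝ) (μ : Measure ℝ) : ℝ≥0∞ :=
  ∫⁻ p : ℝ × ℝ, ENNReal.ofReal (max (1 - |p.1 - p.2| / ε) 0) ∂(μ.prod μ)

/-- Mass of the diagonal for `μ ⊗ μ`. -/
noncomputable def Dg (μ : Measure ℝ) : ℝ≥0∞ := (μ.prod μ) (Set.diagonal ℝ)

lemma kernel_continuous (ε : ℝ) :
    Continuous (fun p : ℝ × ℝ => max (1 - |p.1 - p.2| / ε) 0) := by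
  exact (continuous_const.sub (((continuous_fst.sub continuous_snd).abs).div_const ε)).max
    continuous_const

lemma kernel_nonneg (ε : ℝ) (p : ℝ × ℝ) : 0 ≤ max (1 - |p.1 - p.2| / ε) 0 := le_max_right _ _

lemma kernel_le_one {ε : ℝ} (hε : 0 < ε) (p : ℝ × ℝ) : max (1 - |p.1 - p.2| / ε) 0 ≤ 1 := by
  have : 0 ≤ |p.1 - p.2| / ε := div_nonneg (abs_nonneg _) hε.le
  have h1 : 1 - |p.1 - p.2| / ε ≤ 1 := by linarith
  exact max_le h1 zero_le_one

lemma kernel_integrable {ε : ℝ} (hε : 0 < ε) (μ : Measure ℝ) [IsFiniteMeasure μ] :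
    Integrable (fun p : ℝ × ℝ => max (1 - |p.1 - p.2| / ε) 0) (μ.prod μ) := by
  refine Integrable.mono' (integrable_const (1 : ℝ))
    ((kernel_continuous ε).aestronglyMeasurable) ?_
  filter_upwards with p
  rw [Real.norm_eq_abs, abs_of_nonneg (kernel_nonneg ε p)]
  exact kernel_le_one hε p

lemma Ieps_eq (ε : ℝ) (μ : Measure ℝ) : Ieps ε μ = (Jk ε μ).toReal := by
  rw [Ieps, Jk, integral_eq_lintegral_of_nonneg_ae]
  · filter_upwards with p using kernel_nonneg ε p
  · exact (kernel_continuous ε).aestronglyMeasurable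

lemma Jk_ne_top {ε : ℝ} (hε : 0 < ε) (μ : Measure ℝ) [IsFiniteMeasure μ] : Jk ε μ ≠ ⊤ := by
  have : Jk ε μ ≤ (μ.prod μ) Set.univ := by
    rw [← lintegral_one]
    refine lintegral_mono fun p => ?_
    calc ENNReal.ofReal (max (1 - |p.1 - p.2| / ε) 0) ≤ ENNReal.ofReal 1 :=
          ENNReal.ofReal_le_ofReal (kernel_le_one hε p)
      _ = 1 := by norm_num
  exact (lt_of_le_of_lt this (measure_lt_top _ _)).ne

lemma Jk_mono {ε ε' : ℝ} (hε : 0 < ε) (hεε' : ε ≤ ε') (μ : Measure ℝ) :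
    Jk ε μ ≤ Jk ε' μ := by
  refine lintegral_mono fun p => ENNReal.ofReal_le_ofReal (max_le_max ?_ le_rfl)
  have h' : 0 < ε' := lt_of_lt_of_le hε hεε'
  have : |p.1 - p.2| / ε' ≤ |p.1 - p.2| / ε :=
    div_le_div_of_nonneg_left (abs_nonneg _) hε hεε' |>.trans_eq rfl
  linarith

lemma Dg_le_Jk {ε : ℝ} (μ : Measure ℝ) : Dg μ ≤ Jk ε μ := by
  rw [Dg, ← lintegral_indicator_one isClosed_diagonal.measurableSet]
  refine lintegral_mono fun p => ?_
  by_cases hp : p ∈ Set.diagonal ℝ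
  · have : p.1 = p.2 := hp
    simp [Set.indicator_of_mem hp, this]
  · simp [Set.indicator_of_notMem hp]

lemma Dg_ne_top (μ : Measure ℝ) [IsFiniteMeasure μ] : Dg μ ≠ ⊤ :=
  (measure_lt_top _ _).ne

lemma measurable_atom (μ : Measure ℝ) [SFinite μ] : Measurable fun x : ℝ => μ {x} := by
  have h : Measurable fun x : ℝ => μ (Prod.mk x ⁻¹' Set.diagonal ℝ) :=
    measurable_measure_prodMk_left isClosed_diagonal.measurableSet
  have key : ∀ x : ℝ, Prod.mk x ⁻¹' Set.diagonal ℝ = {x} := by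
    intro x; ext y; simp [Set.mem_diagonal_iff, eq_comm]
  simpa [key] using h

lemma countable_atoms (μ : Measure ℝ) [SFinite μ] : Set.Countable {x : ℝ | μ {x} ≠ 0} := by
  have h := Measure.countable_meas_level_set_pos₀ (μ := μ) (g := fun x : ℝ => x)
    measurable_id.nullMeasurable
  refine h.mono fun x hx => ?_
  show 0 < μ {a : ℝ | a = x}
  rw [Set.setOf_eq_eq_singleton]
  exact pos_iff_ne_zero.mpr hx

lemma Dg_eq_star (μ : Measure ℝ) [IsFiniteMeasure μ] : Dg μ = starMeasure μ Set.univ := by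
  have hmeas : Measurable fun x : ℝ => μ {x} := measurable_atom μ
  have hA : Set.Countable {x : ℝ | μ {x} ≠ 0} := countable_atoms μ
  have hAm : MeasurableSet {x : ℝ | μ {x} ≠ 0} := hA.measurableSet
  have h1 : Dg μ = ∫⁻ x, μ {x} ∂μ := by
    rw [Dg, Measure.prod_apply isClosed_diagonal.measurableSet]
    refine lintegral_congr fun x => ?_
    congr 1
    ext y; simp [Set.mem_diagonal_iff, eq_comm]
  have h2 : ∫⁻ x, μ {x} ∂μ = ∫⁻ x in {x : ℝ | μ {x} ≠ 0}, μ {x} ∂μ := by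
    rw [← lintegral_indicator hAm]
    refine lintegral_congr fun x =>
      ((Set.indicator_apply_eq_self (s := {x : ℝ | μ {x} ≠ 0})
        (f := fun x : ℝ => μ {x}) (a := x)).mpr fun hx => ?_).symm
    simpa using hx
  have h3 : ∫⁻ x in {x : ℝ | μ {x} ≠ 0}, μ {x} ∂μ
      = ∑' a : {x : ℝ | μ {x} ≠ 0}, μ {(a : ℝ)} * μ {(a : ℝ)} :=
    lintegral_countable _ hA
  have h4 : ∑' a : {x : ℝ | μ {x} ≠ 0}, μ {(a : ℝ)} * μ {(a : ℝ)}
      = ∑' x : ℝ, μ {x} ^ 2 := by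
    have : ∀ x : ℝ, μ {x} * μ {x} = μ {x} ^ 2 := fun x => (sq (μ {x})).symm
    simp_rw [this]
    have hsupp : Function.support (fun x : ℝ => μ {x} ^ 2) ⊆ {x : ℝ | μ {x} ≠ 0} := by
      intro x hx
      have hx2 : μ {x} ^ 2 ≠ 0 := hx
      exact fun h => hx2 (by simp [h])
    exact tsum_subtype_eq_of_support_subset hsupp
  have h5 : starMeasure μ Set.univ = ∑' x : ℝ, μ {x} ^ 2 := by
    rw [starMeasure, Measure.sum_apply _ MeasurableSet.univ]
    simp [Measure.smul_apply]
  rw [h1, h2, h3, h4, h5]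

lemma measurable_slice (μ : Measure ℝ) [SFinite μ] (c : ℝ) :
    Measurable fun s : ℝ => μ (Set.Icc (s - c) (s + c)) := by
  have hT : MeasurableSet {q : ℝ × ℝ | q.1 - c ≤ q.2 ∧ q.2 ≤ q.1 + c} := by
    rw [Set.setOf_and]
    exact ((isClosed_le (continuous_fst.sub continuous_const) continuous_snd).inter
      (isClosed_le continuous_snd (continuous_fst.add continuous_const))).measurableSet
  have h := measurable_measure_prodMk_left (ν := μ) hT
  have key : ∀ s : ℝ, Prod.mk s ⁻¹' {q : ℝ × ℝ | q.1 - c ≤ q.2 ∧ q.2 ≤ q.1 + c}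
      = Set.Icc (s - c) (s + c) := by
    intro s; ext y; simp [Set.mem_Icc]
  simpa only [key] using h

lemma inter_volume {ε : ℝ} (hε : 0 < ε) (x y : ℝ) :
    volume (Set.Icc (x - ε/2) (x + ε/2) ∩ Set.Icc (y - ε/2) (y + ε/2))
      = ENNReal.ofReal (max (1 - |x - y| / ε) 0) * ENNReal.ofReal ε := by
  rw [Set.Icc_inter_Icc, Real.volume_Icc]
  have h1 : min (x + ε/2) (y + ε/2) - max (x - ε/2) (y - ε/2) = ε - |x - y| := by
    rcases le_total x y with h | h
    · rw [min_eq_left (by linarith), max_eq_right (by linarith),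
        abs_of_nonpos (by linarith)]
      ring
    · rw [min_eq_right (by linarith), max_eq_left (by linarith),
        abs_of_nonneg (by linarith)]
      ring
  rw [h1, ← ENNReal.ofReal_mul (le_max_right _ _)]
  have h2 : max (1 - |x - y| / ε) 0 * ε = max (ε - |x - y|) 0 := by
    rw [max_mul_of_nonneg _ _ hε.le, zero_mul]
    congr 1
    field_simp
  rw [h2]
  rcases le_total (ε - |x - y|) 0 with h | h
  · rw [max_eq_right h, ENNReal.ofReal_eq_zero.mpr h, ENNReal.ofReal_zero]
  · rw [max_eq_left h]

lemma Jk_eq {ε : ℝ} (hε : 0 < ε) (μ : Measure ℝ) [SFinite μ] :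
    Jk ε μ * ENNReal.ofReal ε
      = ∫⁻ s : ℝ, (μ (Set.Icc (s - ε/2) (s + ε/2))) ^ 2 := by
  set S : Set ((ℝ × ℝ) × ℝ) :=
    {q | |q.1.1 - q.2| ≤ ε/2 ∧ |q.1.2 - q.2| ≤ ε/2} with hS_def
  have hS : MeasurableSet S := by
    rw [hS_def, Set.setOf_and]
    exact ((isClosed_le (continuous_fst.fst.sub continuous_snd).abs continuous_const).inter
      (isClosed_le (continuous_fst.snd.sub continuous_snd).abs continuous_const)).measurableSet
  have step1 : Jk ε μ * ENNReal.ofReal ε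
      = ∫⁻ p : ℝ × ℝ, ∫⁻ s : ℝ, S.indicator 1 (p, s) ∂volume ∂(μ.prod μ) := by
    rw [Jk, ← lintegral_mul_const _ ((kernel_continuous ε).measurable.ennreal_ofReal)]
    refine lintegral_congr fun p => ?_
    have hset : {s : ℝ | (p, s) ∈ S}
        = Set.Icc (p.1 - ε/2) (p.1 + ε/2) ∩ Set.Icc (p.2 - ε/2) (p.2 + ε/2) := by
      ext s
      simp only [hS_def, Set.mem_setOf_eq, Set.mem_inter_iff, Set.mem_Icc, abs_sub_le_iff]
      constructor
      · rintro ⟨⟨h1, h2⟩, h3, h4⟩; exact ⟨⟨by linarith, by linarith⟩, by linarith, by linarith⟩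
      · rintro ⟨⟨h1, h2⟩, h3, h4⟩; exact ⟨⟨by linarith, by linarith⟩, by linarith, by linarith⟩
    have : (fun s : ℝ => S.indicator 1 (p, s)) = ({s : ℝ | (p, s) ∈ S}).indicator (1 : ℝ → ℝ≥0∞) := by
      funext s
      simp only [Set.indicator_apply, Set.mem_setOf_eq, Pi.one_apply]
    rw [this, lintegral_indicator_one (by rw [hset]; exact
      (measurableSet_Icc.inter measurableSet_Icc)), hset, inter_volume hε]
  have step2 : ∫⁻ p : ℝ × ℝ, ∫⁻ s : ℝ, S.indicator 1 (p, s) ∂volume ∂(μ.prod μ)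
      = ∫⁻ s : ℝ, ∫⁻ p : ℝ × ℝ, S.indicator 1 (p, s) ∂(μ.prod μ) ∂volume :=
    lintegral_lintegral_swap ((measurable_const.indicator hS).aemeasurable)
  have step3 : ∀ s : ℝ, ∫⁻ p : ℝ × ℝ, S.indicator 1 (p, s) ∂(μ.prod μ)
      = (μ (Set.Icc (s - ε/2) (s + ε/2))) ^ 2 := by
    intro s
    have hset : {p : ℝ × ℝ | (p, s) ∈ S}
        = (Set.Icc (s - ε/2) (s + ε/2)) ×ˢ (Set.Icc (s - ε/2) (s + ε/2)) := by
      ext ⟨x, y⟩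
      simp only [hS_def, Set.mem_setOf_eq, Set.mem_prod, Set.mem_Icc, abs_sub_le_iff]
      constructor
      · rintro ⟨⟨h1, h2⟩, h3, h4⟩; exact ⟨⟨by linarith, by linarith⟩, by linarith, by linarith⟩
      · rintro ⟨⟨h1, h2⟩, h3, h4⟩; exact ⟨⟨by linarith, by linarith⟩, by linarith, by linarith⟩
    have : (fun p : ℝ × ℝ => S.indicator 1 (p, s)) = ({p : ℝ × ℝ | (p, s) ∈ S}).indicator (1 : ℝ × ℝ → ℝ≥0∞) := by
      funext p
      simp only [Set.indicator_apply, Set.mem_setOf_eq, Pi.one_apply]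
    rw [this, lintegral_indicator_one (by rw [hset]; exact
      (measurableSet_Icc.prod measurableSet_Icc)), hset, Measure.prod_prod, sq]
  rw [step1, step2]
  exact lintegral_congr step3

lemma slice_lintegral {ε : ℝ} (hε : 0 < ε) (μ : Measure ℝ) [SFinite μ] :
    ∫⁻ s : ℝ, μ (Set.Icc (s - ε/2) (s + ε/2)) ∂volume
      = ENNReal.ofReal ε * μ Set.univ := by
  set T : Set (ℝ × ℝ) := {q | |q.2 - q.1| ≤ ε/2} with hT_def
  have hT : MeasurableSet T :=
    (isClosed_le (continuous_snd.sub continuous_fst).abs continuous_const).measurableSet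
  have step1 : ∀ s : ℝ, μ (Set.Icc (s - ε/2) (s + ε/2))
      = ∫⁻ x : ℝ, T.indicator 1 (s, x) ∂μ := by
    intro s
    have hset : {x : ℝ | (s, x) ∈ T} = Set.Icc (s - ε/2) (s + ε/2) := by
      ext x
      simp only [hT_def, Set.mem_setOf_eq, Set.mem_Icc, abs_sub_le_iff]
      constructor
      · rintro ⟨h1, h2⟩; exact ⟨by linarith, by linarith⟩
      · rintro ⟨h1, h2⟩; exact ⟨by linarith, by linarith⟩
    have : (fun x : ℝ => T.indicator 1 (s, x)) = ({x : ℝ | (s, x) ∈ T}).indicator (1 : ℝ → ℝ≥0∞) := by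
      funext x
      simp only [Set.indicator_apply, Set.mem_setOf_eq, Pi.one_apply]
    rw [this, lintegral_indicator_one (by rw [hset]; exact measurableSet_Icc), hset]
  have step2 : ∫⁻ s : ℝ, ∫⁻ x : ℝ, T.indicator 1 (s, x) ∂μ ∂volume
      = ∫⁻ x : ℝ, ∫⁻ s : ℝ, T.indicator 1 (s, x) ∂volume ∂μ :=
    lintegral_lintegral_swap ((measurable_const.indicator hT).aemeasurable)
  have step3 : ∀ x : ℝ, ∫⁻ s : ℝ, T.indicator 1 (s, x) ∂volume = ENNReal.ofReal ε := by
    intro x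
    have hset : {s : ℝ | (s, x) ∈ T} = Set.Icc (x - ε/2) (x + ε/2) := by
      ext s
      simp only [hT_def, Set.mem_setOf_eq, Set.mem_Icc, abs_sub_le_iff]
      constructor
      · rintro ⟨h1, h2⟩; exact ⟨by linarith, by linarith⟩
      · rintro ⟨h1, h2⟩; exact ⟨by linarith, by linarith⟩
    have : (fun s : ℝ => T.indicator 1 (s, x)) = ({s : ℝ | (s, x) ∈ T}).indicator (1 : ℝ → ℝ≥0∞) := by
      funext s
      simp only [Set.indicator_apply, Set.mem_setOf_eq, Pi.one_apply]
    rw [this, lintegral_indicator_one (by rw [hset]; exact measurableSet_Icc), hset,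
      Real.volume_Icc]
    congr 1
    ring
  calc ∫⁻ s : ℝ, μ (Set.Icc (s - ε/2) (s + ε/2)) ∂volume
      = ∫⁻ s : ℝ, ∫⁻ x : ℝ, T.indicator 1 (s, x) ∂μ ∂volume := lintegral_congr step1
    _ = ∫⁻ x : ℝ, ∫⁻ s : ℝ, T.indicator 1 (s, x) ∂volume ∂μ := step2
    _ = ∫⁻ x : ℝ, ENNReal.ofReal ε ∂μ := lintegral_congr step3
    _ = ENNReal.ofReal ε * μ Set.univ := by rw [lintegral_const]

lemma tendsto_Jk_Dg (μ : Measure ℝ) [IsFiniteMeasure μ] :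
    Tendsto (fun k : ℕ => Jk (1/(k+1)) μ) atTop (𝓝 (Dg μ)) := by
  have key := tendsto_lintegral_of_dominated_convergence (μ := μ.prod μ)
    (F := fun (k : ℕ) (p : ℝ × ℝ) =>
      ENNReal.ofReal (max (1 - |p.1 - p.2| / (1/(k+1 : ℝ))) 0))
    (f := (Set.diagonal ℝ).indicator (1 : ℝ × ℝ → ℝ≥0∞)) (bound := fun _ => 1)
    (fun k => ((kernel_continuous _).measurable).ennreal_ofReal)
    (fun k => Filter.Eventually.of_forall fun p => by
      calc ENNReal.ofReal (max (1 - |p.1 - p.2| / (1/(k+1 : ℝ))) 0)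
          ≤ ENNReal.ofReal 1 := ENNReal.ofReal_le_ofReal (kernel_le_one (by positivity) p)
        _ = 1 := ENNReal.ofReal_one)
    (by rw [lintegral_one]; exact (measure_lt_top _ _).ne)
    ?_
  · have : Dg μ = ∫⁻ p, (Set.diagonal ℝ).indicator (1 : ℝ × ℝ → ℝ≥0∞) p ∂(μ.prod μ) := by
      rw [Dg, lintegral_indicator_one isClosed_diagonal.measurableSet]
    rw [this]
    exact key
  · refine Filter.Eventually.of_forall fun p => ?_
    by_cases hp : p.1 = p.2
    · have hmem : p ∈ Set.diagonal ℝ := hp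
      have : ∀ k : ℕ, ENNReal.ofReal (max (1 - |p.1 - p.2| / (1/(k+1 : ℝ))) 0) = 1 := by
        intro k; rw [hp]; simp
      simp only [this, Set.indicator_of_mem hmem, Pi.one_apply]
      exact tendsto_const_nhds
    · have hr : 0 < |p.1 - p.2| := abs_pos.2 (sub_ne_zero.2 hp)
      have hmem : p ∉ Set.diagonal ℝ := hp
      rw [Set.indicator_of_notMem hmem]
      obtain ⟨N, hN⟩ := exists_nat_gt (1 / |p.1 - p.2|)
      refine tendsto_const_nhds.congr' ?_
      filter_upwards [eventually_ge_atTop N] with k hk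
      have hk1 : 1 / |p.1 - p.2| < k + 1 := lt_of_lt_of_le hN (by exact_mod_cast le_trans hk (Nat.le_succ k))
      have hx : (1 : ℝ) ≤ |p.1 - p.2| / (1/(k+1 : ℝ)) := by
        rw [one_div, div_eq_mul_inv, inv_inv]
        rw [div_lt_iff₀ hr] at hk1
        nlinarith
      symm
      rw [ENNReal.ofReal_eq_zero]
      rw [max_eq_right (by linarith)]

lemma tendsto_of_forall_eventually_abs_le {u : ℕ → ℝ} {a : ℝ}
    (h : ∀ δ > 0, ∀ᶠ n in atTop, |u n - a| ≤ δ) : Tendsto u atTop (𝓝 a) := by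
  rw [Metric.tendsto_atTop]
  intro e he
  obtain ⟨N, hN⟩ := eventually_atTop.mp (h (e/2) (by linarith))
  exact ⟨N, fun n hn => by have := hN n hn; rw [Real.dist_eq]; linarith⟩

/-- A continuous bump: equals `1` on `Iic c`, vanishes outside `Iic (c+η)`. -/
noncomputable def bump (c η : ℝ) (x : ℝ) : ℝ := max 0 (min 1 ((c + η - x)/η))

lemma bump_continuous (c η : ℝ) : Continuous (bump c η) :=
  continuous_const.max (continuous_const.min
    ((continuous_const.sub continuous_id).div_const η))

lemma bump_nonneg (c η x : ℝ) : 0 ≤ bump c η x := le_max_left _ _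

lemma bump_le_one (c η x : ℝ) : bump c η x ≤ 1 :=
  max_le zero_le_one (min_le_left _ _)

lemma bump_eq_one {c η x : ℝ} (hη : 0 < η) (hx : x ≤ c) : bump c η x = 1 := by
  rw [bump, min_eq_left (by rw [le_div_iff₀ hη]; linarith), max_eq_right zero_le_one]

lemma bump_eq_zero {c η x : ℝ} (hη : 0 < η) (hx : c + η ≤ x) : bump c η x = 0 := by
  rw [bump, max_eq_left]
  exact min_le_of_right_le (by rw [div_nonpos_iff]; right; constructor <;> linarith)

lemma bump_integrable (c η : ℝ) (μ : Measure ℝ) [IsFiniteMeasure μ] :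
    Integrable (bump c η) μ := by
  refine Integrable.mono' (integrable_const (1 : ℝ))
    ((bump_continuous c η).aestronglyMeasurable) ?_
  filter_upwards with x
  rw [Real.norm_eq_abs, abs_of_nonneg (bump_nonneg c η x)]
  exact bump_le_one c η x

lemma integral_le_meas {μ : Measure ℝ} [IsFiniteMeasure μ] {f : ℝ → ℝ}
    (hint : Integrable f μ) (h0 : ∀ x, 0 ≤ f x) {B : Set ℝ} (hB : MeasurableSet B)
    (hfB : ∀ x, x ∉ B → f x = 0) (hf1 : ∀ x, f x ≤ 1) :
    ∫ x, f x ∂μ ≤ (μ B).toReal := by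
  have hmono : ∫ x, f x ∂μ ≤ ∫ x, B.indicator (1 : ℝ → ℝ) x ∂μ := by
    refine integral_mono hint ((integrable_const (1 : ℝ)).indicator hB) fun x => ?_
    by_cases hx : x ∈ B
    · rw [Set.indicator_of_mem hx]; exact hf1 x
    · rw [Set.indicator_of_notMem hx, hfB x hx]
  rwa [integral_indicator_one hB] at hmono

lemma meas_le_integral {μ : Measure ℝ} [IsFiniteMeasure μ] {f : ℝ → ℝ}
    (hint : Integrable f μ) (h0 : ∀ x, 0 ≤ f x) {A : Set ℝ} (hA : MeasurableSet A)
    (hfA : ∀ x ∈ A, f x = 1) :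
    (μ A).toReal ≤ ∫ x, f x ∂μ := by
  have hmono : ∫ x, A.indicator (1 : ℝ → ℝ) x ∂μ ≤ ∫ x, f x ∂μ := by
    refine integral_mono ((integrable_const (1 : ℝ)).indicator hA) hint fun x => ?_
    by_cases hx : x ∈ A
    · rw [Set.indicator_of_mem hx, Pi.one_apply, hfA x hx]
    · rw [Set.indicator_of_notMem hx]; exact h0 x
  rwa [integral_indicator_one hA] at hmono

lemma meas_Iio_eq_Iic {μ : Measure ℝ} {c : ℝ} (hc : μ {c} = 0) :
    μ (Set.Iio c) = μ (Set.Iic c) := by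
  refine le_antisymm (measure_mono Set.Iio_subset_Iic_self) ?_
  calc μ (Set.Iic c) = μ (Set.Iio c ∪ {c}) := by rw [Set.Iio_union_right]
    _ ≤ μ (Set.Iio c) + μ {c} := measure_union_le _ _
    _ = μ (Set.Iio c) := by rw [hc, add_zero]

lemma tendsto_measure_Iic_Iio (μs : ℕ → Measure ℝ) (μ : Measure ℝ)
    [hfs : ∀ n, IsFiniteMeasure (μs n)] [IsFiniteMeasure μ] (hW : WeakTendsto μs μ)
    {c : ℝ} (hc : μ {c} = 0) :
    Tendsto (fun n => (μs n (Set.Iic c)).toReal) atTop (𝓝 ((μ (Set.Iic c)).toReal)) ∧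
    Tendsto (fun n => (μs n (Set.Iio c)).toReal) atTop (𝓝 ((μ (Set.Iic c)).toReal)) := by
  set G : ℝ := (μ (Set.Iic c)).toReal with hG
  -- approximation from outside
  have hupper : ∀ δ > (0:ℝ), ∃ η > (0:ℝ), (μ (Set.Iic (c+η))).toReal ≤ G + δ := by
    intro δ hδ
    have hset : ⋂ k : ℕ, Set.Iic (c + 1/((k:ℝ)+1)) = Set.Iic c := by
      ext x
      simp only [Set.mem_iInter, Set.mem_Iic]
      constructor
      · intro h
        by_contra hx
        push_neg at hx
        obtain ⟨k, hk⟩ := exists_nat_gt (1/(x - c))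
        have : 1/((k:ℝ)+1) < x - c := by
          rw [div_lt_iff₀ (by positivity)]
          rw [div_lt_iff₀ (by linarith)] at hk
          nlinarith
        linarith [h k]
      · intro h k
        have : (0:ℝ) < 1/((k:ℝ)+1) := by positivity
        linarith
    have hanti : Antitone fun k : ℕ => Set.Iic (c + 1/((k:ℝ)+1)) := by
      intro i j hij
      apply Set.Iic_subset_Iic.mpr
      have hji : ((i:ℝ)+1) ≤ ((j:ℝ)+1) := by exact_mod_cast Nat.succ_le_succ hij
      have : 1/((j:ℝ)+1) ≤ 1/((i:ℝ)+1) := one_div_le_one_div_of_le (by positivity) hji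
      linarith
    have htd := tendsto_measure_iInter_atTop (μ := μ)
      (fun k => (measurableSet_Iic).nullMeasurableSet) hanti ⟨0, measure_ne_top _ _⟩
    rw [hset] at htd
    have htd' := (ENNReal.tendsto_toReal (measure_ne_top μ (Set.Iic c))).comp htd
    have hev := htd'.eventually_lt_const (show G < G + δ by linarith)
    obtain ⟨k, hk⟩ := hev.exists
    exact ⟨1/((k:ℝ)+1), by positivity, le_of_lt hk⟩
  -- approximation from inside
  have hlower : ∀ δ > (0:ℝ), ∃ η > (0:ℝ), G - δ ≤ (μ (Set.Iic (c-η))).toReal := by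
    intro δ hδ
    have hset : ⋃ k : ℕ, Set.Iic (c - 1/((k:ℝ)+1)) = Set.Iio c := by
      ext x
      simp only [Set.mem_iUnion, Set.mem_Iic, Set.mem_Iio]
      constructor
      · rintro ⟨k, hk⟩
        have : (0:ℝ) < 1/((k:ℝ)+1) := by positivity
        linarith
      · intro h
        obtain ⟨k, hk⟩ := exists_nat_gt (1/(c - x))
        refine ⟨k, ?_⟩
        have : 1/((k:ℝ)+1) < c - x := by
          rw [div_lt_iff₀ (by positivity)]
          rw [div_lt_iff₀ (by linarith)] at hk
          nlinarith
        linarith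
    have hmono : Monotone fun k : ℕ => Set.Iic (c - 1/((k:ℝ)+1)) := by
      intro i j hij
      apply Set.Iic_subset_Iic.mpr
      have hji : ((i:ℝ)+1) ≤ ((j:ℝ)+1) := by exact_mod_cast Nat.succ_le_succ hij
      have : 1/((j:ℝ)+1) ≤ 1/((i:ℝ)+1) := one_div_le_one_div_of_le (by positivity) hji
      linarith
    have htd := tendsto_measure_iUnion_atTop (μ := μ) hmono
    rw [hset, meas_Iio_eq_Iic hc] at htd
    have htd' := (ENNReal.tendsto_toReal (measure_ne_top μ (Set.Iic c))).comp htd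
    have hev := htd'.eventually_const_lt (show G - δ < G by linarith)
    obtain ⟨k, hk⟩ := hev.exists
    exact ⟨1/((k:ℝ)+1), by positivity, le_of_lt hk⟩
  -- the sandwich argument
  have key : ∀ δ > (0:ℝ), ∀ᶠ n in atTop,
      |(μs n (Set.Iic c)).toReal - G| ≤ δ ∧ |(μs n (Set.Iio c)).toReal - G| ≤ δ := by
    intro δ hδ
    obtain ⟨η₁, hη₁, hη₁'⟩ := hupper (δ/2) (by linarith)
    obtain ⟨η₂, hη₂, hη₂'⟩ := hlower (δ/2) (by linarith)
    set f := bump c η₁ with hf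
    set g := bump (c - η₂) η₂ with hg
    have hfμ : ∫ x, f x ∂μ ≤ G + δ/2 := by
      refine le_trans ?_ hη₁'
      refine integral_le_meas (bump_integrable _ _ μ) (bump_nonneg _ _) measurableSet_Iic
        (fun x hx => ?_) (bump_le_one _ _)
      refine bump_eq_zero hη₁ ?_
      simp only [Set.mem_Iic, not_le] at hx
      linarith
    have hgμ : G - δ/2 ≤ ∫ x, g x ∂μ := by
      refine le_trans hη₂' ?_
      refine meas_le_integral (bump_integrable _ _ μ) (bump_nonneg _ _) measurableSet_Iic
        (fun x hx => ?_)
      exact bump_eq_one hη₂ (by simpa using hx)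
    have hFf := hW f (bump_continuous _ _) ⟨1, fun x => by
      rw [abs_of_nonneg (bump_nonneg _ _ _)]; exact bump_le_one _ _ _⟩
    have hFg := hW g (bump_continuous _ _) ⟨1, fun x => by
      rw [abs_of_nonneg (bump_nonneg _ _ _)]; exact bump_le_one _ _ _⟩
    have hev1 := hFf.eventually_lt_const (show ∫ x, f x ∂μ < G + δ by linarith)
    have hev2 := hFg.eventually_const_lt (show G - δ < ∫ x, g x ∂μ by linarith)
    filter_upwards [hev1, hev2] with n h1 h2
    have hn1 : (μs n (Set.Iic c)).toReal ≤ ∫ x, f x ∂(μs n) := by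
      refine meas_le_integral (bump_integrable _ _ _) (bump_nonneg _ _) measurableSet_Iic
        (fun x hx => bump_eq_one hη₁ (by simpa using hx))
    have hn2 : ∫ x, g x ∂(μs n) ≤ (μs n (Set.Iio c)).toReal := by
      refine integral_le_meas (bump_integrable _ _ _) (bump_nonneg _ _) measurableSet_Iio
        (fun x hx => ?_) (bump_le_one _ _)
      refine bump_eq_zero hη₂ ?_
      simp only [Set.mem_Iio, not_lt] at hx
      linarith
    have hn3 : (μs n (Set.Iio c)).toReal ≤ (μs n (Set.Iic c)).toReal :=
      ENNReal.toReal_mono (measure_ne_top _ _) (measure_mono Set.Iio_subset_Iic_self)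
    constructor
    · rw [abs_le]; constructor <;> linarith
    · rw [abs_le]; constructor <;> linarith
  constructor
  · exact tendsto_of_forall_eventually_abs_le fun δ hδ => (key δ hδ).mono fun n h => h.1
  · exact tendsto_of_forall_eventually_abs_le fun δ hδ => (key δ hδ).mono fun n h => h.2

lemma tendsto_measure_Icc' (μs : ℕ → Measure ℝ) (μ : Measure ℝ)
    [hfs : ∀ n, IsFiniteMeasure (μs n)] [IsFiniteMeasure μ] (hW : WeakTendsto μs μ)
    {a b : ℝ} (hab : a ≤ b) (ha : μ {a} = 0) (hb : μ {b} = 0) :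
    Tendsto (fun n => (μs n (Set.Icc a b)).toReal) atTop
      (𝓝 ((μ (Set.Icc a b)).toReal)) := by
  have hdiff : ∀ ν : Measure ℝ, IsFiniteMeasure ν →
      (ν (Set.Icc a b)).toReal = (ν (Set.Iic b)).toReal - (ν (Set.Iio a)).toReal := by
    intro ν hν
    have hsub : Set.Iio a ⊆ Set.Iic b := fun x hx => le_trans (le_of_lt hx) hab
    have hIcc : Set.Icc a b = Set.Iic b \ Set.Iio a := by
      ext x
      simp only [Set.mem_Icc, Set.mem_diff, Set.mem_Iic, Set.mem_Iio, not_lt]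
      tauto
    rw [hIcc, measure_diff hsub measurableSet_Iio.nullMeasurableSet (measure_ne_top _ _),
      ENNReal.toReal_sub_of_le (measure_mono hsub) (measure_ne_top _ _)]
  have h1 := (tendsto_measure_Iic_Iio μs μ hW hb).1
  have h2 := (tendsto_measure_Iic_Iio μs μ hW ha).2
  have hconv := h1.sub h2
  simp only [← hdiff (μs _) (hfs _)] at hconv
  have hμIcc : (μ (Set.Icc a b)).toReal = (μ (Set.Iic b)).toReal - (μ (Set.Iic a)).toReal := by
    rw [hdiff μ inferInstance, meas_Iio_eq_Iic ha]
  rw [hμIcc]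
  exact hconv

lemma tendsto_mass (μs : ℕ → Measure ℝ) (μ : Measure ℝ) (hW : WeakTendsto μs μ) :
    Tendsto (fun n => (μs n Set.univ).toReal) atTop (𝓝 ((μ Set.univ).toReal)) := by
  have := hW (fun _ => (1:ℝ)) continuous_const ⟨1, fun x => by norm_num⟩
  simpa [integral_const, measureReal_def] using this

lemma eventually_le_of_fatou {u : ℕ → ℝ≥0∞} {L : ℝ≥0∞} (hL : L ≠ ⊤) (hfin : ∀ n, u n ≠ ⊤)
    (h : L ≤ liminf u atTop) {δ : ℝ} (hδ : 0 < δ) :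
    ∀ᶠ n in atTop, L.toReal - δ ≤ (u n).toReal := by
  rcases le_or_gt (L.toReal - δ) 0 with h0 | h0
  · exact Filter.Eventually.of_forall fun n => le_trans h0 ENNReal.toReal_nonneg
  · have hlt : ENNReal.ofReal (L.toReal - δ) < L :=
      (ENNReal.ofReal_lt_iff_lt_toReal (by linarith) hL).mpr (by linarith)
    have hev := eventually_lt_of_lt_liminf (lt_of_lt_of_le hlt h)
    refine hev.mono fun n hn => ?_
    have := ENNReal.toReal_mono (hfin n) hn.le
    rwa [ENNReal.toReal_ofReal h0.le] at this

lemma Ieps_eq_div {ε : ℝ} (hε : 0 < ε) (ν : Measure ℝ) [IsFiniteMeasure ν] :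
    Ieps ε ν = (∫⁻ s : ℝ, (ν (Set.Icc (s - ε/2) (s + ε/2))) ^ 2).toReal / ε := by
  rw [Ieps_eq, ← Jk_eq hε, ENNReal.toReal_mul, ENNReal.toReal_ofReal hε.le,
    mul_div_cancel_right₀ _ hε.ne']

lemma tendsto_sq_lintegral (μs : ℕ → Measure ℝ) (μ : Measure ℝ)
    [hfs : ∀ n, IsFiniteMeasure (μs n)] [IsFiniteMeasure μ] (hW : WeakTendsto μs μ)
    {ε : ℝ} (hε : 0 < ε) :
    Tendsto (fun n => (∫⁻ s : ℝ, (μs n (Set.Icc (s - ε/2) (s + ε/2))) ^ 2).toReal)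
      atTop (𝓝 ((∫⁻ s : ℝ, (μ (Set.Icc (s - ε/2) (s + ε/2))) ^ 2).toReal)) := by
  set F : ℕ → ℝ → ℝ≥0∞ := fun n s => μs n (Set.Icc (s - ε/2) (s + ε/2)) with hF
  set f : ℝ → ℝ≥0∞ := fun s => μ (Set.Icc (s - ε/2) (s + ε/2)) with hf
  have hFmeas : ∀ n, Measurable (F n) := fun n => measurable_slice (μs n) (ε/2)
  have hfmeas : Measurable f := measurable_slice μ (ε/2)
  -- a uniform mass bound
  obtain ⟨C₀, hC₀⟩ := (tendsto_mass μs μ hW).bddAbove_range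
  set C : ℝ := max C₀ (μ Set.univ).toReal with hC
  set M : ℝ≥0∞ := ENNReal.ofReal C with hM
  have hMne : M ≠ ⊤ := ENNReal.ofReal_ne_top
  have hFM : ∀ n s, F n s ≤ M := by
    intro n s
    calc F n s ≤ μs n Set.univ := measure_mono (Set.subset_univ _)
      _ = ENNReal.ofReal ((μs n Set.univ).toReal) := (ENNReal.ofReal_toReal
          (measure_ne_top _ _)).symm
      _ ≤ M := ENNReal.ofReal_le_ofReal (le_trans (hC₀ ⟨n, rfl⟩) (le_max_left _ _))
  have hfM : ∀ s, f s ≤ M := by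
    intro s
    calc f s ≤ μ Set.univ := measure_mono (Set.subset_univ _)
      _ = ENNReal.ofReal ((μ Set.univ).toReal) := (ENNReal.ofReal_toReal
          (measure_ne_top _ _)).symm
      _ ≤ M := ENNReal.ofReal_le_ofReal (le_max_right _ _)
  -- integral identities
  have hFint : ∀ n, ∫⁻ s, F n s = ENNReal.ofReal ε * μs n Set.univ :=
    fun n => slice_lintegral hε (μs n)
  have hfint : ∫⁻ s, f s = ENNReal.ofReal ε * μ Set.univ := slice_lintegral hε μ
  have hsq_le : ∀ (g : ℝ → ℝ≥0∞), (∀ s, g s ≤ M) → ∀ s, g s ^ 2 ≤ g s * M := by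
    intro g hg s
    rw [sq]
    exact mul_le_mul_right (hg s) _
  have hg_le : ∀ (g : ℝ → ℝ≥0∞), ∀ s, g s * (M - g s) ≤ g s * M :=
    fun g s => mul_le_mul_right tsub_le_self _
  have hQfin : ∀ n, ∫⁻ s, F n s ^ 2 ≠ ⊤ := by
    intro n
    refine ne_top_of_le_ne_top ?_ (lintegral_mono (hsq_le (F n) (hFM n)))
    rw [lintegral_mul_const _ (hFmeas n), hFint n]
    exact ENNReal.mul_ne_top (ENNReal.mul_ne_top ENNReal.ofReal_ne_top
      (measure_ne_top _ _)) hMne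
  have hQfin' : ∫⁻ s, f s ^ 2 ≠ ⊤ := by
    refine ne_top_of_le_ne_top ?_ (lintegral_mono (hsq_le f hfM))
    rw [lintegral_mul_const _ hfmeas, hfint]
    exact ENNReal.mul_ne_top (ENNReal.mul_ne_top ENNReal.ofReal_ne_top
      (measure_ne_top _ _)) hMne
  have hGfin : ∀ n, ∫⁻ s, F n s * (M - F n s) ≠ ⊤ := by
    intro n
    refine ne_top_of_le_ne_top ?_ (lintegral_mono (hg_le (F n)))
    rw [lintegral_mul_const _ (hFmeas n), hFint n]
    exact ENNReal.mul_ne_top (ENNReal.mul_ne_top ENNReal.ofReal_ne_top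
      (measure_ne_top _ _)) hMne
  have hGfin' : ∫⁻ s, f s * (M - f s) ≠ ⊤ := by
    refine ne_top_of_le_ne_top ?_ (lintegral_mono (hg_le f))
    rw [lintegral_mul_const _ hfmeas, hfint]
    exact ENNReal.mul_ne_top (ENNReal.mul_ne_top ENNReal.ofReal_ne_top
      (measure_ne_top _ _)) hMne
  -- the splitting identity
  have hsplit : ∀ (g : ℝ → ℝ≥0∞), Measurable g → (∀ s, g s ≤ M) →
      (∫⁻ s, g s ^ 2) + (∫⁻ s, g s * (M - g s)) = (∫⁻ s, g s) * M := by
    intro g hg hgM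
    rw [← lintegral_add_left (hg.pow_const 2), ← lintegral_mul_const _ hg]
    refine lintegral_congr fun s => ?_
    rw [sq, ← mul_add, add_tsub_cancel_of_le (hgM s)]
  -- almost everywhere convergence
  have hbad : ∀ᵐ s ∂(volume : Measure ℝ), μ {s - ε/2} = 0 ∧ μ {s + ε/2} = 0 := by
    have hA : Set.Countable {x : ℝ | μ {x} ≠ 0} := countable_atoms μ
    have h1 : Set.Countable {s : ℝ | μ {s - ε/2} ≠ 0} := by
      have him : {s : ℝ | μ {s - ε/2} ≠ 0} = (fun x => x + ε/2) '' {x : ℝ | μ {x} ≠ 0} := by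
        ext s
        simp only [Set.mem_setOf_eq, Set.mem_image]
        constructor
        · intro h; exact ⟨s - ε/2, h, by ring⟩
        · rintro ⟨x, hx, rfl⟩
          simpa using hx
      rw [him]; exact hA.image _
    have h2 : Set.Countable {s : ℝ | μ {s + ε/2} ≠ 0} := by
      have him : {s : ℝ | μ {s + ε/2} ≠ 0} = (fun x => x - ε/2) '' {x : ℝ | μ {x} ≠ 0} := by
        ext s
        simp only [Set.mem_setOf_eq, Set.mem_image]
        constructor
        · intro h; exact ⟨s + ε/2, h, by ring⟩
        · rintro ⟨x, hx, rfl⟩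
          simpa using hx
      rw [him]; exact hA.image _
    rw [ae_iff]
    refine measure_mono_null ?_
      (measure_union_null (h1.measure_zero volume) (h2.measure_zero volume))
    intro s hs
    simp only [Set.mem_setOf_eq, not_and_or] at hs
    rcases hs with hs | hs
    · exact Set.mem_union_left _ hs
    · exact Set.mem_union_right _ hs
  have haecv : ∀ᵐ s ∂(volume : Measure ℝ), Tendsto (fun n => F n s) atTop (𝓝 (f s)) := by
    refine hbad.mono fun s hs => ?_
    have hreal := tendsto_measure_Icc' μs μ hW (a := s - ε/2) (b := s + ε/2)
      (by linarith) hs.1 hs.2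
    exact (ENNReal.tendsto_toReal_iff (fun n => measure_ne_top _ _)
      (measure_ne_top _ _)).mp hreal
  -- Fatou for the squares
  have hfatou_sq : ∫⁻ s, f s ^ 2 ≤ liminf (fun n => ∫⁻ s, F n s ^ 2) atTop := by
    have hle := lintegral_liminf_le (fun n => (hFmeas n).pow_const 2)
      (μ := (volume : Measure ℝ)) (u := atTop)
    refine le_trans (le_of_eq (lintegral_congr_ae ?_)) hle
    refine haecv.mono fun s hs => ?_
    have : Tendsto (fun n => F n s ^ 2) atTop (𝓝 (f s ^ 2)) :=
      ((ENNReal.continuous_pow 2).tendsto (f s)).comp hs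
    exact this.liminf_eq.symm
  -- Fatou for the complements
  have hfatou_g : ∫⁻ s, f s * (M - f s)
      ≤ liminf (fun n => ∫⁻ s, F n s * (M - F n s)) atTop := by
    have hle := lintegral_liminf_le (μ := (volume : Measure ℝ)) (u := atTop)
      (f := fun n s => F n s * (M - F n s))
      (fun n => (hFmeas n).mul (measurable_const.sub (hFmeas n)))
    refine le_trans (le_of_eq (lintegral_congr_ae ?_)) hle
    refine haecv.mono fun s hs => ?_
    have hsub : Tendsto (fun n => M - F n s) atTop (𝓝 (M - f s)) :=
      ENNReal.Tendsto.sub tendsto_const_nhds hs (Or.inl hMne)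
    have hmul : Tendsto (fun n => F n s * (M - F n s)) atTop (𝓝 (f s * (M - f s))) := by
      refine ENNReal.Tendsto.mul hs ?_ hsub ?_
      · right
        exact ne_top_of_le_ne_top hMne tsub_le_self
      · right
        exact ne_top_of_le_ne_top hMne (hfM s)
    exact hmul.liminf_eq.symm
  -- convergence of the sums
  have hsum_cv : Tendsto (fun n => ((∫⁻ s, F n s) * M).toReal) atTop
      (𝓝 (((∫⁻ s, f s) * M).toReal)) := by
    simp only [hFint, hfint, ENNReal.toReal_mul, ENNReal.toReal_ofReal hε.le]
    exact (((tendsto_mass μs μ hW).const_mul ε).mul_const M.toReal)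
  -- real identities
  have hid : ∀ n, (∫⁻ s, F n s ^ 2).toReal + (∫⁻ s, F n s * (M - F n s)).toReal
      = ((∫⁻ s, F n s) * M).toReal := by
    intro n
    rw [← ENNReal.toReal_add (hQfin n) (hGfin n), hsplit (F n) (hFmeas n) (hFM n)]
  have hid' : (∫⁻ s, f s ^ 2).toReal + (∫⁻ s, f s * (M - f s)).toReal
      = ((∫⁻ s, f s) * M).toReal := by
    rw [← ENNReal.toReal_add hQfin' hGfin', hsplit f hfmeas hfM]
  -- conclude
  refine tendsto_of_forall_eventually_abs_le fun δ hδ => ?_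
  have hev1 := eventually_le_of_fatou hQfin' hQfin hfatou_sq (show (0:ℝ) < δ/4 by linarith)
  have hev2 := eventually_le_of_fatou hGfin' hGfin hfatou_g (show (0:ℝ) < δ/4 by linarith)
  have hev3 : ∀ᶠ n in atTop,
      |((∫⁻ s, F n s) * M).toReal - ((∫⁻ s, f s) * M).toReal| ≤ δ/4 := by
    have := hsum_cv
    rw [Metric.tendsto_atTop] at this
    obtain ⟨N, hN⟩ := this (δ/4) (by linarith)
    refine eventually_atTop.mpr ⟨N, fun n hn => ?_⟩
    have := hN n hn
    rw [Real.dist_eq] at this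
    linarith [abs_nonneg (((∫⁻ s, F n s) * M).toReal - ((∫⁻ s, f s) * M).toReal)]
  filter_upwards [hev1, hev2, hev3] with n h1 h2 h3
  have e1 := hid n
  have e2 := hid'
  rw [abs_le] at h3 ⊢
  constructor <;> linarith

lemma tendsto_Ieps (μs : ℕ → Measure ℝ) (μ : Measure ℝ)
    [hfs : ∀ n, IsFiniteMeasure (μs n)] [IsFiniteMeasure μ] (hW : WeakTendsto μs μ)
    {ε : ℝ} (hε : 0 < ε) :
    Tendsto (fun n => Ieps ε (μs n)) atTop (𝓝 (Ieps ε μ)) := by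
  simp only [Ieps_eq_div hε]
  exact (tendsto_sq_lintegral μs μ hW hε).div_const ε

lemma kernel_lip {ε₀ ε ε' r : ℝ} (h0 : 0 < ε₀) (hε : ε₀ ≤ ε) (hε' : ε₀ ≤ ε') (hr : 0 ≤ r) :
    |max (1 - r/ε) 0 - max (1 - r/ε') 0| ≤ |ε - ε'| / ε₀ := by
  have hεpos : 0 < ε := lt_of_lt_of_le h0 hε
  have hε'pos : 0 < ε' := lt_of_lt_of_le h0 hε'
  rcases le_or_gt r (max ε ε') with hcase | hcase
  · refine le_trans (abs_max_sub_max_le_abs _ _ 0) ?_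
    have heq : (1 - r/ε) - (1 - r/ε') = r * (ε - ε') / (ε * ε') := by
      field_simp
      ring
    rw [heq, abs_div, abs_mul, abs_of_nonneg hr, abs_of_pos (show 0 < ε*ε' by positivity)]
    rw [div_le_div_iff₀ (by positivity) h0]
    have h1 : r * ε₀ ≤ ε * ε' := by
      rcases le_total ε ε' with h | h
      · rw [max_eq_right h] at hcase
        nlinarith
      · rw [max_eq_left h] at hcase
        nlinarith
    nlinarith [abs_nonneg (ε - ε')]
  · have h1 : max (1 - r/ε) 0 = 0 := by
      refine max_eq_right ?_
      have : 1 ≤ r/ε := by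
        rw [le_div_iff₀ hεpos]
        have := le_max_left ε ε'
        linarith
      linarith
    have h2 : max (1 - r/ε') 0 = 0 := by
      refine max_eq_right ?_
      have : 1 ≤ r/ε' := by
        rw [le_div_iff₀ hε'pos]
        have := le_max_right ε ε'
        linarith
      linarith
    rw [h1, h2, sub_zero, abs_zero]
    positivity

lemma Ieps_lip {ε₀ ε ε' : ℝ} (h0 : 0 < ε₀) (hε : ε₀ ≤ ε) (hε' : ε₀ ≤ ε')
    (ν : Measure ℝ) [IsFiniteMeasure ν] :
    |Ieps ε ν - Ieps ε' ν| ≤ ((ν Set.univ).toReal)^2 * (|ε - ε'| / ε₀) := by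
  have hεpos : 0 < ε := lt_of_lt_of_le h0 hε
  have hε'pos : 0 < ε' := lt_of_lt_of_le h0 hε'
  have h1 : Ieps ε ν - Ieps ε' ν
      = ∫ p : ℝ × ℝ, (max (1 - |p.1 - p.2|/ε) 0 - max (1 - |p.1 - p.2|/ε') 0) ∂(ν.prod ν) :=
    (integral_sub (kernel_integrable hεpos ν) (kernel_integrable hε'pos ν)).symm
  have h2 := norm_integral_le_of_norm_le_const (μ := ν.prod ν) (C := |ε - ε'|/ε₀)
    (f := fun p : ℝ × ℝ => max (1 - |p.1 - p.2|/ε) 0 - max (1 - |p.1 - p.2|/ε') 0)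
    (Filter.Eventually.of_forall fun p => by
      rw [Real.norm_eq_abs]
      exact kernel_lip h0 hε hε' (abs_nonneg _))
  rw [h1, ← Real.norm_eq_abs]
  refine le_trans h2 ?_
  have hmass : ((ν.prod ν) Set.univ).toReal = ((ν Set.univ).toReal)^2 := by
    rw [← Set.univ_prod_univ, Measure.prod_prod, ENNReal.toReal_mul, sq]
  rw [measureReal_def, hmass]
  rw [mul_comm]

lemma Ieps_mono {ε ε' : ℝ} (hε : 0 < ε) (hεε' : ε ≤ ε') (ν : Measure ℝ)
    [IsFiniteMeasure ν] : Ieps ε ν ≤ Ieps ε' ν := by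
  rw [Ieps_eq, Ieps_eq]
  exact ENNReal.toReal_mono (Jk_ne_top (lt_of_lt_of_le hε hεε') ν) (Jk_mono hε hεε' ν)

lemma Dg_le_Ieps {ε : ℝ} (hε : 0 < ε) (ν : Measure ℝ) [IsFiniteMeasure ν] :
    (Dg ν).toReal ≤ Ieps ε ν := by
  rw [Ieps_eq]
  exact ENNReal.toReal_mono (Jk_ne_top hε ν) (Dg_le_Jk ν)

lemma abs_eventually_le {u : ℕ → ℝ} {a δ : ℝ} (h : Tendsto u atTop (𝓝 a)) (hδ : 0 < δ) :
    ∀ᶠ n in atTop, |u n - a| ≤ δ := by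
  obtain ⟨N, hN⟩ := Metric.tendsto_atTop.mp h δ hδ
  exact eventually_atTop.mpr ⟨N, fun n hn => le_of_lt (by rw [← Real.dist_eq]; exact hN n hn)⟩

lemma main_unif (μs : ℕ → Measure ℝ) (μ : Measure ℝ)
    [hfs : ∀ n, IsFiniteMeasure (μs n)] [IsFiniteMeasure μ] (hW : WeakTendsto μs μ)
    (hD : Tendsto (fun n => (Dg (μs n)).toReal) atTop (𝓝 ((Dg μ).toReal)))
    {δ : ℝ} (hδ : 0 < δ) :
    ∀ᶠ n in atTop, ∀ ε ∈ Set.Ioc (0:ℝ) 1, |Ieps ε (μs n) - Ieps ε μ| ≤ δ := by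
  -- choose a small ε₀ where `Ieps ε₀ μ` is close to the atomic mass
  have htd := (ENNReal.tendsto_toReal (Dg_ne_top μ)).comp (tendsto_Jk_Dg μ)
  obtain ⟨k₀, hk₀⟩ := (htd.eventually_lt_const
    (show (Dg μ).toReal < (Dg μ).toReal + δ/4 by linarith)).exists
  set ε₀ : ℝ := 1/((k₀:ℝ)+1) with hε₀def
  have hε₀pos : 0 < ε₀ := by positivity
  have hε₀le1 : ε₀ ≤ 1 := by
    rw [hε₀def, div_le_one (by positivity)]
    have : (0:ℝ) ≤ (k₀:ℝ) := Nat.cast_nonneg _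
    linarith
  have hIε₀ : Ieps ε₀ μ ≤ (Dg μ).toReal + δ/4 := by
    rw [Ieps_eq]
    exact le_of_lt hk₀
  -- uniform Lipschitz constant
  set Cb : ℝ := ((μ Set.univ).toReal + 1)^2 with hCb
  have hCbpos : 0 < Cb := by positivity
  -- grid size
  obtain ⟨K, hK⟩ := exists_nat_gt (max 1 (8 * Cb / (ε₀ * δ)))
  have hK1 : (1:ℝ) < K := lt_of_le_of_lt (le_max_left _ _) hK
  have hKpos : (0:ℝ) < K := by linarith
  have hKbig : 8 * Cb / (ε₀ * δ) < K := lt_of_le_of_lt (le_max_right _ _) hK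
  have hKlip : Cb * ((1/K)/ε₀) ≤ δ/8 := by
    have h8 : 8 * Cb < K * (ε₀ * δ) := by
      rw [div_lt_iff₀ (by positivity)] at hKbig
      linarith
    have heq : Cb * ((1/K)/ε₀) = Cb/(K*ε₀) := by field_simp
    rw [heq, div_le_iff₀ (by positivity)]
    nlinarith
  -- eventualities
  have E1 := abs_eventually_le (tendsto_Ieps μs μ hW hε₀pos) (show (0:ℝ) < δ/4 by linarith)
  have E2 := abs_eventually_le hD (show (0:ℝ) < δ/4 by linarith)
  have E3 : ∀ᶠ n in atTop, ∀ i ∈ Finset.Icc 1 K,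
      |Ieps ((i:ℝ)/K) (μs n) - Ieps ((i:ℝ)/K) μ| ≤ δ/4 := by
    rw [eventually_all_finset]
    intro i hi
    have hi1 : 1 ≤ i := (Finset.mem_Icc.mp hi).1
    have hipos : (0:ℝ) < (i:ℝ)/K := by
      have : (1:ℝ) ≤ (i:ℝ) := by exact_mod_cast hi1
      positivity
    exact abs_eventually_le (tendsto_Ieps μs μ hW hipos) (show (0:ℝ) < δ/4 by linarith)
  have E4 : ∀ᶠ n in atTop, (μs n Set.univ).toReal ≤ (μ Set.univ).toReal + 1 :=
    ((tendsto_mass μs μ hW).eventually_lt_const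
      (show (μ Set.univ).toReal < (μ Set.univ).toReal + 1 by linarith)).mono
      fun n h => le_of_lt h
  filter_upwards [E1, E2, E3, E4] with n h1 h2 h3 h4
  rintro ε ⟨hε0, hε1⟩
  rcases le_or_gt ε ε₀ with hsmall | hbig
  · -- small ε regime
    have l1 : (Dg (μs n)).toReal ≤ Ieps ε (μs n) := Dg_le_Ieps hε0 _
    have l2 : Ieps ε (μs n) ≤ Ieps ε₀ (μs n) := Ieps_mono hε0 hsmall _
    have l3 : (Dg μ).toReal ≤ Ieps ε μ := Dg_le_Ieps hε0 _
    have l4 : Ieps ε μ ≤ Ieps ε₀ μ := Ieps_mono hε0 hsmall _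
    rw [abs_le] at h1 h2 ⊢
    constructor <;> linarith
  · -- grid regime
    set i : ℕ := ⌈ε * K⌉₊ with hi_def
    have hi1 : 1 ≤ i := by
      rw [hi_def]
      exact Nat.one_le_iff_ne_zero.mpr (Nat.pos_iff_ne_zero.mp
        (Nat.ceil_pos.mpr (by positivity)))
    have hiK : i ≤ K := Nat.ceil_le.mpr (by nlinarith)
    have hεi : ε ≤ (i:ℝ)/K := (le_div_iff₀ hKpos).mpr (Nat.le_ceil _)
    have hiε : (i:ℝ)/K ≤ ε + 1/K := by
      rw [div_le_iff₀ hKpos]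
      have := Nat.ceil_lt_add_one (show (0:ℝ) ≤ ε * K by positivity)
      have hexp : (ε + 1/K) * K = ε * K + 1 := by field_simp
      rw [hexp]
      exact_mod_cast le_of_lt this
    have habs : |ε - (i:ℝ)/K| ≤ 1/K := by
      rw [abs_le]
      constructor <;> linarith
    have hik_ge : ε₀ ≤ (i:ℝ)/K := le_trans (le_of_lt hbig) hεi
    have hmassn : ((μs n Set.univ).toReal)^2 ≤ Cb := by
      rw [hCb]
      have h0 : (0:ℝ) ≤ (μs n Set.univ).toReal := ENNReal.toReal_nonneg
      nlinarith
    have hmassμ : ((μ Set.univ).toReal)^2 ≤ Cb := by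
      rw [hCb]
      have h0 : (0:ℝ) ≤ (μ Set.univ).toReal := ENNReal.toReal_nonneg
      nlinarith
    have hd : |ε - (i:ℝ)/K|/ε₀ ≤ (1/K)/ε₀ := by gcongr
    have lipn : |Ieps ε (μs n) - Ieps ((i:ℝ)/K) (μs n)| ≤ δ/8 := by
      refine le_trans (Ieps_lip hε₀pos (le_of_lt hbig) hik_ge (μs n)) (le_trans ?_ hKlip)
      exact mul_le_mul hmassn hd (by positivity) (le_of_lt hCbpos)
    have lipμ : |Ieps ε μ - Ieps ((i:ℝ)/K) μ| ≤ δ/8 := by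
      refine le_trans (Ieps_lip hε₀pos (le_of_lt hbig) hik_ge μ) (le_trans ?_ hKlip)
      exact mul_le_mul hmassμ hd (by positivity) (le_of_lt hCbpos)
    have hgridbound := h3 i (Finset.mem_Icc.mpr ⟨hi1, hiK⟩)
    rw [abs_le] at lipn lipμ hgridbound ⊢
    constructor <;> linarith

/-- Ethier–Kurtz: if `Z : [0,∞) → M(ℝ)` is weakly continuous and
`t ↦ Z(t)*(ℝ)` is continuous, then `Z` is continuous in the weak atomic
topology: along every sequence `tₙ → t₀` one has `Z(tₙ) → Z(t₀)` weakly
and `sup_{0<ε≤1} |I_ε(Z(tₙ)) − I_ε(Z(t₀))| → 0`. -/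
theorem weakAtomic_continuous_of_weak_continuous_of_star_mass_continuous
    (Z : ℝ≥0 → Measure ℝ) (hfin : ∀ t, IsFiniteMeasure (Z t))
    (hweakcont : ∀ f : ℝ → ℝ, Continuous f → (∃ C, ∀ x, |f x| ≤ C) →
      Continuous (fun t => ∫ x, f x ∂(Z t)))
    (hstarcont : Continuous (fun t => (starMeasure (Z t) Set.univ).toReal)) :
    ∀ (t₀ : ℝ≥0) (ts : ℕ → ℝ≥0), Tendsto ts atTop (𝓝 t₀) →
      WeakTendsto (fun n => Z (ts n)) (Z t₀) ∧
        Tendsto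
          (fun n => ⨆ ε : Set.Ioc (0 : ℝ) 1, |Ieps ε (Z (ts n)) - Ieps ε (Z t₀)|)
          atTop (𝓝 0) := by
  intro t₀ ts hts
  haveI : ∀ n, IsFiniteMeasure (Z (ts n)) := fun n => hfin (ts n)
  haveI : IsFiniteMeasure (Z t₀) := hfin t₀
  have hW : WeakTendsto (fun n => Z (ts n)) (Z t₀) := by
    intro f hf hb
    exact ((hweakcont f hf hb).tendsto t₀).comp hts
  refine ⟨hW, ?_⟩
  have hD : Tendsto (fun n => (Dg (Z (ts n))).toReal) atTop (𝓝 ((Dg (Z t₀)).toReal)) := by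
    have hcomp := (hstarcont.tendsto t₀).comp hts
    simp only [Dg_eq_star]
    exact hcomp
  haveI : Nonempty (Set.Ioc (0:ℝ) 1) := ⟨⟨1, by norm_num⟩⟩
  refine tendsto_of_forall_eventually_abs_le fun δ hδ => ?_
  have key := main_unif (fun n => Z (ts n)) (Z t₀) hW hD hδ
  refine key.mono fun n hn => ?_
  have hbdd : BddAbove (Set.range fun ε : Set.Ioc (0:ℝ) 1 =>
      |Ieps ε (Z (ts n)) - Ieps ε (Z t₀)|) := by
    refine ⟨δ, ?_⟩
    rintro x ⟨ε, rfl⟩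
    exact hn ε ε.2
  have hsup_le : (⨆ ε : Set.Ioc (0:ℝ) 1, |Ieps ε (Z (ts n)) - Ieps ε (Z t₀)|) ≤ δ :=
    ciSup_le fun ε => hn ε ε.2
  have hnonneg : 0 ≤ ⨆ ε : Set.Ioc (0:ℝ) 1, |Ieps ε (Z (ts n)) - Ieps ε (Z t₀)| :=
    le_trans (abs_nonneg _) (le_ciSup hbdd ⟨1, by norm_num⟩)
  rw [sub_zero, abs_of_nonneg hnonneg]
  exact hsup_le
end

section
/- Let m ≥ 1 be an integer, μ a finite Borel measure on ℝ, f : ℝ^m → ℝ bounded Borel measurable, and x ∈ ℝ. Then the first variational derivative of F_{m,f}(μ) = ⟨μ^m, f⟩ at x exists and equals the stated sum: lim_{r→0+} (1/r)·[⟨(μ + r δ_x)^m, f⟩ − ⟨μ^m, f⟩] = Σ_{i=1}^m ∫_{ℝ^{m−1}} f(y₁,…,y_{i−1}, x, y_i,…, y_{m−1}) dμ^{⊗(m−1)}(y₁,…,y_{m−1}). -/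
open MeasureTheory Filter Topology
open scoped ENNReal

lemma vdmf_isFiniteMeasure (μ : Measure ℝ) [IsFiniteMeasure μ] (c : ℝ≥0∞) (hc : c ≠ ⊤) (x : ℝ) :
    IsFiniteMeasure (μ + c • Measure.dirac x) := by
  constructor
  simp only [Measure.add_apply, Measure.smul_apply, smul_eq_mul]
  exact ENNReal.add_lt_top.2 ⟨measure_lt_top μ _,
    ENNReal.mul_lt_top hc.lt_top (measure_lt_top _ _)⟩

lemma vdmf_expand (μ : Measure ℝ) [IsFiniteMeasure μ] (x : ℝ) (c : ℝ≥0∞) (hc : c ≠ ⊤)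
    (n : ℕ) :
    Measure.pi (fun _ : Fin n => μ + c • Measure.dirac x) =
      ∑ t : Finset (Fin n), c ^ t.card •
        Measure.pi (fun i => if i ∈ t then Measure.dirac x else μ) := by
  haveI := vdmf_isFiniteMeasure μ c hc x
  refine Measure.pi_eq fun s hs => ?_
  rw [Measure.finset_sum_apply]
  simp only [Measure.smul_apply, smul_eq_mul, Measure.add_apply]
  have h1 : ∀ i : Fin n, (μ (s i) + c * Measure.dirac x (s i))
      = c * Measure.dirac x (s i) + μ (s i) := fun i => add_comm _ _
  rw [Finset.prod_congr rfl fun i _ => h1 i, Fintype.prod_add]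
  refine Finset.sum_congr rfl fun t _ => ?_
  haveI : ∀ i : Fin n, SigmaFinite (if i ∈ t then Measure.dirac x else μ) := fun i => by
    split <;> infer_instance
  rw [Measure.pi_pi]
  have h2 : (∏ i : Fin n, (if i ∈ t then Measure.dirac x else μ) (s i))
      = (∏ i ∈ t, Measure.dirac x (s i)) * ∏ i ∈ tᶜ, μ (s i) := by
    rw [Finset.prod_congr rfl fun i _ =>
      (apply_ite (fun ν : Measure ℝ => ν (s i)) (i ∈ t) _ _ : _)]
    rw [Finset.prod_ite, Finset.filter_mem_eq_inter, Finset.univ_inter]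
    congr 1
    · congr 1
      ext i
      simp
  rw [h2, Finset.prod_mul_distrib, Finset.prod_const]
  ring

lemma vdmf_integrable {α : Type*} [MeasurableSpace α] {ν : Measure α} [IsFiniteMeasure ν]
    {f : α → ℝ} (hm : Measurable f) {C : ℝ} (hC : ∀ z, |f z| ≤ C) : Integrable f ν :=
  ⟨hm.aestronglyMeasurable, HasFiniteIntegral.of_bounded
    (C := C) (Filter.Eventually.of_forall fun z => by simpa [Real.norm_eq_abs] using hC z)⟩

lemma vdmf_single (μ : Measure ℝ) [IsFiniteMeasure μ] (x : ℝ) {n : ℕ}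
    (f : (Fin (n + 1) → ℝ) → ℝ) (hfmeas : Measurable f) (i : Fin (n + 1)) :
    (∫ z, f z ∂(Measure.pi fun j : Fin (n + 1) =>
        if j ∈ ({i} : Finset (Fin (n + 1))) then Measure.dirac x else μ))
      = ∫ y : Fin n → ℝ, f (i.insertNth x y) ∂(Measure.pi fun _ : Fin n => μ) := by
  set ν : (j : Fin (n + 1)) → Measure ℝ := fun j =>
    if j ∈ ({i} : Finset (Fin (n + 1))) then Measure.dirac x else μ with hν
  have hνi : ν i = Measure.dirac x := by simp [hν]
  have hνs : ∀ j : Fin n, ν (i.succAbove j) = μ := fun j => by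
    simp [hν, Fin.succAbove_ne i j]
  haveI : ∀ j, SigmaFinite (ν j) := fun j => by
    rw [hν]; dsimp only; split <;> infer_instance
  have hmp := (measurePreserving_piFinSuccAbove ν i).symm
    (MeasurableEquiv.piFinSuccAbove (fun _ : Fin (n + 1) => ℝ) i)
  have hcomp := hmp.integral_comp
    (MeasurableEquiv.piFinSuccAbove (fun _ : Fin (n + 1) => ℝ) i).symm.measurableEmbedding f
  rw [← hcomp]
  have hrw : (ν i).prod (Measure.pi fun j => ν (i.succAbove j))
      = ((Measure.dirac x).prod (Measure.pi fun _ : Fin n => μ)) := by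
    have h2 : (fun j => ν (i.succAbove j)) = fun _ : Fin n => μ := funext hνs
    rw [hνi, h2]
  rw [hrw, Measure.dirac_prod,
    integral_map (f := fun p : ℝ × (Fin n → ℝ) =>
        f ((MeasurableEquiv.piFinSuccAbove (fun _ : Fin (n + 1) => ℝ) i).symm p))
      measurable_prodMk_left.aemeasurable
      (hfmeas.comp (MeasurableEquiv.piFinSuccAbove _ i).symm.measurable).aestronglyMeasurable]
  simp [MeasurableEquiv.piFinSuccAbove, Fin.insertNthEquiv]

/-- The first variational derivative of `F_{m,f}(μ) = ⟨μ^m, f⟩` at `x` exists and equals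
`Σ_{i=1}^m ∫_{ℝ^{m−1}} f(y₁,…,y_{i−1}, x, y_i,…, y_{m−1}) dμ^{⊗(m−1)}`.
Here the integer `m ≥ 1` of the paper is written as `m + 1` with `m : ℕ`. -/
theorem variational_deriv_moment_functional
    (m : ℕ) (μ : Measure ℝ) (hfinμ : IsFiniteMeasure μ)
    (f : (Fin (m + 1) → ℝ) → ℝ) (hfmeas : Measurable f)
    (hfbdd : ∃ C, ∀ z, |f z| ≤ C) (x : ℝ) :
    Tendsto
      (fun r : ℝ => r⁻¹ *
        ((∫ z, f z ∂(Measure.pi fun _ : Fin (m + 1) =>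
            μ + ENNReal.ofReal r • Measure.dirac x)) -
          ∫ z, f z ∂(Measure.pi fun _ : Fin (m + 1) => μ)))
      (𝓝[>] (0 : ℝ))
      (𝓝 (∑ i : Fin (m + 1),
        ∫ y : Fin m → ℝ, f (i.insertNth x y) ∂(Measure.pi fun _ : Fin m => μ))) := by
  classical
  obtain ⟨C, hC⟩ := hfbdd
  set c : Finset (Fin (m + 1)) → ℝ := fun t =>
    ∫ z, f z ∂(Measure.pi fun i => if i ∈ t then Measure.dirac x else μ) with hc
  haveI : ∀ (t : Finset (Fin (m + 1))) (i : Fin (m + 1)),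
      IsFiniteMeasure (if i ∈ t then Measure.dirac x else μ) := fun t i => by
    split <;> infer_instance
  -- c ∅ equals the baseline integral
  have h0 : c ∅ = ∫ z, f z ∂(Measure.pi fun _ : Fin (m + 1) => μ) := by
    rw [hc]
    simp
  -- key polynomial expansion
  have key : ∀ r : ℝ, 0 ≤ r →
      (∫ z, f z ∂(Measure.pi fun _ : Fin (m + 1) =>
        μ + ENNReal.ofReal r • Measure.dirac x))
      = ∑ t : Finset (Fin (m + 1)), r ^ t.card * c t := by
    intro r hr
    rw [vdmf_expand μ x (ENNReal.ofReal r) ENNReal.ofReal_ne_top (m + 1)]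
    rw [integral_finset_sum_measure fun t _ =>
      (vdmf_integrable hfmeas hC).smul_measure (by
        exact ENNReal.pow_ne_top ENNReal.ofReal_ne_top)]
    refine Finset.sum_congr rfl fun t _ => ?_
    rw [integral_smul_measure, ENNReal.toReal_pow, ENNReal.toReal_ofReal hr,
      smul_eq_mul]
  -- the function equals a polynomial on Ioi 0
  have heq : ∀ r ∈ Set.Ioi (0 : ℝ),
      (r⁻¹ * ((∫ z, f z ∂(Measure.pi fun _ : Fin (m + 1) =>
            μ + ENNReal.ofReal r • Measure.dirac x)) -
          ∫ z, f z ∂(Measure.pi fun _ : Fin (m + 1) => μ)))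
      = ∑ t ∈ Finset.univ.erase (∅ : Finset (Fin (m + 1))),
          r ^ (t.card - 1) * c t := by
    intro r hr
    have hr0 : r ≠ 0 := ne_of_gt hr
    rw [key r hr.le, ← h0,
      ← Finset.add_sum_erase _ _ (Finset.mem_univ (∅ : Finset (Fin (m + 1))))]
    simp only [Finset.card_empty, pow_zero, one_mul, add_sub_cancel_left]
    rw [Finset.mul_sum]
    refine Finset.sum_congr rfl fun t ht => ?_
    have htne : t ≠ ∅ := (Finset.mem_erase.1 ht).1
    have hpos : 0 < t.card := Finset.card_pos.2 (Finset.nonempty_of_ne_empty htne)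
    have hcard : t.card = (t.card - 1) + 1 := by omega
    nth_rewrite 1 [hcard]
    rw [pow_succ, mul_comm (r ^ (t.card - 1)) r, ← mul_assoc, ← mul_assoc,
      inv_mul_cancel₀ hr0, one_mul]
  -- limit of the polynomial
  have hpoly : Tendsto (fun r : ℝ => ∑ t ∈ Finset.univ.erase (∅ : Finset (Fin (m + 1))),
      r ^ (t.card - 1) * c t) (𝓝[>] (0 : ℝ))
      (𝓝 (∑ t ∈ Finset.univ.erase (∅ : Finset (Fin (m + 1))),
        (0 : ℝ) ^ (t.card - 1) * c t)) := by
    refine Tendsto.mono_left ?_ nhdsWithin_le_nhds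
    exact tendsto_finset_sum _ fun t _ =>
      ((continuous_pow (t.card - 1)).tendsto 0).mul tendsto_const_nhds
  -- identify the limit value
  have hval : ∑ t ∈ Finset.univ.erase (∅ : Finset (Fin (m + 1))),
      (0 : ℝ) ^ (t.card - 1) * c t
      = ∑ i : Fin (m + 1), c {i} := by
    have h1 : ∀ t ∈ Finset.univ.erase (∅ : Finset (Fin (m + 1))),
        (0 : ℝ) ^ (t.card - 1) * c t = if t.card = 1 then c t else 0 := by
      intro t ht
      have htne : t ≠ ∅ := (Finset.mem_erase.1 ht).1
      have hpos : 0 < t.card := Finset.card_pos.2 (Finset.nonempty_of_ne_empty htne)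
      by_cases h1 : t.card = 1
      · simp [h1]
      · rw [zero_pow (by omega), zero_mul, if_neg h1]
    rw [Finset.sum_congr rfl h1, Finset.sum_ite, Finset.sum_const_zero, add_zero]
    have h2 : (Finset.univ.erase (∅ : Finset (Fin (m + 1)))).filter (fun t => t.card = 1)
        = Finset.univ.image (fun i : Fin (m + 1) => ({i} : Finset (Fin (m + 1)))) := by
      ext t
      simp only [Finset.mem_filter, Finset.mem_erase, Finset.mem_univ, true_and,
        Finset.mem_image, Finset.card_eq_one]
      constructor
      · rintro ⟨-, a, rfl⟩
        exact ⟨a, rfl⟩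
      · rintro ⟨a, rfl⟩
        exact ⟨by simp, a, rfl⟩
    rw [h2, Finset.sum_image fun a _ b _ h => Finset.singleton_injective h]
  -- final target equals ∑ c {i}
  have htarget : ∑ i : Fin (m + 1),
      ∫ y : Fin m → ℝ, f (i.insertNth x y) ∂(Measure.pi fun _ : Fin m => μ)
      = ∑ i : Fin (m + 1), c {i} :=
    Finset.sum_congr rfl fun i _ => (vdmf_single μ x f hfmeas i).symm
  rw [htarget, ← hval]
  exact (hpoly.congr' (Filter.eventuallyEq_of_mem self_mem_nhdsWithin
    fun r hr => (heq r hr).symm))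
end

section
/- Let m ≥ 2 be an integer, h ∈ L²(ℝ), ε ≥ 0, ρ(x) = ∫_ℝ h(y−x)h(y) dy, ρ_ε = ε² + ρ(0), and let μ be a Borel probability measure on ℝ. Let f : ℝ^m → ℝ be twice continuously differentiable with f and all its partial derivatives up to order two bounded. Define D¹(x) = Σ_{i=1}^m ∫_{ℝ^{m−1}} f(y₁,…,y_{i−1}, x, y_i,…, y_{m−1}) dμ^{⊗(m−1)} and D²(x, y) = Σ_{1≤i≠j≤m} ∫_{ℝ^{m−2}} f(z₁,…,z_m) dμ^{⊗(m−2)} (z_i = x, z_j = y, remaining coordinates the integration variables in order). Then D¹ is twice differentiable with (D¹)''(x) = Σ_i ∫ ∂²f/∂x_i² evaluated with x in slot i, D² has mixed partial ∂²D²/∂x∂y obtained by differentiating under the integral sign, and the diffusion part of the generator satisfies (1/2) ∫_ℝ ρ_ε (D¹)''(x) μ(dx) + (1/2) ∫_ℝ∫_ℝ ρ(x−y) ∂²D²/∂x∂y (x, y) μ(dx) μ(dy) = ⟨μ^m, G^m f⟩. -/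
open MeasureTheory Filter Topology

/-- The vector `(z₁,…,z_{m+2})` whose `i`-th coordinate is `x`, whose `j`-th
coordinate is `y`, and whose remaining `m` coordinates are `w 0, …, w (m-1)` in
increasing order of their index (for `i ≠ j`; the final `else 0` branch is
never reached in that case). -/
def insert2 {m : ℕ} (i j : Fin (m + 2)) (x y : ℝ) (w : Fin m → ℝ) :
    Fin (m + 2) → ℝ := fun k =>
  if k = i then x
  else if k = j then y
  else
    let idx := (Finset.univ.filter fun l : Fin (m + 2) => l < k ∧ l ≠ i ∧ l ≠ j).card
    if h : idx < m then w ⟨idx, h⟩ else 0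

/-- The partial derivative `∂f/∂x_i` of a function `f : ℝ^n → ℝ`. -/
noncomputable def pderiv' {n : ℕ} (i : Fin n) (f : (Fin n → ℝ) → ℝ) :
    (Fin n → ℝ) → ℝ :=
  fun x => deriv (fun t => f (Function.update x i t)) (x i)

/-- The differential operator
`G^m f = (1/2) Σ_i ρ_ε ∂²f/∂x_i² + (1/2) Σ_{i≠j} ρ(x_i−x_j) ∂²f/∂x_i∂x_j`. -/
noncomputable def Gm {n : ℕ} (ρ : ℝ → ℝ) (ρε : ℝ) (f : (Fin n → ℝ) → ℝ) :
    (Fin n → ℝ) → ℝ := fun z =>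
  1 / 2 * ∑ i : Fin n, ρε * pderiv' i (pderiv' i f) z +
    1 / 2 * ∑ i : Fin n, ∑ j ∈ Finset.univ \ {i},
      ρ (z i - z j) * pderiv' i (pderiv' j f) z

noncomputable def Pd {n : ℕ} (i : Fin n) (f : (Fin n → ℝ) → ℝ) : (Fin n → ℝ) → ℝ :=
  fun z => fderiv ℝ f z (Pi.single i 1)

lemma hasDerivAt_comp_update {n : ℕ} {f : (Fin n → ℝ) → ℝ} (hf : Differentiable ℝ f)
    (i : Fin n) (z : Fin n → ℝ) (t : ℝ) :
    HasDerivAt (fun s => f (Function.update z i s)) (Pd i f (Function.update z i t)) t := by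
  have hu : HasDerivAt (fun s : ℝ => Function.update z i s) (Pi.single i 1) t := by
    have h : (fun s : ℝ => Function.update z i s)
        = fun s : ℝ => Function.update z i 0 + s • (Pi.single i 1 : Fin n → ℝ) := by
      funext s; ext k
      by_cases hk : k = i
      · subst hk; simp
      · simp [Function.update_apply, hk, Pi.single_apply]
    rw [h]
    simpa using ((hasDerivAt_id t).smul_const (Pi.single i 1 : Fin n → ℝ)).const_add
      (Function.update z i 0)
  exact (hf _).hasFDerivAt.comp_hasDerivAt t hu

lemma pderiv'_eq {n : ℕ} {f : (Fin n → ℝ) → ℝ} (hf : Differentiable ℝ f) (i : Fin n) :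
    pderiv' i f = Pd i f := by
  funext z
  have := hasDerivAt_comp_update hf i z (z i)
  rw [Function.update_eq_self] at this
  exact this.deriv

lemma contDiff_Pd {n : ℕ} {f : (Fin n → ℝ) → ℝ} (hf : ContDiff ℝ 2 f) (i : Fin n) :
    ContDiff ℝ 1 (Pd i f) := by
  have := (ContinuousLinearMap.apply ℝ ℝ (Pi.single i 1)).contDiff.comp
    (hf.fderiv_right (m := 1) (by norm_num))
  exact (by simpa [Function.comp_def] using this : ContDiff ℝ 1 fun x => fderiv ℝ f x (Pi.single i 1))

lemma pderiv'_pderiv' {n : ℕ} {f : (Fin n → ℝ) → ℝ} (hf : ContDiff ℝ 2 f) (i j : Fin n) :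
    pderiv' i (pderiv' j f) = Pd i (Pd j f) := by
  rw [pderiv'_eq (hf.differentiable (by norm_num)) j,
    pderiv'_eq ((contDiff_Pd hf j).differentiable one_ne_zero) i]

lemma norm_Pd_le {n : ℕ} (f : (Fin n → ℝ) → ℝ) (i : Fin n) (z : Fin n → ℝ) :
    ‖Pd i f z‖ ≤ ‖iteratedFDeriv ℝ 1 f z‖ := by
  have h1 : ‖fderiv ℝ f z‖ = ‖iteratedFDeriv ℝ 1 f z‖ := by
    rw [← norm_iteratedFDeriv_fderiv (n := 0), norm_iteratedFDeriv_zero]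
  calc ‖fderiv ℝ f z (Pi.single i 1)‖ ≤ ‖fderiv ℝ f z‖ * ‖(Pi.single i 1 : Fin n → ℝ)‖ :=
        (fderiv ℝ f z).le_opNorm _
    _ = ‖iteratedFDeriv ℝ 1 f z‖ := by rw [Pi.norm_single, norm_one, mul_one, h1]

lemma norm_PdPd_le {n : ℕ} {f : (Fin n → ℝ) → ℝ} (hf : ContDiff ℝ 2 f) (i j : Fin n)
    (z : Fin n → ℝ) : ‖Pd i (Pd j f) z‖ ≤ ‖iteratedFDeriv ℝ 2 f z‖ := by
  have hg : Differentiable ℝ (fderiv ℝ f) :=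
    (hf.fderiv_right (m := 1) (by norm_num)).differentiable one_ne_zero
  have hPd : fderiv ℝ (Pd j f) z =
      (ContinuousLinearMap.apply ℝ ℝ (Pi.single j 1)).comp (fderiv ℝ (fderiv ℝ f) z) := by
    have : Pd j f = fun y => (ContinuousLinearMap.apply ℝ ℝ (Pi.single j 1)) (fderiv ℝ f y) := rfl
    rw [this]
    exact (((ContinuousLinearMap.apply ℝ ℝ (Pi.single j 1)).hasFDerivAt).comp z
      (hg z).hasFDerivAt).fderiv
  have h2 : ‖fderiv ℝ (fderiv ℝ f) z‖ = ‖iteratedFDeriv ℝ 2 f z‖ := by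
    rw [← norm_iteratedFDeriv_fderiv (n := 1), ← norm_iteratedFDeriv_fderiv (n := 0),
      norm_iteratedFDeriv_zero]
  have : Pd i (Pd j f) z = (fderiv ℝ (fderiv ℝ f) z (Pi.single i 1)) (Pi.single j 1) := by
    show fderiv ℝ (Pd j f) z (Pi.single i 1) = _
    rw [hPd]; rfl
  rw [this]
  calc ‖(fderiv ℝ (fderiv ℝ f) z (Pi.single i 1)) (Pi.single j 1)‖
      ≤ ‖fderiv ℝ (fderiv ℝ f) z (Pi.single i 1)‖ * ‖(Pi.single j 1 : Fin n → ℝ)‖ :=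
        ContinuousLinearMap.le_opNorm _ _
    _ ≤ (‖fderiv ℝ (fderiv ℝ f) z‖ * ‖(Pi.single i 1 : Fin n → ℝ)‖) * ‖(Pi.single j 1 : Fin n → ℝ)‖ := by
        gcongr; exact ContinuousLinearMap.le_opNorm _ _
    _ = ‖iteratedFDeriv ℝ 2 f z‖ := by simp [Pi.norm_single, h2]

lemma key_hasDerivAt {n : ℕ} {α : Type*} [MeasurableSpace α] {ν : Measure α} [IsFiniteMeasure ν]
    (i : Fin n) {g : (Fin n → ℝ) → ℝ} (hg : ContDiff ℝ 1 g) {C₀ C₁ : ℝ}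
    (hg0 : ∀ z, ‖g z‖ ≤ C₀) (hg1 : ∀ z, ‖Pd i g z‖ ≤ C₁)
    {u : α → Fin n → ℝ} (hu : Measurable u) (x₀ : ℝ) :
    HasDerivAt (fun x => ∫ a, g (Function.update (u a) i x) ∂ν)
      (∫ a, Pd i g (Function.update (u a) i x₀) ∂ν) x₀ := by
  have hgd : Differentiable ℝ g := hg.differentiable one_ne_zero
  have hcont : ∀ x : ℝ, Continuous fun z : Fin n → ℝ => Function.update z i x :=
    fun x => continuous_id.update i continuous_const
  have hPc : Continuous (Pd i g) :=
    (ContinuousLinearMap.apply ℝ ℝ (Pi.single i 1)).continuous.comp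
      (hg.continuous_fderiv one_ne_zero)
  refine (hasDerivAt_integral_of_dominated_loc_of_deriv_le
    (F := fun x a => g (Function.update (u a) i x))
    (F' := fun x a => Pd i g (Function.update (u a) i x)) (bound := fun _ => C₁)
    (Metric.ball_mem_nhds x₀ one_pos) ?_ ?_ ?_ ?_ ?_ ?_).2
  · exact Eventually.of_forall fun x =>
      ((hg.continuous.comp (hcont x)).measurable.comp hu).aestronglyMeasurable
  · exact ⟨((hg.continuous.comp (hcont x₀)).measurable.comp hu).aestronglyMeasurable,
      HasFiniteIntegral.of_bounded (C := C₀) (Eventually.of_forall fun a => hg0 _)⟩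
  · exact ((hPc.comp (hcont x₀)).measurable.comp hu).aestronglyMeasurable
  · exact Eventually.of_forall fun a x _ => hg1 _
  · exact integrable_const _
  · exact Eventually.of_forall fun a x _ => by
      simpa [Function.update_idem] using hasDerivAt_comp_update hgd i (Function.update (u a) i x) x

namespace MyAux
variable {m : ℕ}

def Sc (i j k : Fin (m + 2)) : ℕ :=
  (Finset.univ.filter fun l : Fin (m + 2) => l < k ∧ l ≠ i ∧ l ≠ j).card

lemma Sc_lt {i j k : Fin (m + 2)} (hij : i ≠ j) (hki : k ≠ i) (hkj : k ≠ j) : Sc i j k < m := by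
  have hsub : (Finset.univ.filter fun l : Fin (m + 2) => l < k ∧ l ≠ i ∧ l ≠ j)
      ⊆ Finset.univ \ {i, j, k} := by
    intro l hl
    simp only [Finset.mem_filter] at hl
    simp only [Finset.mem_sdiff, Finset.mem_univ, true_and, Finset.mem_insert,
      Finset.mem_singleton]
    push_neg
    exact ⟨hl.2.2.1, hl.2.2.2, ne_of_lt hl.2.1⟩
  have h3 : ({i, j, k} : Finset (Fin (m + 2))).card = 3 :=
    Finset.card_eq_three.mpr ⟨i, j, k, hij, Ne.symm hki, Ne.symm hkj, rfl⟩
  have hle := Finset.card_le_card hsub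
  have hcard : (Finset.univ \ ({i, j, k} : Finset (Fin (m + 2)))).card = (m + 2) - 3 := by
    rw [Finset.card_sdiff_of_subset (Finset.subset_univ _), h3, Finset.card_univ, Fintype.card_fin]
  have h32 : 3 ≤ m + 2 := by
    have := Finset.card_le_univ ({i, j, k} : Finset (Fin (m + 2)))
    simpa [h3] using this
  unfold Sc
  omega

lemma Sc_lt_Sc {i j k₁ k₂ : Fin (m + 2)} (h12 : k₁ < k₂) (h1i : k₁ ≠ i) (h1j : k₁ ≠ j) :
    Sc i j k₁ < Sc i j k₂ := by
  apply Finset.card_lt_card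
  constructor
  · intro l hl
    simp only [Finset.mem_filter] at hl ⊢
    exact ⟨hl.1, lt_trans hl.2.1 h12, hl.2.2⟩
  · intro hcon
    have hk1 : k₁ ∈ Finset.univ.filter fun l : Fin (m + 2) => l < k₂ ∧ l ≠ i ∧ l ≠ j := by
      simp [h12, h1i, h1j]
    have := hcon hk1
    simp only [Finset.mem_filter] at this
    exact absurd this.2.1 (lt_irrefl k₁)

def sfun (i j : Fin (m + 2)) (hij : i ≠ j) : Fin (m + 2) → Fin (m + 2) := fun k =>
  if h1 : k = i then 0
  else if h2 : k = j then 1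
  else ⟨Sc i j k + 2, by have := Sc_lt hij h1 h2; omega⟩

lemma sfun_inj (i j : Fin (m + 2)) (hij : i ≠ j) : Function.Injective (sfun i j hij) := by
  have hval : ∀ a : Fin (m + 2), (sfun i j hij a).val =
      if a = i then 0 else if a = j then 1 else Sc i j a + 2 := by
    intro a
    by_cases h1 : a = i
    · simp [sfun, h1]
    · by_cases h2 : a = j
      · simp [sfun, h1, h2, Fin.val_one, Ne.symm hij]
      · simp [sfun, h1, h2]
  intro a b hab
  have hv := congrArg Fin.val hab
  rw [hval a, hval b] at hv
  by_cases hai : a = i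
  · by_cases hbi : b = i
    · rw [hai, hbi]
    · exfalso
      rw [if_pos hai, if_neg hbi] at hv
      by_cases hbj : b = j
      · rw [if_pos hbj] at hv; omega
      · rw [if_neg hbj] at hv; omega
  · by_cases haj : a = j
    · by_cases hbj : b = j
      · rw [haj, hbj]
      · exfalso
        rw [if_neg hai, if_pos haj] at hv
        by_cases hbi : b = i
        · rw [if_pos hbi] at hv; omega
        · rw [if_neg hbi, if_neg hbj] at hv; omega
    · by_cases hbi : b = i
      · exfalso; rw [if_neg hai, if_neg haj, if_pos hbi] at hv; omega
      · by_cases hbj : b = j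
        · exfalso; rw [if_neg hai, if_neg haj, if_neg hbi, if_pos hbj] at hv; omega
        · rw [if_neg hai, if_neg haj, if_neg hbi, if_neg hbj] at hv
          have hSc : Sc i j a = Sc i j b := by omega
          rcases lt_trichotomy a b with h | h | h
          · exact absurd hSc (Nat.ne_of_lt (Sc_lt_Sc h hai haj))
          · exact h
          · exact absurd hSc.symm (Nat.ne_of_lt (Sc_lt_Sc h hbi hbj))

noncomputable def sperm (i j : Fin (m + 2)) (hij : i ≠ j) : Equiv.Perm (Fin (m + 2)) :=
  Equiv.ofBijective (sfun i j hij)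
    ((Finite.injective_iff_bijective).mp (sfun_inj i j hij))

lemma insert2_eq_cons (i j : Fin (m + 2)) (hij : i ≠ j) (x y : ℝ) (w : Fin m → ℝ) :
    insert2 i j x y w = Fin.cons x (Fin.cons y w) ∘ sfun i j hij := by
  funext k
  simp only [Function.comp_apply]
  have hji : ¬ j = i := Ne.symm hij
  by_cases h1 : k = i
  · simp [insert2, h1, sfun]
  · by_cases h2 : k = j
    · have hs : sfun i j hij k = 1 := by simp only [sfun]; rw [dif_neg h1, dif_pos h2]
      have h10 : (1 : Fin (m + 2)) = Fin.succ 0 := by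
        apply Fin.ext; simp [Fin.val_one]
      rw [hs, h10, Fin.cons_succ, Fin.cons_zero]
      simp [insert2, h1, h2, hji]
    · have hlt : Sc i j k < m := Sc_lt hij h1 h2
      have hs : sfun i j hij k = ((⟨Sc i j k, hlt⟩ : Fin m).succ).succ := by
        apply Fin.ext
        simp only [sfun]
        rw [dif_neg h1, dif_neg h2]
        simp
      rw [hs, Fin.cons_succ, Fin.cons_succ]
      show (if k = i then x else if k = j then y else if h : Sc i j k < m
        then w ⟨Sc i j k, h⟩ else 0) = _
      rw [if_neg h1, if_neg h2, dif_pos hlt]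

lemma integrable_of_bdd {α : Type*} [MeasurableSpace α] {ν : Measure α} [IsFiniteMeasure ν]
    {g : α → ℝ} (hm : AEStronglyMeasurable g ν) (C : ℝ) (hb : ∀ a, ‖g a‖ ≤ C) :
    Integrable g ν :=
  ⟨hm, HasFiniteIntegral.of_bounded (C := C) (Filter.Eventually.of_forall hb)⟩

lemma integral_insertNth {m : ℕ} (μ : Measure ℝ) [IsProbabilityMeasure μ] (i : Fin (m + 1))
    (G : (Fin (m + 1) → ℝ) → ℝ) (hGm : StronglyMeasurable G)
    (C : ℝ) (hGb : ∀ z, ‖G z‖ ≤ C) :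
    ∫ x, ∫ w, G (i.insertNth x w) ∂(Measure.pi fun _ : Fin m => μ) ∂μ
      = ∫ z, G z ∂(Measure.pi fun _ : Fin (m + 1) => μ) := by
  set E := MeasurableEquiv.piFinSuccAbove (fun _ : Fin (m + 1) => ℝ) i with hE
  have MP : MeasurePreserving E.symm
      (μ.prod (Measure.pi fun _ : Fin m => μ)) (Measure.pi fun _ : Fin (m + 1) => μ) :=
    MeasurePreserving.symm _ (measurePreserving_piFinSuccAbove (fun _ : Fin (m + 1) => μ) i)
  rw [← MP.integral_comp (MeasurableEquiv.measurableEmbedding _) G]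
  have hint : Integrable (fun p : ℝ × (Fin m → ℝ) => G (E.symm p))
      (μ.prod (Measure.pi fun _ : Fin m => μ)) :=
    integrable_of_bdd ((hGm.comp_measurable E.symm.measurable).aestronglyMeasurable) C
      (fun a => hGb _)
  rw [MeasureTheory.integral_prod _ hint]
  refine integral_congr_ae (Filter.Eventually.of_forall fun a => ?_)
  refine integral_congr_ae (Filter.Eventually.of_forall fun b => ?_)
  simp only [hE, MeasurableEquiv.piFinSuccAbove_symm_apply]
  rfl

lemma integral_insert2 {m : ℕ} (μ : Measure ℝ) [IsProbabilityMeasure μ]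
    (i j : Fin (m + 2)) (hij : i ≠ j) (G : (Fin (m + 2) → ℝ) → ℝ)
    (hGm : StronglyMeasurable G) (C : ℝ) (hGb : ∀ z, ‖G z‖ ≤ C) :
    ∫ x, ∫ y, ∫ w, G (insert2 i j x y w) ∂(Measure.pi fun _ : Fin m => μ) ∂μ ∂μ
      = ∫ z, G z ∂(Measure.pi fun _ : Fin (m + 2) => μ) := by
  set π := (Measure.pi fun _ : Fin (m + 2) => μ) with hπ
  set π1 := (Measure.pi fun _ : Fin (m + 1) => μ) with hπ1
  set π2 := (Measure.pi fun _ : Fin m => μ) with hπ2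
  -- the permutation step
  set e := (sperm i j hij).symm with he
  have MPe : MeasurePreserving
      (MeasurableEquiv.piCongrLeft (fun _ : Fin (m + 2) => ℝ) e) π π :=
    measurePreserving_piCongrLeft (fun _ : Fin (m + 2) => μ) e
  have hEeq : ∀ z : Fin (m + 2) → ℝ,
      (MeasurableEquiv.piCongrLeft (fun _ : Fin (m + 2) => ℝ) e) z = z ∘ sfun i j hij := by
    intro z; funext k
    have h := MeasurableEquiv.piCongrLeft_apply_apply (β := fun _ : Fin (m + 2) => ℝ) e z
      (e.symm k)
    rw [Equiv.apply_symm_apply] at h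
    rw [h]
    show z ((sperm i j hij) k) = _
    rfl
  set H := fun z : Fin (m + 2) → ℝ => G (z ∘ sfun i j hij) with hH
  have hHsm : StronglyMeasurable H :=
    hGm.comp_measurable (measurable_pi_iff.mpr fun k => measurable_pi_apply _)
  have hGH : ∫ z, G z ∂π = ∫ z, H z ∂π := by
    rw [← MPe.integral_comp (MeasurableEquiv.measurableEmbedding _) G]
    refine integral_congr_ae (Filter.Eventually.of_forall fun z => ?_)
    show G ((MeasurableEquiv.piCongrLeft (fun _ : Fin (m + 2) => ℝ) e) z) = H z
    rw [hEeq z]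
  -- first decomposition
  set E0 := MeasurableEquiv.piFinSuccAbove (fun _ : Fin (m + 2) => ℝ) 0 with hE0
  have MP0 : MeasurePreserving E0.symm (μ.prod π1) π :=
    MeasurePreserving.symm _ (measurePreserving_piFinSuccAbove (fun _ : Fin (m + 2) => μ) 0)
  have hint0 : Integrable (fun p : ℝ × (Fin (m + 1) → ℝ) => H (E0.symm p)) (μ.prod π1) :=
    integrable_of_bdd ((hHsm.comp_measurable E0.symm.measurable).aestronglyMeasurable) C
      (fun a => hGb _)
  have h0 : ∫ z, H z ∂π = ∫ x, ∫ v, H (Fin.cons x v) ∂π1 ∂μ := by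
    rw [← MP0.integral_comp (MeasurableEquiv.measurableEmbedding _) H,
      MeasureTheory.integral_prod _ hint0]
    refine integral_congr_ae (Filter.Eventually.of_forall fun a => ?_)
    refine integral_congr_ae (Filter.Eventually.of_forall fun b => ?_)
    simp only [hE0, MeasurableEquiv.piFinSuccAbove_symm_apply, Fin.insertNthEquiv_zero]
    rfl
  -- second decomposition (for each x)
  set E1 := MeasurableEquiv.piFinSuccAbove (fun _ : Fin (m + 1) => ℝ) 0 with hE1
  have MP1 : MeasurePreserving E1.symm (μ.prod π2) π1 :=
    MeasurePreserving.symm _ (measurePreserving_piFinSuccAbove (fun _ : Fin (m + 1) => μ) 0)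
  have h1 : ∀ x : ℝ, ∫ v, H (Fin.cons x v) ∂π1 = ∫ y, ∫ w, H (Fin.cons x (Fin.cons y w)) ∂π2 ∂μ := by
    intro x
    have hK : StronglyMeasurable fun v : Fin (m + 1) → ℝ => H (Fin.cons x v) :=
      hHsm.comp_measurable (measurable_pi_iff.mpr fun k => by
        refine Fin.cases ?_ ?_ k
        · exact measurable_const
        · intro q; simpa [Fin.cons_succ] using measurable_pi_apply q)
    have hint1 : Integrable (fun p : ℝ × (Fin m → ℝ) => H (Fin.cons x (E1.symm p))) (μ.prod π2) :=
      integrable_of_bdd (((hK.comp_measurable E1.symm.measurable)).aestronglyMeasurable) C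
        (fun a => hGb _)
    rw [← MP1.integral_comp (MeasurableEquiv.measurableEmbedding _)
      (fun v => H (Fin.cons x v)), MeasureTheory.integral_prod _ hint1]
    refine integral_congr_ae (Filter.Eventually.of_forall fun a => ?_)
    refine integral_congr_ae (Filter.Eventually.of_forall fun b => ?_)
    simp only [hE1, MeasurableEquiv.piFinSuccAbove_symm_apply, Fin.insertNthEquiv_zero]
    rfl
  have h2 : ∀ x y : ℝ, ∀ w : Fin m → ℝ, H (Fin.cons x (Fin.cons y w)) = G (insert2 i j x y w) := by
    intro x y w
    rw [hH, insert2_eq_cons i j hij]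
  calc ∫ x, ∫ y, ∫ w, G (insert2 i j x y w) ∂π2 ∂μ ∂μ
      = ∫ x, ∫ y, ∫ w, H (Fin.cons x (Fin.cons y w)) ∂π2 ∂μ ∂μ := by
        simp only [h2]
    _ = ∫ x, ∫ v, H (Fin.cons x v) ∂π1 ∂μ := by
        refine integral_congr_ae (Filter.Eventually.of_forall fun x => ?_)
        exact (h1 x).symm
    _ = ∫ z, H z ∂π := h0.symm
    _ = ∫ z, G z ∂π := hGH.symm

lemma continuous_Pd {n : ℕ} {f : (Fin n → ℝ) → ℝ} (hf : ContDiff ℝ 1 f) (i : Fin n) :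
    Continuous (Pd i f) :=
  (ContinuousLinearMap.apply ℝ ℝ (Pi.single i 1)).continuous.comp
    (hf.continuous_fderiv one_ne_zero)

lemma measurable_insertNth_pair {n : ℕ} (i : Fin (n + 1)) :
    Measurable fun p : ℝ × (Fin n → ℝ) => (i.insertNth p.1 p.2 : Fin (n + 1) → ℝ) := by
  have h : (fun p : ℝ × (Fin n → ℝ) => (i.insertNth p.1 p.2 : Fin (n + 1) → ℝ))
      = fun p => (MeasurableEquiv.piFinSuccAbove (fun _ : Fin (n + 1) => ℝ) i).symm p := by
    funext p; rfl
  rw [h]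
  exact (MeasurableEquiv.piFinSuccAbove (fun _ : Fin (n + 1) => ℝ) i).symm.measurable

lemma measurable_insertNth {n : ℕ} (i : Fin (n + 1)) (x : ℝ) :
    Measurable fun w : Fin n → ℝ => (i.insertNth x w : Fin (n + 1) → ℝ) :=
  (measurable_insertNth_pair i).comp (measurable_const.prodMk measurable_id)

lemma measurable_insert2_triple {m : ℕ} (i j : Fin (m + 2)) (hij : i ≠ j) :
    Measurable fun p : (ℝ × ℝ) × (Fin m → ℝ) => insert2 i j p.1.1 p.1.2 p.2 := by
  have h : (fun p : (ℝ × ℝ) × (Fin m → ℝ) => insert2 i j p.1.1 p.1.2 p.2)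
      = fun p => Fin.cons p.1.1 (Fin.cons p.1.2 p.2) ∘ sfun i j hij := by
    funext p; rw [insert2_eq_cons i j hij]
  rw [h]
  apply measurable_pi_iff.mpr; intro k
  simp only [Function.comp_apply]
  generalize sfun i j hij k = q
  refine Fin.cases ?_ (fun q' => ?_) q
  · simpa using measurable_fst.fst
  · simp only [Fin.cons_succ]
    refine Fin.cases ?_ (fun q'' => ?_) q'
    · simpa using measurable_fst.snd
    · simp only [Fin.cons_succ]; exact (measurable_pi_apply q'').comp measurable_snd

lemma measurable_insert2w {m : ℕ} (i j : Fin (m + 2)) (hij : i ≠ j) (x y : ℝ) :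
    Measurable fun w : Fin m → ℝ => insert2 i j x y w :=
  (measurable_insert2_triple i j hij).comp
    ((measurable_const.prodMk measurable_const).prodMk measurable_id)

lemma update_insert2_i {m : ℕ} (i j : Fin (m + 2)) (x y t : ℝ) (w : Fin m → ℝ) :
    Function.update (insert2 i j x y w) i t = insert2 i j t y w := by
  funext k
  by_cases hk : k = i
  · subst hk; rw [Function.update_self]; simp [insert2]
    try simp
  · rw [Function.update_of_ne hk]; simp only [insert2, if_neg hk]

lemma update_insert2_j {m : ℕ} (i j : Fin (m + 2)) (hji : j ≠ i) (x y t : ℝ) (w : Fin m → ℝ) :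
    Function.update (insert2 i j x y w) j t = insert2 i j x t w := by
  funext k
  by_cases hk : k = j
  · subst hk; rw [Function.update_self]
    simp [insert2, hji]
  · rw [Function.update_of_ne hk]
    by_cases hki : k = i
    · simp only [insert2, if_pos hki]
    · simp only [insert2, if_neg hki, if_neg hk]

lemma insert2_apply_i {m : ℕ} (i j : Fin (m + 2)) (x y : ℝ) (w : Fin m → ℝ) :
    insert2 i j x y w i = x := by simp [insert2]

lemma insert2_apply_j {m : ℕ} (i j : Fin (m + 2)) (hji : j ≠ i) (x y : ℝ) (w : Fin m → ℝ) :
    insert2 i j x y w j = y := by simp [insert2, hji]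

lemma norm_integral_le_of_bdd {α : Type*} [MeasurableSpace α] {ν : Measure α}
    [IsProbabilityMeasure ν] (g : α → ℝ) (C : ℝ) (hb : ∀ a, ‖g a‖ ≤ C) :
    ‖∫ a, g a ∂ν‖ ≤ C := by
  have := norm_integral_le_of_norm_le_const (μ := ν) (f := g) (C := C)
    (Filter.Eventually.of_forall hb)
  simpa using this

end MyAux


open MyAux

/-- The diffusion part of the generator applied to `F_{m,f}(μ) = ⟨μ^m, f⟩`:
with `D¹` and `D²` the first and second variational derivatives, `D¹` is twice
differentiable with second derivative obtained by differentiating under the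
integral, the mixed partial `∂²D²/∂x∂y` is obtained by differentiating under
the integral, and
`(1/2)∫ ρ_ε (D¹)''(x) μ(dx) + (1/2)∬ ρ(x−y) ∂²D²/∂x∂y (x,y) μ(dx)μ(dy) = ⟨μ^m, G^m f⟩`.
Here the integer `m ≥ 2` of the paper is written as `m + 2`. -/
theorem diffusion_generator_identity
    (m : ℕ) (h : ℝ → ℝ) (hL2 : MemLp h 2 (volume : Measure ℝ))
    (ε : ℝ) (hε : 0 ≤ ε) (ρ : ℝ → ℝ)
    (hρ : ∀ x, ρ x = ∫ y, h (y - x) * h y) (ρε : ℝ) (hρε : ρε = ε ^ 2 + ρ 0)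
    (μ : Measure ℝ) (hprob : IsProbabilityMeasure μ)
    (f : (Fin (m + 2) → ℝ) → ℝ) (hf : ContDiff ℝ 2 f)
    (hfbdd : ∀ k : ℕ, k ≤ 2 → ∃ C, ∀ z, ‖iteratedFDeriv ℝ k f z‖ ≤ C)
    (D1 : ℝ → ℝ) (D2 : ℝ → ℝ → ℝ)
    (hD1 : ∀ x : ℝ, D1 x =
      ∑ i : Fin (m + 2),
        ∫ w : Fin (m + 1) → ℝ, f (i.insertNth x w)
          ∂(Measure.pi fun _ : Fin (m + 1) => μ))
    (hD2 : ∀ x y : ℝ, D2 x y =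
      ∑ i : Fin (m + 2), ∑ j ∈ Finset.univ \ {i},
        ∫ w : Fin m → ℝ, f (insert2 i j x y w)
          ∂(Measure.pi fun _ : Fin m => μ)) :
    (∀ x : ℝ, DifferentiableAt ℝ D1 x ∧ DifferentiableAt ℝ (deriv D1) x ∧
      deriv (deriv D1) x =
        ∑ i : Fin (m + 2),
          ∫ w : Fin (m + 1) → ℝ, pderiv' i (pderiv' i f) (i.insertNth x w)
            ∂(Measure.pi fun _ : Fin (m + 1) => μ)) ∧
    (∀ x y : ℝ, deriv (fun a => deriv (fun b => D2 a b) y) x =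
      ∑ i : Fin (m + 2), ∑ j ∈ Finset.univ \ {i},
        ∫ w : Fin m → ℝ, pderiv' i (pderiv' j f) (insert2 i j x y w)
          ∂(Measure.pi fun _ : Fin m => μ)) ∧
    1 / 2 * (∫ x, ρε * deriv (deriv D1) x ∂μ) +
        1 / 2 * (∫ x, ∫ y,
          ρ (x - y) * deriv (fun a => deriv (fun b => D2 a b) y) x ∂μ ∂μ) =
      ∫ z, Gm ρ ρε f z ∂(Measure.pi fun _ : Fin (m + 2) => μ) := by
  classical
  have hf1 : ContDiff ℝ 1 f := hf.of_le (by norm_num)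
  obtain ⟨C0, hC0⟩ := hfbdd 0 (by norm_num)
  obtain ⟨C1, hC1⟩ := hfbdd 1 (by norm_num)
  obtain ⟨C2, hC2⟩ := hfbdd 2 le_rfl
  have hf0 : ∀ z, ‖f z‖ ≤ C0 := fun z => by
    have := hC0 z; rwa [norm_iteratedFDeriv_zero] at this
  have hPb : ∀ (i : Fin (m + 2)) z, ‖Pd i f z‖ ≤ C1 := fun i z =>
    (norm_Pd_le f i z).trans (hC1 z)
  have hQb : ∀ (i j : Fin (m + 2)) z, ‖Pd i (Pd j f) z‖ ≤ C2 := fun i j z =>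
    (norm_PdPd_le hf i j z).trans (hC2 z)
  have hPdc : ∀ i : Fin (m + 2), ContDiff ℝ 1 (Pd i f) := fun i => contDiff_Pd hf i
  have hQc : ∀ i j : Fin (m + 2), Continuous (Pd i (Pd j f)) := fun i j =>
    continuous_Pd (hPdc j) i
  have hne : ∀ {i j : Fin (m + 2)}, j ∈ Finset.univ \ {i} → j ≠ i := by
    intro i j hj
    simpa using (Finset.mem_sdiff.mp hj).2
  have key1 : ∀ (i : Fin (m + 2)) (x : ℝ),
      HasDerivAt (fun x' => ∫ w, f (i.insertNth x' w) ∂(Measure.pi fun _ : Fin (m + 1) => μ))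
        (∫ w, Pd i f (i.insertNth x w) ∂(Measure.pi fun _ : Fin (m + 1) => μ)) x := by
    intro i x
    have h := key_hasDerivAt (ν := Measure.pi fun _ : Fin (m + 1) => μ) i hf1 hf0 (hPb i) (measurable_insertNth i 0) x
    simp only [Fin.update_insertNth] at h
    exact h
  have key2 : ∀ (i : Fin (m + 2)) (x : ℝ),
      HasDerivAt (fun x' => ∫ w, Pd i f (i.insertNth x' w) ∂(Measure.pi fun _ : Fin (m + 1) => μ))
        (∫ w, Pd i (Pd i f) (i.insertNth x w) ∂(Measure.pi fun _ : Fin (m + 1) => μ)) x := by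
    intro i x
    have h := key_hasDerivAt (ν := Measure.pi fun _ : Fin (m + 1) => μ) i (hPdc i) (hPb i) (hQb i i) (measurable_insertNth i 0) x
    simp only [Fin.update_insertNth] at h
    exact h
  have hd1 : ∀ x, HasDerivAt D1
      (∑ i : Fin (m + 2), ∫ w, Pd i f (i.insertNth x w)
        ∂(Measure.pi fun _ : Fin (m + 1) => μ)) x := by
    intro x
    have hfun : D1 = fun x' => ∑ i : Fin (m + 2),
        ∫ w, f (i.insertNth x' w) ∂(Measure.pi fun _ : Fin (m + 1) => μ) := funext hD1
    rw [hfun]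
    exact HasDerivAt.fun_sum fun i _ => key1 i x
  have hderivD1 : deriv D1 = fun x => ∑ i : Fin (m + 2),
      ∫ w, Pd i f (i.insertNth x w) ∂(Measure.pi fun _ : Fin (m + 1) => μ) :=
    funext fun x => (hd1 x).deriv
  have hd2 : ∀ x, HasDerivAt (deriv D1)
      (∑ i : Fin (m + 2), ∫ w, Pd i (Pd i f) (i.insertNth x w)
        ∂(Measure.pi fun _ : Fin (m + 1) => μ)) x := by
    intro x
    rw [hderivD1]
    exact HasDerivAt.fun_sum fun i _ => key2 i x
  have hdd1 : ∀ x, deriv (deriv D1) x = ∑ i : Fin (m + 2),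
      ∫ w, Pd i (Pd i f) (i.insertNth x w) ∂(Measure.pi fun _ : Fin (m + 1) => μ) :=
    fun x => (hd2 x).deriv
  have keyB : ∀ (i j : Fin (m + 2)), j ≠ i → ∀ (x y : ℝ),
      HasDerivAt (fun b => ∫ w, f (insert2 i j x b w) ∂(Measure.pi fun _ : Fin m => μ))
        (∫ w, Pd j f (insert2 i j x y w) ∂(Measure.pi fun _ : Fin m => μ)) y := by
    intro i j hji x y
    have h := key_hasDerivAt (ν := Measure.pi fun _ : Fin m => μ) j hf1 hf0 (hPb j)
      (measurable_insert2w i j (Ne.symm hji) x 0) y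
    simp only [update_insert2_j i j hji] at h
    exact h
  have keyC : ∀ (i j : Fin (m + 2)), j ≠ i → ∀ (y x : ℝ),
      HasDerivAt (fun a => ∫ w, Pd j f (insert2 i j a y w) ∂(Measure.pi fun _ : Fin m => μ))
        (∫ w, Pd i (Pd j f) (insert2 i j x y w) ∂(Measure.pi fun _ : Fin m => μ)) x := by
    intro i j hji y x
    have h := key_hasDerivAt (ν := Measure.pi fun _ : Fin m => μ) i (hPdc j) (hPb j) (hQb i j)
      (measurable_insert2w i j (Ne.symm hji) 0 y) x
    simp only [update_insert2_i] at h
    exact h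
  have hD2b : ∀ x y, deriv (fun b => D2 x b) y
      = ∑ i : Fin (m + 2), ∑ j ∈ Finset.univ \ {i},
        ∫ w, Pd j f (insert2 i j x y w) ∂(Measure.pi fun _ : Fin m => μ) := by
    intro x y
    have hfun : (fun b => D2 x b) = fun b => ∑ i : Fin (m + 2), ∑ j ∈ Finset.univ \ {i},
        ∫ w, f (insert2 i j x b w) ∂(Measure.pi fun _ : Fin m => μ) :=
      funext fun b => hD2 x b
    rw [hfun]
    exact (HasDerivAt.fun_sum fun i _ => HasDerivAt.fun_sum fun j hj => keyB i j (hne hj) x y).deriv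
  have hd2ab : ∀ y x, HasDerivAt (fun a => deriv (fun b => D2 a b) y)
      (∑ i : Fin (m + 2), ∑ j ∈ Finset.univ \ {i},
        ∫ w, Pd i (Pd j f) (insert2 i j x y w) ∂(Measure.pi fun _ : Fin m => μ)) x := by
    intro y x
    have hfun : (fun a => deriv (fun b => D2 a b) y) = fun a => ∑ i : Fin (m + 2),
        ∑ j ∈ Finset.univ \ {i},
        ∫ w, Pd j f (insert2 i j a y w) ∂(Measure.pi fun _ : Fin m => μ) :=
      funext fun a => hD2b a y
    rw [hfun]
    exact HasDerivAt.fun_sum fun i _ => HasDerivAt.fun_sum fun j hj => keyC i j (hne hj) y x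
  have hdd2 : ∀ x y, deriv (fun a => deriv (fun b => D2 a b) y) x
      = ∑ i : Fin (m + 2), ∑ j ∈ Finset.univ \ {i},
        ∫ w, Pd i (Pd j f) (insert2 i j x y w) ∂(Measure.pi fun _ : Fin m => μ) :=
    fun x y => (hd2ab y x).deriv
  refine ⟨fun x => ⟨(hd1 x).differentiableAt, (hd2 x).differentiableAt, ?_⟩,
    fun x y => ?_, ?_⟩
  · simp only [pderiv'_pderiv' hf]
    exact hdd1 x
  · simp only [pderiv'_pderiv' hf]
    exact hdd2 x y
  · -- the generator identity
    set ν1 := (Measure.pi fun _ : Fin (m + 1) => μ) with hν1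
    set ν2 := (Measure.pi fun _ : Fin m => μ) with hν2
    set π := (Measure.pi fun _ : Fin (m + 2) => μ) with hπ
    -- measurability and boundedness of ρ
    have hmeas_h := hL2.aestronglyMeasurable
    set g0 : ℝ → ℝ := hmeas_h.mk h with hg0def
    have hg0sm : StronglyMeasurable g0 := hmeas_h.stronglyMeasurable_mk
    have hhg0 : h =ᵐ[volume] g0 := hmeas_h.ae_eq_mk
    have hρ_eq : ∀ x, ρ x = ∫ y, g0 (y - x) * g0 y := by
      intro x
      rw [hρ x]
      refine integral_congr_ae ?_
      have h1 : (fun y => h (y - x)) =ᵐ[volume] fun y => g0 (y - x) :=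
        (measurePreserving_sub_right volume x).quasiMeasurePreserving.ae_eq_comp hhg0
      exact h1.mul hhg0
    have hρ_sm : StronglyMeasurable ρ := by
      have hfun : ρ = fun x => ∫ y, g0 (y - x) * g0 y := funext hρ_eq
      rw [hfun]
      exact StronglyMeasurable.integral_prod_right'
        (f := fun p : ℝ × ℝ => g0 (p.2 - p.1) * g0 p.2)
        ((hg0sm.comp_measurable (measurable_snd.sub measurable_fst)).mul
          (hg0sm.comp_measurable measurable_snd))
    set Cρ : ℝ := ∫ y, g0 y ^ 2 with hCρdef
    have hg0L2 : MemLp g0 2 volume := hL2.ae_eq hhg0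
    have hg2int : Integrable (fun y => g0 y ^ 2) volume := hg0L2.integrable_sq
    have hMPx : ∀ x : ℝ, MeasurePreserving (fun y : ℝ => y - x) volume volume :=
      fun x => measurePreserving_sub_right volume x
    have hEmb : ∀ x : ℝ, MeasurableEmbedding (fun y : ℝ => y - x) :=
      fun x => (MeasurableEquiv.subRight x).measurableEmbedding
    have hg2intx : ∀ x : ℝ, Integrable (fun y => g0 (y - x) ^ 2) volume := by
      intro x
      exact ((hMPx x).integrable_comp_emb (hEmb x)).mpr hg2int
    have hg2eq : ∀ x : ℝ, (∫ y, g0 (y - x) ^ 2) = Cρ := by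
      intro x
      have := (hMPx x).integral_comp (hEmb x) (fun t => g0 t ^ 2)
      simpa using this
    have hρb : ∀ x, ‖ρ x‖ ≤ Cρ := by
      intro x
      rw [hρ_eq x]
      calc ‖∫ y, g0 (y - x) * g0 y‖ ≤ ∫ y, ‖g0 (y - x) * g0 y‖ :=
            norm_integral_le_integral_norm _
        _ ≤ ∫ y, (g0 (y - x) ^ 2 + g0 y ^ 2) / 2 := by
            refine integral_mono_of_nonneg (Filter.Eventually.of_forall fun y => norm_nonneg _)
              (((hg2intx x).add hg2int).div_const 2)
              (Filter.Eventually.of_forall fun y => ?_)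
            show ‖g0 (y - x) * g0 y‖ ≤ (g0 (y - x) ^ 2 + g0 y ^ 2) / 2
            have h1 : ‖g0 (y - x) * g0 y‖ = |g0 (y - x)| * |g0 y| := by
              rw [norm_mul, Real.norm_eq_abs, Real.norm_eq_abs]
            rw [h1]
            nlinarith [sq_nonneg (|g0 (y - x)| - |g0 y|), sq_abs (g0 (y - x)), sq_abs (g0 y)]
        _ = Cρ := by
            rw [integral_div, integral_add (hg2intx x) hg2int, hg2eq x, hCρdef]
            ring
    have hCρ0 : 0 ≤ Cρ := (norm_nonneg _).trans (hρb 0)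
    -- families of integrals: measurability and bounds
    have hLsm : ∀ i j : Fin (m + 2), j ≠ i → StronglyMeasurable fun q : ℝ × ℝ =>
        ∫ w, Pd i (Pd j f) (insert2 i j q.1 q.2 w) ∂ν2 := by
      intro i j hji
      exact StronglyMeasurable.integral_prod_right'
        (f := fun p : (ℝ × ℝ) × (Fin m → ℝ) => Pd i (Pd j f) (insert2 i j p.1.1 p.1.2 p.2))
        ((hQc i j).stronglyMeasurable.comp_measurable
          (measurable_insert2_triple i j (Ne.symm hji)))
    have hLb : ∀ (i j : Fin (m + 2)) (x y : ℝ),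
        ‖∫ w, Pd i (Pd j f) (insert2 i j x y w) ∂ν2‖ ≤ C2 :=
      fun i j x y => norm_integral_le_of_bdd _ C2 (fun w => hQb i j _)
    -- term 1
    have hKint : ∀ i : Fin (m + 2), Integrable (fun x =>
        ∫ w, Pd i (Pd i f) (i.insertNth x w) ∂ν1) μ := by
      intro i
      refine integrable_of_bdd ?_ C2 (fun x => norm_integral_le_of_bdd _ C2 (fun w => hQb i i _))
      exact (StronglyMeasurable.integral_prod_right'
        (f := fun p : ℝ × (Fin (m + 1) → ℝ) => Pd i (Pd i f) (i.insertNth p.1 p.2))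
        ((hQc i i).stronglyMeasurable.comp_measurable
          (measurable_insertNth_pair i))).aestronglyMeasurable
    have hterm1 : (1:ℝ) / 2 * ∫ x, ρε * deriv (deriv D1) x ∂μ
        = 1 / 2 * ∑ i : Fin (m + 2), ρε * ∫ z, Pd i (Pd i f) z ∂π := by
      have e1 : ∫ x, ρε * deriv (deriv D1) x ∂μ
          = ρε * ∫ x, deriv (deriv D1) x ∂μ := integral_const_mul _ _
      have e2 : ∫ x, deriv (deriv D1) x ∂μ = ∑ i : Fin (m + 2),
          ∫ x, ∫ w, Pd i (Pd i f) (i.insertNth x w) ∂ν1 ∂μ := by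
        rw [integral_congr_ae (Filter.Eventually.of_forall hdd1)]
        exact integral_finset_sum _ fun i _ => hKint i
      have e3 : ∀ i : Fin (m + 2),
          (∫ x, ∫ w, Pd i (Pd i f) (i.insertNth x w) ∂ν1 ∂μ)
          = ∫ z, Pd i (Pd i f) z ∂π := fun i =>
        integral_insertNth μ i _ (hQc i i).stronglyMeasurable C2 (hQb i i)
      rw [e1, e2, Finset.mul_sum]
      congr 1
      exact Finset.sum_congr rfl fun i _ => by rw [e3 i]
    -- term 2
    have hAsm2 : ∀ (i j : Fin (m + 2)), j ≠ i → StronglyMeasurable fun q : ℝ × ℝ =>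
        ρ (q.1 - q.2) * ∫ w, Pd i (Pd j f) (insert2 i j q.1 q.2 w) ∂ν2 :=
      fun i j hji => (hρ_sm.comp_measurable (measurable_fst.sub measurable_snd)).mul
        (hLsm i j hji)
    have hAb : ∀ (i j : Fin (m + 2)) (x y : ℝ),
        ‖ρ (x - y) * ∫ w, Pd i (Pd j f) (insert2 i j x y w) ∂ν2‖ ≤ Cρ * C2 := by
      intro i j x y
      rw [norm_mul]
      exact mul_le_mul (hρb _) (hLb i j x y) (norm_nonneg _) hCρ0
    have hAyint : ∀ (i j : Fin (m + 2)), j ≠ i → ∀ x : ℝ, Integrable (fun y =>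
        ρ (x - y) * ∫ w, Pd i (Pd j f) (insert2 i j x y w) ∂ν2) μ := by
      intro i j hji x
      refine integrable_of_bdd ?_ (Cρ * C2) (fun y => hAb i j x y)
      exact ((hAsm2 i j hji).comp_measurable
        (measurable_const.prodMk measurable_id)).aestronglyMeasurable
    have hMint : ∀ (i j : Fin (m + 2)), j ≠ i → Integrable (fun x =>
        ∫ y, ρ (x - y) * ∫ w, Pd i (Pd j f) (insert2 i j x y w) ∂ν2 ∂μ) μ :=
      fun i j hji => integrable_of_bdd
        (StronglyMeasurable.integral_prod_right' (hAsm2 i j hji)).aestronglyMeasurable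
        (Cρ * C2) (fun x => norm_integral_le_of_bdd _ _ (fun y => hAb i j x y))
    have hterm2 : (1:ℝ) / 2 * ∫ x, ∫ y,
          ρ (x - y) * deriv (fun a => deriv (fun b => D2 a b) y) x ∂μ ∂μ
        = 1 / 2 * ∑ i : Fin (m + 2), ∑ j ∈ Finset.univ \ {i},
            ∫ z, ρ (z i - z j) * Pd i (Pd j f) z ∂π := by
      have e0 : ∀ x y : ℝ, ρ (x - y) * deriv (fun a => deriv (fun b => D2 a b) y) x
          = ∑ i : Fin (m + 2), ∑ j ∈ Finset.univ \ {i},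
              ρ (x - y) * ∫ w, Pd i (Pd j f) (insert2 i j x y w) ∂ν2 := by
        intro x y
        rw [hdd2 x y, Finset.mul_sum]
        exact Finset.sum_congr rfl fun i _ => Finset.mul_sum _ _ _
      have e1 : ∀ x : ℝ, (∫ y, ρ (x - y) * deriv (fun a => deriv (fun b => D2 a b) y) x ∂μ)
          = ∑ i : Fin (m + 2), ∑ j ∈ Finset.univ \ {i},
              ∫ y, ρ (x - y) * ∫ w, Pd i (Pd j f) (insert2 i j x y w) ∂ν2 ∂μ := by
        intro x
        rw [integral_congr_ae (Filter.Eventually.of_forall fun y => e0 x y),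
          integral_finset_sum _ fun i _ =>
            integrable_finset_sum _ fun j hj => hAyint i j (hne hj) x]
        exact Finset.sum_congr rfl fun i _ =>
          integral_finset_sum _ fun j hj => hAyint i j (hne hj) x
      have e2 : (∫ x, ∫ y, ρ (x - y) * deriv (fun a => deriv (fun b => D2 a b) y) x ∂μ ∂μ)
          = ∑ i : Fin (m + 2), ∑ j ∈ Finset.univ \ {i},
              ∫ x, ∫ y, ρ (x - y) * ∫ w, Pd i (Pd j f) (insert2 i j x y w) ∂ν2 ∂μ ∂μ := by
        rw [integral_congr_ae (Filter.Eventually.of_forall e1),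
          integral_finset_sum _ fun i _ =>
            integrable_finset_sum _ fun j hj => hMint i j (hne hj)]
        exact Finset.sum_congr rfl fun i _ =>
          integral_finset_sum _ fun j hj => hMint i j (hne hj)
      have e3 : ∀ (i j : Fin (m + 2)), j ≠ i →
          (∫ x, ∫ y, ρ (x - y) * ∫ w, Pd i (Pd j f) (insert2 i j x y w) ∂ν2 ∂μ ∂μ)
          = ∫ z, ρ (z i - z j) * Pd i (Pd j f) z ∂π := by
        intro i j hji
        have hstep : ∀ x y : ℝ, ρ (x - y) * ∫ w, Pd i (Pd j f) (insert2 i j x y w) ∂ν2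
            = ∫ w, ρ (insert2 i j x y w i - insert2 i j x y w j)
                * Pd i (Pd j f) (insert2 i j x y w) ∂ν2 := by
          intro x y
          rw [← integral_const_mul]
          refine integral_congr_ae (Filter.Eventually.of_forall fun w => ?_)
          show ρ (x - y) * Pd i (Pd j f) (insert2 i j x y w)
            = ρ (insert2 i j x y w i - insert2 i j x y w j) * Pd i (Pd j f) (insert2 i j x y w)
          rw [insert2_apply_i, insert2_apply_j i j hji]
        have hI2 := integral_insert2 μ i j (Ne.symm hji)
          (fun z => ρ (z i - z j) * Pd i (Pd j f) z)
          ((hρ_sm.comp_measurable ((measurable_pi_apply i).sub (measurable_pi_apply j))).mul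
            (hQc i j).stronglyMeasurable)
          (Cρ * C2) (fun z => by
            rw [norm_mul]
            exact mul_le_mul (hρb _) (hQb i j z) (norm_nonneg _) hCρ0)
        rw [← hI2]
        refine integral_congr_ae (Filter.Eventually.of_forall fun x => ?_)
        exact integral_congr_ae (Filter.Eventually.of_forall fun y => hstep x y)
      rw [e2]
      congr 1
      exact Finset.sum_congr rfl fun i _ => Finset.sum_congr rfl fun j hj => e3 i j (hne hj)
    -- right-hand side
    have hintQ : ∀ i : Fin (m + 2), Integrable (fun z => ρε * Pd i (Pd i f) z) π :=
      fun i => (integrable_of_bdd (hQc i i).aestronglyMeasurable C2 (hQb i i)).const_mul ρε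
    have hintR : ∀ i j : Fin (m + 2), j ≠ i →
        Integrable (fun z => ρ (z i - z j) * Pd i (Pd j f) z) π := by
      intro i j hji
      refine integrable_of_bdd ?_ (Cρ * C2) ?_
      · exact ((hρ_sm.comp_measurable
          ((measurable_pi_apply i).sub (measurable_pi_apply j))).mul
          (hQc i j).stronglyMeasurable).aestronglyMeasurable
      · intro z; rw [norm_mul]; exact mul_le_mul (hρb _) (hQb i j z) (norm_nonneg _) hCρ0
    have hGmeq : ∫ z, Gm ρ ρε f z ∂π
        = 1 / 2 * ∑ i : Fin (m + 2), ρε * ∫ z, Pd i (Pd i f) z ∂π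
          + 1 / 2 * ∑ i : Fin (m + 2), ∑ j ∈ Finset.univ \ {i},
              ∫ z, ρ (z i - z j) * Pd i (Pd j f) z ∂π := by
      have hGz : ∀ z, Gm ρ ρε f z
          = 1 / 2 * ∑ i : Fin (m + 2), ρε * Pd i (Pd i f) z
            + 1 / 2 * ∑ i : Fin (m + 2), ∑ j ∈ Finset.univ \ {i},
                ρ (z i - z j) * Pd i (Pd j f) z := by
        intro z; simp only [Gm, pderiv'_pderiv' hf]
      rw [integral_congr_ae (Filter.Eventually.of_forall hGz)]
      have hIa : Integrable (fun z => 1 / 2 * ∑ i : Fin (m + 2), ρε * Pd i (Pd i f) z) π :=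
        (integrable_finset_sum _ fun i _ => hintQ i).const_mul _
      have hIb : Integrable (fun z => 1 / 2 * ∑ i : Fin (m + 2), ∑ j ∈ Finset.univ \ {i},
          ρ (z i - z j) * Pd i (Pd j f) z) π :=
        (integrable_finset_sum _ fun i _ =>
          integrable_finset_sum _ fun j hj => hintR i j (hne hj)).const_mul _
      rw [integral_add hIa hIb, integral_const_mul, integral_const_mul]
      congr 1
      · rw [integral_finset_sum _ fun i _ => hintQ i]
        congr 1
        exact Finset.sum_congr rfl fun i _ => integral_const_mul _ _
      · rw [integral_finset_sum _ fun i _ =>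
          integrable_finset_sum _ fun j hj => hintR i j (hne hj)]
        congr 1
        exact Finset.sum_congr rfl fun i _ =>
          integral_finset_sum _ fun j hj => hintR i j (hne hj)
    rw [hterm1, hterm2, hGmeq]
end

section
/- Let μ be a finite Borel measure on ℝ. Then lim_{ε→0+} I_ε(μ) = μ*(ℝ); that is, ∫_ℝ∫_ℝ max(1 − |x−y|/ε, 0) μ(dx)μ(dy) converges, as ε decreases to 0, to Σ_x μ({x})², the sum of the squared masses of the atoms of μ. -/
open MeasureTheory Filter Topology

/-- For a finite Borel measure `μ` on `ℝ`,
`I_ε(μ) → μ*(ℝ) = Σ_x μ({x})²` as `ε ↓ 0`. -/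
theorem Ieps_tendsto_sum_sq_atoms (μ : Measure ℝ) (hfin : IsFiniteMeasure μ) :
    Tendsto (fun ε => Ieps ε μ) (𝓝[>] (0 : ℝ))
      (𝓝 (∑' x : ℝ, (μ {x}).toReal ^ 2)) := by
  haveI := hfin
  set ν := μ.prod μ with hν
  have hD : MeasurableSet {p : ℝ × ℝ | p.1 = p.2} :=
    measurableSet_eq_fun measurable_fst measurable_snd
  -- value of the measure of the diagonal
  have hdiag : ν {p : ℝ × ℝ | p.1 = p.2} = ∑' x : ℝ, μ {x} * μ {x} := by
    rw [hν, Measure.prod_apply hD]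
    have hfib : ∀ x : ℝ, (Prod.mk x ⁻¹' {p : ℝ × ℝ | p.1 = p.2}) = {x} := by
      intro x; ext y; simp [eq_comm]
    simp_rw [hfib]
    -- the set of atoms is countable
    have hcount : Set.Countable {x : ℝ | 0 < μ {x}} := by
      apply Measure.countable_meas_pos_of_disjoint_iUnion
        (As := fun x : ℝ => ({x} : Set ℝ))
      · exact fun x => measurableSet_singleton x
      · intro i j hij
        simpa [Function.onFun] using hij
    set S := {x : ℝ | 0 < μ {x}} with hS
    have hind : (fun x : ℝ => μ {x}) = S.indicator (fun x : ℝ => μ {x}) := by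
      ext x
      by_cases hx : x ∈ S
      · simp [Set.indicator_of_mem hx]
      · have : μ {x} = 0 := by
          by_contra h
          exact hx (pos_iff_ne_zero.2 h)
        simp [Set.indicator_of_notMem hx, this]
    rw [hind, lintegral_indicator (hcount.measurableSet),
      lintegral_countable _ hcount]
    -- sum over the subtype equals sum over ℝ
    refine (tsum_subtype_eq_of_support_subset
      (f := fun x : ℝ => μ {x} * μ {x}) (s := S) ?_)
    intro x hx
    have : μ {x} ≠ 0 := by
      intro h
      simp [h] at hx
    exact pos_iff_ne_zero.2 this
  -- limit function
  set f : ℝ × ℝ → ℝ := Set.indicator {p : ℝ × ℝ | p.1 = p.2} (fun _ => (1:ℝ)) with hf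
  have key : Tendsto (fun ε => Ieps ε μ) (𝓝[>] (0 : ℝ)) (𝓝 (∫ p, f p ∂ν)) := by
    apply tendsto_integral_filter_of_dominated_convergence (bound := fun _ => (1:ℝ))
    · filter_upwards [self_mem_nhdsWithin] with ε hε
      apply Continuous.aestronglyMeasurable
      continuity
    · filter_upwards [self_mem_nhdsWithin] with ε hε
      refine ae_of_all _ fun p => ?_
      rw [Real.norm_eq_abs, abs_of_nonneg (le_max_right (1 - |p.1 - p.2| / ε) 0)]
      have : 1 - |p.1 - p.2| / ε ≤ 1 := by
        have : 0 ≤ |p.1 - p.2| / ε := div_nonneg (abs_nonneg _) (le_of_lt hε)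
        linarith
      exact max_le this zero_le_one
    · exact integrable_const 1
    · refine ae_of_all _ fun p => ?_
      by_cases hp : p.1 = p.2
      · have : ∀ ε : ℝ, max (1 - |p.1 - p.2| / ε) 0 = 1 := by
          intro ε; simp [hp]
        simp only [this]
        have : f p = 1 := by simp [hf, hp]
        rw [this]
        exact tendsto_const_nhds
      · have hd : 0 < |p.1 - p.2| := abs_pos.2 (sub_ne_zero.2 hp)
        have : f p = 0 := by simp [hf, hp]
        rw [this]
        have hev : ∀ᶠ ε in 𝓝[>] (0:ℝ), max (1 - |p.1 - p.2| / ε) 0 = 0 := by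
          filter_upwards [Ioo_mem_nhdsGT_of_mem (by exact ⟨le_refl _, hd⟩ :
            (0:ℝ) ∈ Set.Ico 0 |p.1 - p.2|)] with ε hε
          rcases hε with ⟨hε0, hε1⟩
          have : 1 < |p.1 - p.2| / ε := (one_lt_div hε0).2 hε1
          exact max_eq_right (by linarith)
        exact Tendsto.congr' (hev.mono fun ε h => h.symm) tendsto_const_nhds
  -- compute the integral of the limit
  have hint : ∫ p, f p ∂ν = ∑' x : ℝ, (μ {x}).toReal ^ 2 := by
    rw [hf, integral_indicator_const (1:ℝ) hD, smul_eq_mul, mul_one, measureReal_def, hdiag,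
      ENNReal.tsum_toReal_eq (fun x => ENNReal.mul_ne_top (measure_ne_top μ _)
        (measure_ne_top μ _))]
    congr 1
    ext x
    rw [ENNReal.toReal_mul, sq]
  rwa [hint] at key
end
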